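/- arXiv:1806.09008 — 9 statements merged into one kernel-verified Lean document; each statement's English description precedes it below -/
import Mathlib

section
/- Let n ≥ 4 be an even integer and let a, b be real numbers with b ≠ 0 and (n−1)²a²/(4n(n−2)) ≤ b. Then for every real number t > 0, the polynomial xⁿ + t(x² + ax + b) has no real roots. -/
/-- For even `n ≥ 4`, `b ≠ 0` and `(n−1)²a²/(4n(n−2)) ≤ b`, the quadrinomial
`xⁿ + t(x² + ax + b)` has no real roots for any `t > 0`. -/
theorem quadrinomial_no_real_roots (n : ℕ) (hn : 4 ≤ n) (hne : Even n) (a b : ℝ)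
    (hb : b ≠ 0) (hab : ((n : ℝ) - 1) ^ 2 * a ^ 2 / (4 * n * ((n : ℝ) - 2)) ≤ b) :
    ∀ t : ℝ, 0 < t → ∀ x : ℝ, x ^ n + t * (x ^ 2 + a * x + b) ≠ 0 := by
  have hn4 : (4 : ℝ) ≤ (n : ℝ) := by exact_mod_cast hn
  have hc : (0 : ℝ) < 4 * n * ((n : ℝ) - 2) := by nlinarith
  have hkey : ((n : ℝ) - 1) ^ 2 * a ^ 2 ≤ b * (4 * n * ((n : ℝ) - 2)) := by
    rwa [div_le_iff₀ hc] at hab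
  have hquad : ∀ x : ℝ, 0 < x ^ 2 + a * x + b := by
    intro x
    rcases eq_or_ne a 0 with ha | ha
    · subst ha
      have hb0 : 0 < b := lt_of_le_of_ne (by nlinarith [sq_nonneg ((n:ℝ)-1)]) (Ne.symm hb)
      nlinarith [sq_nonneg x]
    · have ha2 : 0 < a ^ 2 := by positivity
      -- b * 4n(n-2) ≥ (n-1)² a² = n(n-2) a² + a²  ⇒  b > a²/4
      have : a ^ 2 / 4 < b := by
        rw [div_lt_iff₀ (by norm_num : (0:ℝ) < 4)]
        nlinarith
      nlinarith [sq_nonneg (2 * x + a)]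
  intro t ht x
  have h1 : 0 ≤ x ^ n := hne.pow_nonneg x
  have := hquad x
  nlinarith
end

section
/- Let n ≥ 4 be an even integer and let a, b be real numbers with a² < 4b. Let P(t) denote the discriminant of xⁿ + t(x² + ax + b) with respect to x, regarded as a polynomial in t, and let α = max{ α ∈ ℝ : P(α) = 0 } be the largest real root of P. Then for every real number t > α, the polynomial xⁿ + t(x² + ax + b) has no real roots. -/
open Polynomial

/-- The discriminant of a real polynomial `f` of degree `n` with leading coefficient `c`,
computed via the formula `Δ(f) = (−1)^{n(n−1)/2} · Res(f, f′) / c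
= (−1)^{n(n−1)/2} · c^{n−2} · ∏_{f(r)=0} f′(r)`, the product running over the roots of `f`
(with multiplicity) in the algebraic closure `ℂ`. -/
noncomputable def polyDisc (f : Polynomial ℝ) : ℂ :=
  (-1 : ℂ) ^ (f.natDegree * (f.natDegree - 1) / 2) *
    ((algebraMap ℝ ℂ) f.leadingCoeff) ^ (f.natDegree - 2) *
    (((f.map (algebraMap ℝ ℂ)).roots).map
      fun z => Polynomial.eval z (Polynomial.derivative (f.map (algebraMap ℝ ℂ)))).prod

lemma polyDisc_X_pow_eq_zero (n : ℕ) (hn : 2 ≤ n) : polyDisc (X ^ n : ℝ[X]) = 0 := by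
  unfold polyDisc
  have hmap : ((X ^ n : ℝ[X]).map (algebraMap ℝ ℂ)) = X ^ n := by
    simp [Polynomial.map_pow]
  rw [hmap]
  have h0 : (0 : ℂ) ∈ (X ^ n : ℂ[X]).roots := by
    rw [Polynomial.mem_roots']
    exact ⟨pow_ne_zero n X_ne_zero, by simp [IsRoot, zero_pow (by omega : n ≠ 0)]⟩
  have hmem : (0 : ℂ) ∈ ((X ^ n : ℂ[X]).roots).map
      (fun z => Polynomial.eval z (Polynomial.derivative (X ^ n : ℂ[X]))) := by
    refine Multiset.mem_map.mpr ⟨0, h0, ?_⟩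
    simp [derivative_X_pow, zero_pow (by omega : n - 1 ≠ 0)]
  rw [Multiset.prod_eq_zero hmem, mul_zero]

/-- For even `n ≥ 4` and `a² < 4b`: if `α` is the largest real root of the discriminant
`P(t)` of `xⁿ + t(x² + ax + b)` (as a polynomial in `t`), then for every `t > α` the
polynomial `xⁿ + t(x² + ax + b)` has no real roots. -/
theorem quadrinomial_no_real_roots_beyond_largest_disc_root
    (n : ℕ) (hn : 4 ≤ n) (hne : Even n) (a b : ℝ) (hab : a ^ 2 < 4 * b)
    (P : ℝ → ℂ) (hP : ∀ u : ℝ, P u = polyDisc (X ^ n + C u * (X ^ 2 + C a * X + C b)))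
    (α : ℝ) (hα : IsGreatest {u : ℝ | P u = 0} α) :
    ∀ t : ℝ, α < t → ∀ x : ℝ, x ^ n + t * (x ^ 2 + a * x + b) ≠ 0 := by
  have hP0 : P 0 = 0 := by
    rw [hP 0]
    have : (X ^ n + C (0:ℝ) * (X ^ 2 + C a * X + C b)) = X ^ n := by simp
    rw [this]
    exact polyDisc_X_pow_eq_zero n (by omega)
  have hα0 : 0 ≤ α := hα.2 hP0
  intro t ht x
  have hquad : 0 < x ^ 2 + a * x + b := by nlinarith [sq_nonneg (2 * x + a)]
  have hxn : 0 ≤ x ^ n := hne.pow_nonneg x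
  have htpos : 0 < t := lt_of_le_of_lt hα0 ht
  positivity
end

section
/- Let s ≥ 1 and n > s be integers, and let g(x) = Σ_{k=0}^{s} r_{s−k} x^{s−k} be a real polynomial of degree s (so r_s ≠ 0) that is separable and has exactly γ distinct real roots, where 0 ≤ γ ≤ s. Let f(t;x) = xⁿ + t·g(x), let P(t) be the discriminant of f(t;x) with respect to x, regarded as a polynomial in t, and let α = max{ α ∈ ℝ : P(α) = 0 }. Then for every real number t > α, the number of distinct real roots of f(t;x) equals: γ + 1 if n − s is odd; γ if n − s is even and r_s > 0; and γ + 2 if n − s is even and r_s < 0. -/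
open Polynomial

open Filter Topology Set

section IL
variable {U : Set ℝ} {φ : ℝ → ℝ} {t : ℝ}

/-- If all critical values on an ord-connected set are < t, there is no interior local max ≥ t. -/
lemma crossing_max_aux (hU : U.OrdConnected)
    (hdiff : ∀ x ∈ U, DifferentiableAt ℝ φ x)
    (hcrit : ∀ x ∈ U, deriv φ x = 0 → φ x < t)
    {a b c : ℝ} (ha : a ∈ U) (hb : b ∈ U) (hab : a < b)
    (hc : c ∈ Set.Ioo a b) (hmax : IsMaxOn φ (Set.Icc a b) c) (hct : t ≤ φ c) : False := by
  have hcU : c ∈ U := hU.out ha hb ⟨le_of_lt hc.1, le_of_lt hc.2⟩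
  have hloc : IsLocalMax φ c := hmax.isLocalMax (Icc_mem_nhds hc.1 hc.2)
  have := hcrit c hcU (hloc.deriv_eq_zero)
  linarith

lemma contOn (hdiff : ∀ x ∈ U, DifferentiableAt ℝ φ x) {s : Set ℝ} (hs : s ⊆ U) :
    ContinuousOn φ s := fun x hx => ((hdiff x (hs hx)).continuousAt).continuousWithinAt

/-- no three preimages of `t` in `U`. -/
lemma no_three (hU : U.OrdConnected)
    (hdiff : ∀ x ∈ U, DifferentiableAt ℝ φ x)
    (hcrit : ∀ x ∈ U, deriv φ x = 0 → φ x < t)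
    {x₁ x₂ x₃ : ℝ} (h1 : x₁ ∈ U) (h3 : x₃ ∈ U) (h12 : x₁ < x₂) (h23 : x₂ < x₃)
    (e1 : φ x₁ = t) (e2 : φ x₂ = t) (e3 : φ x₃ = t) : False := by
  have hsub : Set.Icc x₁ x₃ ⊆ U := hU.out h1 h3
  have hne : (Set.Icc x₁ x₃).Nonempty := ⟨x₁, le_refl _, by linarith⟩
  obtain ⟨c, hcmem, hcmax⟩ := isCompact_Icc.exists_isMaxOn hne (contOn hdiff hsub)
  have hct : t ≤ φ c := e2 ▸ (hcmax ⟨le_of_lt h12, le_of_lt h23⟩ : φ x₂ ≤ φ c)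
  rcases eq_or_lt_of_le hct with heq | hlt
  · -- max value is t, so x₂ is an interior max point
    have hmax2 : IsMaxOn φ (Set.Icc x₁ x₃) x₂ := by
      intro y hy; show φ y ≤ φ x₂; rw [e2, heq]; exact (hcmax hy : φ y ≤ φ c)
    exact crossing_max_aux hU hdiff hcrit h1 h3 (by linarith) ⟨h12, h23⟩ hmax2 (le_of_eq e2.symm)
  · have hc1 : c ≠ x₁ := by intro h; rw [h, e1] at hlt; exact lt_irrefl _ hlt
    have hc3 : c ≠ x₃ := by intro h; rw [h, e3] at hlt; exact lt_irrefl _ hlt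
    exact crossing_max_aux hU hdiff hcrit h1 h3 (by linarith) 
      ⟨lt_of_le_of_ne hcmem.1 (Ne.symm hc1), lt_of_le_of_ne hcmem.2 hc3⟩ hcmax (le_of_lt hlt)

/-- If there is a point `y < x₁` with `φ y < t` then there are no two preimages `x₁ < x₂`. -/
lemma no_two_low_left (hU : U.OrdConnected)
    (hdiff : ∀ x ∈ U, DifferentiableAt ℝ φ x)
    (hcrit : ∀ x ∈ U, deriv φ x = 0 → φ x < t)
    {y x₁ x₂ : ℝ} (hy : y ∈ U) (h2 : x₂ ∈ U) (hy1 : y < x₁) (h12 : x₁ < x₂)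
    (ey : φ y < t) (e1 : φ x₁ = t) (e2 : φ x₂ = t) : False := by
  have hsub : Set.Icc y x₂ ⊆ U := hU.out hy h2
  have hne : (Set.Icc y x₂).Nonempty := ⟨y, le_refl _, by linarith⟩
  obtain ⟨c, hcmem, hcmax⟩ := isCompact_Icc.exists_isMaxOn hne (contOn hdiff hsub)
  have hct : t ≤ φ c := e1 ▸ (hcmax ⟨le_of_lt hy1, le_of_lt h12⟩ : φ x₁ ≤ φ c)
  rcases eq_or_lt_of_le hct with heq | hlt
  · have hmax1 : IsMaxOn φ (Set.Icc y x₂) x₁ := by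
      intro z hz; show φ z ≤ φ x₁; rw [e1, heq]; exact (hcmax hz : φ z ≤ φ c)
    exact crossing_max_aux hU hdiff hcrit hy h2 (by linarith) ⟨hy1, h12⟩ hmax1 (le_of_eq e1.symm)
  · have hcy : c ≠ y := by intro h; rw [h] at hlt; linarith
    have hc2 : c ≠ x₂ := by intro h; rw [h, e2] at hlt; exact lt_irrefl _ hlt
    exact crossing_max_aux hU hdiff hcrit hy h2 (by linarith)
      ⟨lt_of_le_of_ne hcmem.1 (Ne.symm hcy), lt_of_le_of_ne hcmem.2 hc2⟩ hcmax (le_of_lt hlt)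

/-- mirrored version. -/
lemma no_two_low_right (hU : U.OrdConnected)
    (hdiff : ∀ x ∈ U, DifferentiableAt ℝ φ x)
    (hcrit : ∀ x ∈ U, deriv φ x = 0 → φ x < t)
    {x₁ x₂ y : ℝ} (h1 : x₁ ∈ U) (hy : y ∈ U) (h12 : x₁ < x₂) (h2y : x₂ < y)
    (ey : φ y < t) (e1 : φ x₁ = t) (e2 : φ x₂ = t) : False := by
  have hsub : Set.Icc x₁ y ⊆ U := hU.out h1 hy
  have hne : (Set.Icc x₁ y).Nonempty := ⟨x₁, le_refl _, by linarith⟩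
  obtain ⟨c, hcmem, hcmax⟩ := isCompact_Icc.exists_isMaxOn hne (contOn hdiff hsub)
  have hct : t ≤ φ c := e2 ▸ (hcmax ⟨le_of_lt h12, le_of_lt h2y⟩ : φ x₂ ≤ φ c)
  rcases eq_or_lt_of_le hct with heq | hlt
  · have hmax1 : IsMaxOn φ (Set.Icc x₁ y) x₂ := by
      intro z hz; show φ z ≤ φ x₂; rw [e2, heq]; exact (hcmax hz : φ z ≤ φ c)
    exact crossing_max_aux hU hdiff hcrit h1 hy (by linarith) ⟨h12, h2y⟩ hmax1 (le_of_eq e2.symm)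
  · have hcy : c ≠ y := by intro h; rw [h] at hlt; linarith
    have hc1 : c ≠ x₁ := by intro h; rw [h, e1] at hlt; exact lt_irrefl _ hlt
    exact crossing_max_aux hU hdiff hcrit h1 hy (by linarith)
      ⟨lt_of_le_of_ne hcmem.1 (Ne.symm hc1), lt_of_le_of_ne hcmem.2 hcy⟩ hcmax (le_of_lt hlt)

/-- no preimage between two low points. -/
lemma none_low_low (hU : U.OrdConnected)
    (hdiff : ∀ x ∈ U, DifferentiableAt ℝ φ x)
    (hcrit : ∀ x ∈ U, deriv φ x = 0 → φ x < t)
    {y₁ x₀ y₂ : ℝ} (hy1 : y₁ ∈ U) (hy2 : y₂ ∈ U) (h1 : y₁ < x₀) (h2 : x₀ < y₂)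
    (ey1 : φ y₁ < t) (ey2 : φ y₂ < t) (e0 : φ x₀ = t) : False := by
  have hsub : Set.Icc y₁ y₂ ⊆ U := hU.out hy1 hy2
  have hne : (Set.Icc y₁ y₂).Nonempty := ⟨y₁, le_refl _, by linarith⟩
  obtain ⟨c, hcmem, hcmax⟩ := isCompact_Icc.exists_isMaxOn hne (contOn hdiff hsub)
  have hct : t ≤ φ c := e0 ▸ (hcmax ⟨le_of_lt h1, le_of_lt h2⟩ : φ x₀ ≤ φ c)
  have hcy1 : c ≠ y₁ := by intro h; rw [h] at hct; linarith
  have hcy2 : c ≠ y₂ := by intro h; rw [h] at hct; linarith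
  exact crossing_max_aux hU hdiff hcrit hy1 hy2 (by linarith)
    ⟨lt_of_le_of_ne hcmem.1 (Ne.symm hcy1), lt_of_le_of_ne hcmem.2 hcy2⟩ hcmax hct



lemma no_three_distinct (hU : U.OrdConnected)
    (hdiff : ∀ x ∈ U, DifferentiableAt ℝ φ x)
    (hcrit : ∀ x ∈ U, deriv φ x = 0 → φ x < t)
    {x₁ x₂ x₃ : ℝ} (h1 : x₁ ∈ U) (h2 : x₂ ∈ U) (h3 : x₃ ∈ U)
    (d12 : x₁ ≠ x₂) (d13 : x₁ ≠ x₃) (d23 : x₂ ≠ x₃)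
    (e1 : φ x₁ = t) (e2 : φ x₂ = t) (e3 : φ x₃ = t) : False := by
  rcases lt_trichotomy x₁ x₂ with a | a | a
  · rcases lt_trichotomy x₂ x₃ with b | b | b
    · exact no_three hU hdiff hcrit h1 h3 a b e1 e2 e3
    · exact d23 b
    · rcases lt_trichotomy x₁ x₃ with c | c | c
      · exact no_three hU hdiff hcrit h1 h2 c b e1 e3 e2
      · exact d13 c
      · exact no_three hU hdiff hcrit h3 h2 c a e3 e1 e2
  · exact d12 a
  · rcases lt_trichotomy x₁ x₃ with b | b | b
    · exact no_three hU hdiff hcrit h2 h3 a b e2 e1 e3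
    · exact d13 b
    · rcases lt_trichotomy x₂ x₃ with c | c | c
      · exact no_three hU hdiff hcrit h2 h1 c b e2 e3 e1
      · exact d23 c
      · exact no_three hU hdiff hcrit h3 h1 c a e3 e2 e1


lemma interval_count (hU : U.OrdConnected) (hne : U.Nonempty)
    (hdiff : ∀ x ∈ U, DifferentiableAt ℝ φ x)
    (hcrit : ∀ x ∈ U, deriv φ x = 0 → φ x < t)
    (la lb : Filter ℝ) [hnea : la.NeBot] [hneb : lb.NeBot]
    (hla : ∀ x ∈ U, ∀ᶠ y in la, y < x ∧ y ∈ U)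
    (hlb : ∀ x ∈ U, ∀ᶠ y in lb, x < y ∧ y ∈ U)
    (La Lb : Bool)
    (hLa : Tendsto φ la (cond La atTop atBot))
    (hLb : Tendsto φ lb (cond Lb atTop atBot)) :
    {x ∈ U | φ x = t}.Finite ∧
      {x ∈ U | φ x = t}.ncard = (cond La 1 0) + (cond Lb 1 0) := by
  obtain ⟨x₀, hx₀⟩ := hne
  cases La with
  | false =>
    cases Lb with
    | false =>
      -- no roots
      have hS : {x ∈ U | φ x = t} = ∅ := by
        ext z; simp only [Set.mem_setOf_eq, Set.mem_empty_iff_false, iff_false, not_and]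
        intro hzU hzt
        obtain ⟨y₁, ⟨hy₁lt, hy₁U⟩, hy₁t⟩ :=
          ((hla z hzU).and (hLa.eventually (eventually_lt_atBot t))).exists
        obtain ⟨y₂, ⟨hy₂lt, hy₂U⟩, hy₂t⟩ :=
          ((hlb z hzU).and (hLb.eventually (eventually_lt_atBot t))).exists
        exact none_low_low hU hdiff hcrit hy₁U hy₂U hy₁lt hy₂lt hy₁t hy₂t hzt
      rw [hS]; exact ⟨Set.finite_empty, by simp⟩
    | true =>
      -- exactly one root
      obtain ⟨y₁, ⟨hy₁lt, hy₁U⟩, hy₁t⟩ :=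
        ((hla x₀ hx₀).and (hLa.eventually (eventually_lt_atBot t))).exists
      obtain ⟨y₂, ⟨hy₂lt, hy₂U⟩, hy₂t⟩ :=
        ((hlb y₁ hy₁U).and (hLb.eventually (eventually_gt_atTop t))).exists
      have hcont : ContinuousOn φ (Set.Icc y₁ y₂) := contOn hdiff (hU.out hy₁U hy₂U)
      obtain ⟨c, hcmem, hct⟩ := intermediate_value_Ioo (le_of_lt hy₂lt) hcont ⟨hy₁t, hy₂t⟩
      have hcU : c ∈ U := hU.out hy₁U hy₂U ⟨le_of_lt hcmem.1, le_of_lt hcmem.2⟩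
      have hS : {x ∈ U | φ x = t} = {c} := by
        ext z; simp only [Set.mem_setOf_eq, Set.mem_singleton_iff]
        constructor
        · rintro ⟨hzU, hzt⟩
          by_contra hzc
          obtain ⟨y, ⟨hylt, hyU⟩, hyt⟩ :=
            ((hla (min z c) (by rcases min_cases z c with ⟨h,_⟩|⟨h,_⟩ <;> rw [h] <;> assumption)).and
              (hLa.eventually (eventually_lt_atBot t))).exists
          rcases lt_or_gt_of_ne hzc with h | h
          · exact no_two_low_left hU hdiff hcrit hyU hcU
              (lt_of_lt_of_le hylt (min_le_left _ _)) h hyt hzt hct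
          · exact no_two_low_left hU hdiff hcrit hyU hzU
              (lt_of_lt_of_le hylt (min_le_right _ _)) h hyt hct hzt
        · rintro rfl; exact ⟨hcU, hct⟩
      rw [hS]; exact ⟨Set.finite_singleton c, by simp⟩
  | true =>
    cases Lb with
    | false =>
      -- exactly one root (mirrored)
      obtain ⟨y₂, ⟨hy₂lt, hy₂U⟩, hy₂t⟩ :=
        ((hlb x₀ hx₀).and (hLb.eventually (eventually_lt_atBot t))).exists
      obtain ⟨y₁, ⟨hy₁lt, hy₁U⟩, hy₁t⟩ :=
        ((hla x₀ hx₀).and (hLa.eventually (eventually_gt_atTop t))).exists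
      have h12 : y₁ < y₂ := lt_trans hy₁lt hy₂lt
      have hcont : ContinuousOn φ (Set.Icc y₁ y₂) := contOn hdiff (hU.out hy₁U hy₂U)
      obtain ⟨c, hcmem, hct⟩ := intermediate_value_Ioo' (le_of_lt h12) hcont ⟨hy₂t, hy₁t⟩
      have hcU : c ∈ U := hU.out hy₁U hy₂U ⟨le_of_lt hcmem.1, le_of_lt hcmem.2⟩
      have hS : {x ∈ U | φ x = t} = {c} := by
        ext z; simp only [Set.mem_setOf_eq, Set.mem_singleton_iff]
        constructor
        · rintro ⟨hzU, hzt⟩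
          by_contra hzc
          obtain ⟨y, ⟨hylt, hyU⟩, hyt⟩ :=
            ((hlb (max z c) (by rcases max_cases z c with ⟨h,_⟩|⟨h,_⟩ <;> rw [h] <;> assumption)).and
              (hLb.eventually (eventually_lt_atBot t))).exists
          rcases lt_or_gt_of_ne hzc with h | h
          · exact no_two_low_right hU hdiff hcrit hzU hyU h
              (lt_of_le_of_lt (le_max_right _ _) hylt) hyt hzt hct
          · exact no_two_low_right hU hdiff hcrit hcU hyU h
              (lt_of_le_of_lt (le_max_left _ _) hylt) hyt hct hzt
        · rintro rfl; exact ⟨hcU, hct⟩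
      rw [hS]; exact ⟨Set.finite_singleton c, by simp⟩
    | true =>
      -- exactly two roots
      have hlow : ∃ x ∈ U, φ x < t := by
        by_contra hall
        push_neg at hall
        obtain ⟨y₁, ⟨hy₁lt, hy₁U⟩, hy₁t⟩ :=
          ((hla x₀ hx₀).and (hLa.eventually (eventually_gt_atTop (φ x₀)))).exists
        obtain ⟨y₂, ⟨hy₂lt, hy₂U⟩, hy₂t⟩ :=
          ((hlb x₀ hx₀).and (hLb.eventually (eventually_gt_atTop (φ x₀)))).exists
        have hsub : Set.Icc y₁ y₂ ⊆ U := hU.out hy₁U hy₂U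
        obtain ⟨c, hcmem, hcmin⟩ := isCompact_Icc.exists_isMinOn
          ⟨x₀, le_of_lt hy₁lt, le_of_lt hy₂lt⟩ (contOn hdiff hsub)
        have hcx₀ : φ c ≤ φ x₀ := hcmin ⟨le_of_lt hy₁lt, le_of_lt hy₂lt⟩
        have hc1 : c ≠ y₁ := by intro h; rw [h] at hcx₀; linarith
        have hc2 : c ≠ y₂ := by intro h; rw [h] at hcx₀; linarith
        have hcIoo : c ∈ Set.Ioo y₁ y₂ :=
          ⟨lt_of_le_of_ne hcmem.1 (Ne.symm hc1), lt_of_le_of_ne hcmem.2 hc2⟩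
        have hloc : IsLocalMin φ c := hcmin.isLocalMin (Icc_mem_nhds hcIoo.1 hcIoo.2)
        have := hcrit c (hsub hcmem) hloc.deriv_eq_zero
        exact absurd this (not_lt.mpr (hall c (hsub hcmem)))
      obtain ⟨x₁, hx₁U, hx₁t⟩ := hlow
      obtain ⟨y₁, ⟨hy₁lt, hy₁U⟩, hy₁t⟩ :=
        ((hla x₁ hx₁U).and (hLa.eventually (eventually_gt_atTop t))).exists
      obtain ⟨y₂, ⟨hy₂lt, hy₂U⟩, hy₂t⟩ :=
        ((hlb x₁ hx₁U).and (hLb.eventually (eventually_gt_atTop t))).exists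
      have hcont1 : ContinuousOn φ (Set.Icc y₁ x₁) := contOn hdiff (hU.out hy₁U hx₁U)
      have hcont2 : ContinuousOn φ (Set.Icc x₁ y₂) := contOn hdiff (hU.out hx₁U hy₂U)
      obtain ⟨c₁, hc₁mem, hc₁t⟩ := intermediate_value_Ioo' (le_of_lt hy₁lt) hcont1 ⟨hx₁t, hy₁t⟩
      obtain ⟨c₂, hc₂mem, hc₂t⟩ := intermediate_value_Ioo (le_of_lt hy₂lt) hcont2 ⟨hx₁t, hy₂t⟩
      have hc₁U : c₁ ∈ U := hU.out hy₁U hx₁U ⟨le_of_lt hc₁mem.1, le_of_lt hc₁mem.2⟩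
      have hc₂U : c₂ ∈ U := hU.out hx₁U hy₂U ⟨le_of_lt hc₂mem.1, le_of_lt hc₂mem.2⟩
      have hc₁₂ : c₁ ≠ c₂ := ne_of_lt (lt_trans hc₁mem.2 hc₂mem.1)
      have hS : {x ∈ U | φ x = t} = {c₁, c₂} := by
        ext z
        simp only [Set.mem_setOf_eq, Set.mem_insert_iff, Set.mem_singleton_iff]
        constructor
        · rintro ⟨hzU, hzt⟩
          by_contra hz
          push_neg at hz
          exact no_three_distinct hU hdiff hcrit hzU hc₁U hc₂U hz.1 hz.2 hc₁₂ hzt hc₁t hc₂t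
        · rintro (rfl | rfl); exacts [⟨hc₁U, hc₁t⟩, ⟨hc₂U, hc₂t⟩]
      rw [hS]
      exact ⟨(Set.finite_singleton c₂).insert c₁, by rw [Set.ncard_pair hc₁₂]; simp⟩

/-- Counting preimages of `t` on a ray `Iio b`, with pole set `W` inside. -/
lemma ray_count (φ : ℝ → ℝ) (t : ℝ) :
    ∀ (k : ℕ) (W : Finset ℝ) (_ : W.card = k) (b : ℝ) (_ : ∀ w ∈ W, w < b)
    (_ : ∀ x < b, x ∉ W → DifferentiableAt ℝ φ x)
    (_ : ∀ x < b, x ∉ W → deriv φ x = 0 → φ x < t)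
    (_ : ∀ w ∈ W, (Tendsto φ (𝓝[<] w) atTop ∧ Tendsto φ (𝓝[>] w) atBot) ∨
        (Tendsto φ (𝓝[<] w) atBot ∧ Tendsto φ (𝓝[>] w) atTop))
    (_ : ∀ w ∈ W, φ w ≠ t)
    (Lb Lm : Bool) (_ : Tendsto φ (𝓝[<] b) (cond Lb atTop atBot))
    (_ : Tendsto φ atBot (cond Lm atTop atBot)),
    {x ∈ Set.Iio b | φ x = t}.Finite ∧
      {x ∈ Set.Iio b | φ x = t}.ncard = W.card + (cond Lb 1 0) + (cond Lm 1 0) := by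
  intro k
  induction k with
  | zero =>
    intro W hW b hWb hdiff hcrit hpole hWt Lb Lm hLb hLm
    have hWe : W = ∅ := Finset.card_eq_zero.mp hW
    subst hWe
    have := interval_count (U := Set.Iio b) (φ := φ) (t := t) ordConnected_Iio
      ⟨b - 1, by simp⟩
      (fun x hx => hdiff x hx (by simp))
      (fun x hx => hcrit x hx (by simp))
      atBot (𝓝[<] b)
      (fun x hx => ((eventually_lt_atBot x).and (eventually_lt_atBot b)).mono
        (fun y hy => ⟨hy.1, hy.2⟩))
      (fun x hx => by
        filter_upwards [Ioo_mem_nhdsLT_of_mem (show b ∈ Set.Ioc x b by exact ⟨hx, le_refl _⟩)]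
          with y hy
        exact ⟨hy.1, hy.2⟩)
      Lm Lb hLm hLb
    rw [this.2]
    exact ⟨this.1, by simp; ring⟩
  | succ k ih =>
    intro W hW b hWb hdiff hcrit hpole hWt Lb Lm hLb hLm
    have hWne : W.Nonempty := Finset.card_pos.mp (by omega)
    set w := W.max' hWne with hw
    have hwW : w ∈ W := W.max'_mem hWne
    have hwb : w < b := hWb w hwW
    -- limits at w
    have hpw := hpole w hwW
    -- split the set
    have hsplit : {x ∈ Set.Iio b | φ x = t} =
        {x ∈ Set.Iio w | φ x = t} ∪ {x ∈ Set.Ioo w b | φ x = t} := by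
      ext z
      simp only [Set.mem_setOf_eq, Set.mem_union, Set.mem_Iio, Set.mem_Ioo]
      constructor
      · rintro ⟨hzb, hzt⟩
        rcases lt_trichotomy z w with h | h | h
        · exact Or.inl ⟨h, hzt⟩
        · exact absurd hzt (by rw [h]; exact hWt w hwW)
        · exact Or.inr ⟨⟨h, hzb⟩, hzt⟩
      · rintro (⟨h, hzt⟩ | ⟨⟨h1, h2⟩, hzt⟩)
        · exact ⟨lt_trans h hwb, hzt⟩
        · exact ⟨h2, hzt⟩
    have hdisj : Disjoint {x ∈ Set.Iio w | φ x = t} {x ∈ Set.Ioo w b | φ x = t} := by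
      apply Set.disjoint_left.mpr
      rintro z ⟨hz1, _⟩ ⟨hz2, _⟩
      exact absurd hz2.1 (not_lt.mpr (le_of_lt hz1))
    -- boolean for the left limit at w
    obtain ⟨Lw, hLwl, hLwr⟩ : ∃ Lw : Bool, Tendsto φ (𝓝[<] w) (cond Lw atTop atBot) ∧
        Tendsto φ (𝓝[>] w) (cond (!Lw) atTop atBot) := by
      rcases hpw with ⟨h1, h2⟩ | ⟨h1, h2⟩
      · exact ⟨true, h1, h2⟩
      · exact ⟨false, h1, h2⟩
    have hnotW : ∀ x, w < x → x ∉ W := by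
      intro x hx hxW
      exact absurd (W.le_max' x hxW) (not_le.mpr hx)
    -- outer interval (w, b)
    have houter := interval_count (U := Set.Ioo w b) (φ := φ) (t := t) ordConnected_Ioo
      ⟨(w + b) / 2, by constructor <;> [linarith; linarith]⟩
      (fun x hx => hdiff x hx.2 (hnotW x hx.1))
      (fun x hx => hcrit x hx.2 (hnotW x hx.1))
      (𝓝[>] w) (𝓝[<] b)
      (fun x hx => by
        filter_upwards [Ioo_mem_nhdsGT_of_mem (show w ∈ Set.Ico w x from ⟨le_refl _, hx.1⟩)]
          with y hy
        exact ⟨hy.2, hy.1, lt_trans hy.2 hx.2⟩)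
      (fun x hx => by
        filter_upwards [Ioo_mem_nhdsLT_of_mem (show b ∈ Set.Ioc x b from ⟨hx.2, le_refl _⟩)]
          with y hy
        exact ⟨hy.1, lt_trans hx.1 hy.1, hy.2⟩)
      (!Lw) Lb hLwr hLb
    -- inner ray (-∞, w) with W.erase w
    have hinner := ih (W.erase w) (by rw [Finset.card_erase_of_mem hwW, hW]; rfl) w
      (fun v hv => lt_of_le_of_ne (W.le_max' v (Finset.mem_of_mem_erase hv))
        (Finset.ne_of_mem_erase hv))
      (fun x hx hxW => hdiff x (lt_trans hx hwb) (by
        intro hmem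
        rcases eq_or_ne x w with rfl | hne
        · exact lt_irrefl _ hx
        · exact hxW (Finset.mem_erase.mpr ⟨hne, hmem⟩)))
      (fun x hx hxW => hcrit x (lt_trans hx hwb) (by
        intro hmem
        rcases eq_or_ne x w with rfl | hne
        · exact lt_irrefl _ hx
        · exact hxW (Finset.mem_erase.mpr ⟨hne, hmem⟩)))
      (fun v hv => hpole v (Finset.mem_of_mem_erase hv))
      (fun v hv => hWt v (Finset.mem_of_mem_erase hv))
      Lw Lm hLwl hLm
    rw [hsplit]
    refine ⟨hinner.1.union houter.1, ?_⟩
    rw [Set.ncard_union_eq hdisj hinner.1 houter.1, hinner.2, houter.2,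
      Finset.card_erase_of_mem hwW, hW]
    cases Lw <;> cases Lb <;> cases Lm <;> simp <;> omega

/-- Counting preimages of `t` on the whole line, with pole set `W`. -/
lemma line_count (φ : ℝ → ℝ) (t : ℝ) (W : Finset ℝ)
    (hdiff : ∀ x ∉ W, DifferentiableAt ℝ φ x)
    (hcrit : ∀ x ∉ W, deriv φ x = 0 → φ x < t)
    (hpole : ∀ w ∈ W, (Tendsto φ (𝓝[<] w) atTop ∧ Tendsto φ (𝓝[>] w) atBot) ∨
        (Tendsto φ (𝓝[<] w) atBot ∧ Tendsto φ (𝓝[>] w) atTop))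
    (hWt : ∀ w ∈ W, φ w ≠ t)
    (Lp Lm : Bool) (hLp : Tendsto φ atTop (cond Lp atTop atBot))
    (hLm : Tendsto φ atBot (cond Lm atTop atBot)) :
    {x : ℝ | φ x = t}.Finite ∧
      {x : ℝ | φ x = t}.ncard = W.card + (cond Lp 1 0) + (cond Lm 1 0) := by
  rcases Finset.eq_empty_or_nonempty W with rfl | hWne
  · have := interval_count (U := Set.univ) (φ := φ) (t := t) ordConnected_univ
      ⟨0, trivial⟩ (fun x _ => hdiff x (by simp)) (fun x hx => hcrit x (by simp))
      atBot atTop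
      (fun x _ => (eventually_lt_atBot x).mono (fun y hy => ⟨hy, trivial⟩))
      (fun x _ => (eventually_gt_atTop x).mono (fun y hy => ⟨hy, trivial⟩))
      Lm Lp hLm hLp
    have heq : {x ∈ Set.univ | φ x = t} = {x : ℝ | φ x = t} := by ext z; simp
    rw [heq] at this
    rw [this.2]
    exact ⟨this.1, by simp; ring⟩
  · set w := W.max' hWne with hw
    have hwW : w ∈ W := W.max'_mem hWne
    have hnotW : ∀ x, w < x → x ∉ W := by
      intro x hx hxW
      exact absurd (W.le_max' x hxW) (not_le.mpr hx)
    obtain ⟨Lw, hLwl, hLwr⟩ : ∃ Lw : Bool, Tendsto φ (𝓝[<] w) (cond Lw atTop atBot) ∧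
        Tendsto φ (𝓝[>] w) (cond (!Lw) atTop atBot) := by
      rcases hpole w hwW with ⟨h1, h2⟩ | ⟨h1, h2⟩
      · exact ⟨true, h1, h2⟩
      · exact ⟨false, h1, h2⟩
    have hsplit : {x : ℝ | φ x = t} =
        {x ∈ Set.Iio w | φ x = t} ∪ {x ∈ Set.Ioi w | φ x = t} := by
      ext z
      simp only [Set.mem_setOf_eq, Set.mem_union, Set.mem_Iio, Set.mem_Ioi]
      constructor
      · intro hzt
        rcases lt_trichotomy z w with h | h | h
        · exact Or.inl ⟨h, hzt⟩
        · exact absurd hzt (by rw [h]; exact hWt w hwW)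
        · exact Or.inr ⟨h, hzt⟩
      · rintro (⟨_, hzt⟩ | ⟨_, hzt⟩) <;> exact hzt
    have hdisj : Disjoint {x ∈ Set.Iio w | φ x = t} {x ∈ Set.Ioi w | φ x = t} := by
      apply Set.disjoint_left.mpr
      rintro z ⟨hz1, _⟩ ⟨hz2, _⟩
      exact absurd (Set.mem_Ioi.mp hz2) (not_lt.mpr (le_of_lt hz1))
    have houter := interval_count (U := Set.Ioi w) (φ := φ) (t := t) ordConnected_Ioi
      ⟨w + 1, by simp⟩
      (fun x hx => hdiff x (hnotW x hx))
      (fun x hx => hcrit x (hnotW x hx))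
      (𝓝[>] w) atTop
      (fun x hx => by
        filter_upwards [Ioo_mem_nhdsGT_of_mem (show w ∈ Set.Ico w x from ⟨le_refl _, hx⟩)]
          with y hy
        exact ⟨hy.2, hy.1⟩)
      (fun x hx => (eventually_gt_atTop x).mono (fun y hy => ⟨hy, lt_trans hx hy⟩))
      (!Lw) Lp hLwr hLp
    have hinner := ray_count φ t (W.erase w).card (W.erase w) rfl w
      (fun v hv => lt_of_le_of_ne (W.le_max' v (Finset.mem_of_mem_erase hv))
        (Finset.ne_of_mem_erase hv))
      (fun x hx hxW => hdiff x (by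
        intro hmem
        rcases eq_or_ne x w with rfl | hne
        · exact lt_irrefl _ hx
        · exact hxW (Finset.mem_erase.mpr ⟨hne, hmem⟩)))
      (fun x hx hxW => hcrit x (by
        intro hmem
        rcases eq_or_ne x w with rfl | hne
        · exact lt_irrefl _ hx
        · exact hxW (Finset.mem_erase.mpr ⟨hne, hmem⟩)))
      (fun v hv => hpole v (Finset.mem_of_mem_erase hv))
      (fun v hv => hWt v (Finset.mem_of_mem_erase hv))
      Lw Lm hLwl hLm
    rw [hsplit]
    refine ⟨hinner.1.union houter.1, ?_⟩
    rw [Set.ncard_union_eq hdisj hinner.1 houter.1, hinner.2, houter.2,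
      Finset.card_erase_of_mem hwW]
    have hcard : 1 ≤ W.card := Finset.card_pos.mpr hWne
    cases Lw <;> cases Lp <;> cases Lm <;> simp <;> omega

end IL


section Lim
open Polynomial Asymptotics


/-- sign of a polynomial just right of a simple zero with positive derivative -/
lemma eval_sign_right_pos {p : Polynomial ℝ} {a : ℝ} (h0 : p.eval a = 0)
    (hd : 0 < (Polynomial.derivative p).eval a) :
    Tendsto (fun x => p.eval x) (𝓝[>] a) (𝓝[>] (0:ℝ)) := by
  rw [tendsto_nhdsWithin_iff]
  constructor
  · have := (p.hasDerivAt a).continuousAt.continuousWithinAt (s := Set.Ioi a)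
    rw [ContinuousWithinAt] at this
    rw [h0] at this
    exact this
  · have hs := hasDerivAt_iff_tendsto_slope.mp (p.hasDerivAt a)
    have hev : ∀ᶠ y in 𝓝[≠] a, 0 < slope (fun x => p.eval x) a y :=
      hs.eventually (eventually_gt_nhds hd)
    have hmono : 𝓝[>] a ≤ 𝓝[≠] a :=
      nhdsWithin_mono _ (fun y hy => ne_of_gt hy)
    filter_upwards [hmono hev, self_mem_nhdsWithin] with y hy hya
    rw [slope_def_field, h0, sub_zero] at hy
    have hya' : (0:ℝ) < y - a := sub_pos.mpr hya
    have := mul_pos hy hya'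
    rwa [div_mul_cancel₀ _ (ne_of_gt hya')] at this

lemma eval_sign_left_pos {p : Polynomial ℝ} {a : ℝ} (h0 : p.eval a = 0)
    (hd : 0 < (Polynomial.derivative p).eval a) :
    Tendsto (fun x => p.eval x) (𝓝[<] a) (𝓝[<] (0:ℝ)) := by
  rw [tendsto_nhdsWithin_iff]
  constructor
  · have := (p.hasDerivAt a).continuousAt.continuousWithinAt (s := Set.Iio a)
    rw [ContinuousWithinAt] at this
    rw [h0] at this
    exact this
  · have hs := hasDerivAt_iff_tendsto_slope.mp (p.hasDerivAt a)
    have hev : ∀ᶠ y in 𝓝[≠] a, 0 < slope (fun x => p.eval x) a y :=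
      hs.eventually (eventually_gt_nhds hd)
    have hmono : 𝓝[<] a ≤ 𝓝[≠] a :=
      nhdsWithin_mono _ (fun y hy => ne_of_lt hy)
    filter_upwards [hmono hev, self_mem_nhdsWithin] with y hy hya
    rw [slope_def_field, h0, sub_zero] at hy
    have hya' : y - a < 0 := sub_neg.mpr hya
    rcases div_pos_iff.mp hy with ⟨_, h2⟩ | ⟨h1, _⟩
    · exact absurd hya' (not_lt.mpr (le_of_lt h2))
    · exact h1

/-- `q/h → atTop` when `q → c > 0` and `h → 0⁺`. -/
lemma div_tendsto_atTop_pos {q h : ℝ → ℝ} {l : Filter ℝ} {c : ℝ} (hc : 0 < c)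
    (hq : Tendsto q l (𝓝 c)) (hh : Tendsto h l (𝓝[>] (0:ℝ))) :
    Tendsto (fun x => q x / h x) l atTop := by
  simpa [div_eq_mul_inv] using Filter.Tendsto.pos_mul_atTop hc hq hh.inv_tendsto_nhdsGT_zero

lemma div_tendsto_atBot_neg {q h : ℝ → ℝ} {l : Filter ℝ} {c : ℝ} (hc : c < 0)
    (hq : Tendsto q l (𝓝 c)) (hh : Tendsto h l (𝓝[>] (0:ℝ))) :
    Tendsto (fun x => q x / h x) l atBot := by
  simpa [div_eq_mul_inv] using Filter.Tendsto.neg_mul_atTop hc hq hh.inv_tendsto_nhdsGT_zero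

lemma nhdsLT_of_neg_nhdsGT {f : ℝ → ℝ} {l : Filter ℝ}
    (h : Tendsto f l (𝓝[<] (0:ℝ))) : Tendsto (fun x => -f x) l (𝓝[>] (0:ℝ)) := by
  rw [tendsto_nhdsWithin_iff] at h ⊢
  refine ⟨by simpa using h.1.neg, h.2.mono (fun x hx => by simpa using hx)⟩

lemma nhdsGT_of_neg_nhdsLT {f : ℝ → ℝ} {l : Filter ℝ}
    (h : Tendsto f l (𝓝[>] (0:ℝ))) : Tendsto (fun x => -f x) l (𝓝[<] (0:ℝ)) := by
  rw [tendsto_nhdsWithin_iff] at h ⊢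
  refine ⟨by simpa using h.1.neg, h.2.mono (fun x hx => by simpa using hx)⟩

/-- `q/h → atTop` when `q → c > 0` and `h → 0⁻`, variants -/
lemma div_tendsto_atBot_pos {q h : ℝ → ℝ} {l : Filter ℝ} {c : ℝ} (hc : 0 < c)
    (hq : Tendsto q l (𝓝 c)) (hh : Tendsto h l (𝓝[<] (0:ℝ))) :
    Tendsto (fun x => q x / h x) l atBot := by
  have := div_tendsto_atBot_neg (neg_neg_iff_pos.mpr hc) hq.neg (nhdsLT_of_neg_nhdsGT hh)
  simpa [neg_div_neg_eq] using this

lemma div_tendsto_atTop_neg {q h : ℝ → ℝ} {l : Filter ℝ} {c : ℝ} (hc : c < 0)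
    (hq : Tendsto q l (𝓝 c)) (hh : Tendsto h l (𝓝[<] (0:ℝ))) :
    Tendsto (fun x => q x / h x) l atTop := by
  have := div_tendsto_atTop_pos (neg_pos.mpr hc) hq.neg (nhdsLT_of_neg_nhdsGT hh)
  simpa [neg_div_neg_eq] using this

/-- the two one-sided limits of `-x^N / p(x)` at a simple zero `a ≠ 0` of `p`. -/
lemma pole_pair {p : Polynomial ℝ} {N : ℕ} {a : ℝ} (ha : a ≠ 0) (h0 : p.eval a = 0)
    (hd : (Polynomial.derivative p).eval a ≠ 0) :
    (Tendsto (fun x => -x^N / p.eval x) (𝓝[<] a) atTop ∧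
      Tendsto (fun x => -x^N / p.eval x) (𝓝[>] a) atBot) ∨
    (Tendsto (fun x => -x^N / p.eval x) (𝓝[<] a) atBot ∧
      Tendsto (fun x => -x^N / p.eval x) (𝓝[>] a) atTop) := by
  have hqC : Continuous (fun x : ℝ => -x^N) := (continuous_pow N).neg
  have hqL : Tendsto (fun x : ℝ => -x^N) (𝓝[<] a) (𝓝 (-a^N)) :=
    (hqC.tendsto a).mono_left nhdsWithin_le_nhds
  have hqR : Tendsto (fun x : ℝ => -x^N) (𝓝[>] a) (𝓝 (-a^N)) :=
    (hqC.tendsto a).mono_left nhdsWithin_le_nhds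
  have haN : a^N ≠ 0 := pow_ne_zero _ ha
  rcases lt_or_gt_of_ne hd with hneg | hpos
  · -- derivative negative: p > 0 left, p < 0 right
    have hL : Tendsto (fun x => p.eval x) (𝓝[<] a) (𝓝[>] (0:ℝ)) := by
      have h1 : Tendsto (fun x => (-p).eval x) (𝓝[<] a) (𝓝[<] (0:ℝ)) :=
        eval_sign_left_pos (by simp [h0]) (by simp only [Polynomial.derivative_neg, Polynomial.eval_neg]; linarith)
      have h2 := nhdsLT_of_neg_nhdsGT h1
      simpa using h2
    have hR : Tendsto (fun x => p.eval x) (𝓝[>] a) (𝓝[<] (0:ℝ)) := by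
      have h1 : Tendsto (fun x => (-p).eval x) (𝓝[>] a) (𝓝[>] (0:ℝ)) :=
        eval_sign_right_pos (by simp [h0]) (by simp only [Polynomial.derivative_neg, Polynomial.eval_neg]; linarith)
      have h2 := nhdsGT_of_neg_nhdsLT h1
      simpa using h2
    rcases lt_or_gt_of_ne (neg_ne_zero.mpr haN) with hcneg | hcpos
    · exact Or.inr ⟨div_tendsto_atBot_neg hcneg hqL hL, div_tendsto_atTop_neg hcneg hqR hR⟩
    · exact Or.inl ⟨div_tendsto_atTop_pos hcpos hqL hL, div_tendsto_atBot_pos hcpos hqR hR⟩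
  · -- derivative positive: p < 0 left, p > 0 right
    have hL : Tendsto (fun x => p.eval x) (𝓝[<] a) (𝓝[<] (0:ℝ)) := eval_sign_left_pos h0 hpos
    have hR : Tendsto (fun x => p.eval x) (𝓝[>] a) (𝓝[>] (0:ℝ)) := eval_sign_right_pos h0 hpos
    rcases lt_or_gt_of_ne (neg_ne_zero.mpr haN) with hcneg | hcpos
    · exact Or.inl ⟨div_tendsto_atTop_neg hcneg hqL hL, div_tendsto_atBot_neg hcneg hqR hR⟩
    · exact Or.inr ⟨div_tendsto_atBot_pos hcpos hqL hL, div_tendsto_atTop_pos hcpos hqR hR⟩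

lemma ratio_equiv (p : Polynomial ℝ) (hp : p ≠ 0) (b : ℝ) (hb : b ≠ 0) (K : ℕ)
    (hK : p.natDegree < K) :
    IsEquivalent atTop (fun x => b * x ^ K / p.eval x)
      (fun x => (b / p.leadingCoeff) * x ^ (K - p.natDegree)) := by
  have hlc : p.leadingCoeff ≠ 0 := Polynomial.leadingCoeff_ne_zero.mpr hp
  have E : IsEquivalent atTop (fun x => b * x ^ K / p.eval x)
      (fun x => b * x ^ K / (p.leadingCoeff * x ^ p.natDegree)) :=
    IsEquivalent.div (IsEquivalent.refl) (p.isEquivalent_atTop_lead)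
  refine E.congr_right ?_
  filter_upwards [eventually_gt_atTop (0:ℝ)] with x hx
  have hx0 : x ≠ 0 := ne_of_gt hx
  have hpow : x ^ (K - p.natDegree) * x ^ p.natDegree = x ^ K := by
    rw [← pow_add]; congr 1; omega
  field_simp
  rw [← hpow]; ring

lemma ratio_tendsto_atTop (p : Polynomial ℝ) (hp : p ≠ 0) (b : ℝ) (K : ℕ)
    (hK : p.natDegree < K) (hb : 0 < b / p.leadingCoeff) :
    Tendsto (fun x => b * x ^ K / p.eval x) atTop atTop := by
  have hb0 : b ≠ 0 := by
    intro h; rw [h, zero_div] at hb; exact lt_irrefl _ hb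
  have E := (ratio_equiv p hp b hb0 K hK).symm
  exact E.tendsto_atTop ((tendsto_pow_atTop (by omega)).const_mul_atTop hb)

lemma ratio_tendsto_atBot (p : Polynomial ℝ) (hp : p ≠ 0) (b : ℝ) (K : ℕ)
    (hK : p.natDegree < K) (hb : b / p.leadingCoeff < 0) :
    Tendsto (fun x => b * x ^ K / p.eval x) atTop atBot := by
  have hb0 : b ≠ 0 := by
    intro h; rw [h, zero_div] at hb; exact lt_irrefl _ hb
  have E := (ratio_equiv p hp b hb0 K hK).symm
  exact E.tendsto_atBot ((tendsto_const_mul_atBot_of_neg hb).mpr (tendsto_pow_atTop (by omega)))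

end Lim

section Disc
open Polynomial

lemma polyDisc_eq_zero {f : Polynomial ℝ} (hf : f ≠ 0) {x : ℝ}
    (h1 : f.eval x = 0) (h2 : (Polynomial.derivative f).eval x = 0) : polyDisc f = 0 := by
  unfold polyDisc
  have hmap : f.map (algebraMap ℝ ℂ) ≠ 0 :=
    (Polynomial.map_ne_zero_iff (algebraMap ℝ ℂ).injective).mpr hf
  have hx : (algebraMap ℝ ℂ x) ∈ (f.map (algebraMap ℝ ℂ)).roots := by
    rw [Polynomial.mem_roots']
    exact ⟨hmap, by rw [Polynomial.IsRoot, Polynomial.eval_map, Polynomial.eval₂_at_apply, h1,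
      map_zero]⟩
  have hz : (0:ℂ) ∈ ((f.map (algebraMap ℝ ℂ)).roots.map
      fun z => Polynomial.eval z (Polynomial.derivative (f.map (algebraMap ℝ ℂ)))) := by
    rw [Multiset.mem_map]
    refine ⟨algebraMap ℝ ℂ x, hx, ?_⟩
    rw [Polynomial.derivative_map, Polynomial.eval_map, Polynomial.eval₂_at_apply, h2, map_zero]
  rw [Multiset.prod_eq_zero hz, mul_zero]


end Disc

section Core
open Polynomial Asymptotics

theorem core_count (p : Polynomial ℝ) (N : ℕ) (t : ℝ) (ht : 0 < t)
    (hdeg : p.natDegree < N) (hp0 : p.eval 0 ≠ 0)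
    (hsimple : ∀ a : ℝ, p.eval a = 0 → (Polynomial.derivative p).eval a ≠ 0)
    (hcrit : ∀ x : ℝ, x ≠ 0 → p.eval x ≠ 0 →
      -((N:ℝ) * x^(N-1)) * p.eval x + x^N * (Polynomial.derivative p).eval x = 0 →
      -x^N / p.eval x < t) :
    {x : ℝ | x^N + t * p.eval x = 0}.Finite ∧
      {x : ℝ | x^N + t * p.eval x = 0}.ncard =
        {x : ℝ | p.eval x = 0}.ncard
          + (if p.leadingCoeff < 0 then 1 else 0)
          + (if Odd (N - p.natDegree) then (if 0 < p.leadingCoeff then 1 else 0)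
             else (if p.leadingCoeff < 0 then 1 else 0)) := by
  have hp : p ≠ 0 := fun h => hp0 (by rw [h]; simp)
  have hlc : p.leadingCoeff ≠ 0 := Polynomial.leadingCoeff_ne_zero.mpr hp
  have hN : N ≠ 0 := by omega
  set φ : ℝ → ℝ := fun x => -x^N / p.eval x with hφ
  -- the root set of the counted polynomial is the t-preimage of φ
  have hsets : {x : ℝ | x^N + t * p.eval x = 0} = {x : ℝ | φ x = t} := by
    ext z
    simp only [Set.mem_setOf_eq, hφ]
    by_cases hz : p.eval z = 0
    · rw [hz]
      constructor
      · intro h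
        exfalso
        have hz0 : z = 0 := by
          have : z ^ N = 0 := by linarith
          exact pow_eq_zero_iff hN |>.mp this
        rw [hz0] at hz; exact hp0 hz
      · intro h
        exfalso
        rw [div_zero] at h
        exact absurd h.symm (ne_of_gt ht)
    · rw [div_eq_iff hz]
      constructor
      · intro h; linarith
      · intro h; linarith
  -- pole set
  set W : Finset ℝ := p.roots.toFinset with hWdef
  have hWmem : ∀ x : ℝ, x ∈ W ↔ p.eval x = 0 := by
    intro x
    rw [hWdef, Multiset.mem_toFinset, Polynomial.mem_roots']
    exact ⟨fun h => h.2, fun h => ⟨hp, h⟩⟩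
  have hWset : {x : ℝ | p.eval x = 0} = (W : Set ℝ) := by
    ext x; simp [hWmem x]
  -- differentiability
  have hder : ∀ x : ℝ, p.eval x ≠ 0 → HasDerivAt φ
      ((-((N:ℝ) * x^(N-1)) * p.eval x - (-x^N) * (Polynomial.derivative p).eval x)
        / (p.eval x)^2) x := by
    intro x hx
    exact ((hasDerivAt_pow N x).neg).div (p.hasDerivAt x) hx
  have hdiff : ∀ x, x ∉ W → DifferentiableAt ℝ φ x := by
    intro x hx
    exact (hder x (fun h => hx ((hWmem x).mpr h))).differentiableAt
  have hcrit' : ∀ x, x ∉ W → deriv φ x = 0 → φ x < t := by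
    intro x hx hd
    have hpx : p.eval x ≠ 0 := fun h => hx ((hWmem x).mpr h)
    rcases eq_or_ne x 0 with rfl | hx0
    · show -(0:ℝ)^N / p.eval 0 < t
      rw [zero_pow hN, neg_zero, zero_div]
      exact ht
    · rw [(hder x hpx).deriv] at hd
      have hnum : -((N:ℝ) * x^(N-1)) * p.eval x + x^N * (Polynomial.derivative p).eval x = 0 := by
        have h2 : (p.eval x)^2 ≠ 0 := pow_ne_zero _ hpx
        have := (div_eq_zero_iff.mp hd).resolve_right h2
        linarith [this]
      exact hcrit x hx0 hpx hnum
  have hpole : ∀ w ∈ W, (Filter.Tendsto φ (nhdsWithin w (Set.Iio w)) Filter.atTop ∧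
        Filter.Tendsto φ (nhdsWithin w (Set.Ioi w)) Filter.atBot) ∨
      (Filter.Tendsto φ (nhdsWithin w (Set.Iio w)) Filter.atBot ∧
        Filter.Tendsto φ (nhdsWithin w (Set.Ioi w)) Filter.atTop) := by
    intro w hw
    have hw0 : p.eval w = 0 := (hWmem w).mp hw
    have hwne : w ≠ 0 := fun h => hp0 (h ▸ hw0)
    exact pole_pair hwne hw0 (hsimple w hw0)
  have hWt : ∀ w ∈ W, φ w ≠ t := by
    intro w hw
    rw [hφ]
    show -w^N / p.eval w ≠ t
    rw [(hWmem w).mp hw, div_zero]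
    exact ne_of_lt ht
  -- limits at +infinity
  have hφeq : φ = fun x => (-1 : ℝ) * x ^ N / p.eval x := by
    funext x; rw [hφ]; ring_nf
  set Lp : Bool := decide (p.leadingCoeff < 0) with hLpdef
  have hLp : Filter.Tendsto φ Filter.atTop (cond Lp Filter.atTop Filter.atBot) := by
    by_cases h : p.leadingCoeff < 0
    · have : Lp = true := by rw [hLpdef]; exact decide_eq_true h
      rw [this, hφeq]
      exact ratio_tendsto_atTop p hp (-1) N hdeg (div_pos_of_neg_of_neg (by norm_num) h)
    · have hpos : 0 < p.leadingCoeff := lt_of_le_of_ne (not_lt.mp h) (Ne.symm hlc)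
      have : Lp = false := by rw [hLpdef]; exact decide_eq_false h
      rw [this, hφeq]
      exact ratio_tendsto_atBot p hp (-1) N hdeg (div_neg_of_neg_of_pos (by norm_num) hpos)
  -- limits at -infinity
  set q : Polynomial ℝ := p.comp (-X) with hqdef
  have hqeval : ∀ x : ℝ, q.eval x = p.eval (-x) := by
    intro x; rw [hqdef, Polynomial.eval_comp]; simp
  have hq : q ≠ 0 := by
    intro h
    apply hp
    have : q.comp (-X) = p := by
      rw [hqdef, Polynomial.comp_assoc]
      simp
    rw [← this, h, Polynomial.zero_comp]
  have hqdeg : q.natDegree = p.natDegree := by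
    rw [hqdef, Polynomial.natDegree_comp]
    simp
  have hqlc : q.leadingCoeff = p.leadingCoeff * (-1) ^ p.natDegree := by
    rw [hqdef, Polynomial.leadingCoeff_comp (by simp)]
    simp
  set Lm : Bool := if Odd (N - p.natDegree) then decide (0 < p.leadingCoeff)
    else decide (p.leadingCoeff < 0) with hLmdef
  have hLm : Filter.Tendsto φ Filter.atBot (cond Lm Filter.atTop Filter.atBot) := by
    have hψeq : (φ ∘ (fun x : ℝ => -x)) = fun x => (-(-1:ℝ)^N) * x ^ N / q.eval x := by
      funext x
      show -(-x)^N / p.eval (-x) = _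
      rw [← hqeval, neg_pow]
      ring_nf
    have htrans : ∀ F, Filter.Tendsto (φ ∘ (fun x : ℝ => -x)) Filter.atTop F →
        Filter.Tendsto φ Filter.atBot F := by
      intro F h
      have := h.comp tendsto_neg_atBot_atTop
      have heq : ((φ ∘ (fun x : ℝ => -x)) ∘ (fun x : ℝ => -x)) = φ := by
        funext x; simp
      rwa [heq] at this
    apply htrans
    rw [hψeq]
    have hqdeg' : q.natDegree < N := by rw [hqdeg]; exact hdeg
    -- sign analysis
    rcases Nat.even_or_odd N with hNpar | hNpar <;>
      rcases Nat.even_or_odd p.natDegree with hSpar | hSpar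
    · -- N even, S even : N - S even, Lm = decide (lc < 0); ratio = -1/lc
      have hpar : ¬ Odd (N - p.natDegree) := by
        obtain ⟨a, ha⟩ := hNpar; obtain ⟨b, hb⟩ := hSpar
        rintro ⟨c, hc⟩; omega
      have hb2 : (-(-1:ℝ)^N) = -1 := by rw [hNpar.neg_one_pow]
      have hlcq : q.leadingCoeff = p.leadingCoeff := by
        rw [hqlc, hSpar.neg_one_pow, mul_one]
      rw [hLmdef, if_neg hpar, hb2]
      by_cases h : p.leadingCoeff < 0
      · rw [decide_eq_true h]
        exact ratio_tendsto_atTop q hq (-1) N hqdeg' (by rw [hlcq]; exact div_pos_of_neg_of_neg (by norm_num) h)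
      · have hpos : 0 < p.leadingCoeff := lt_of_le_of_ne (not_lt.mp h) (Ne.symm hlc)
        rw [decide_eq_false h]
        exact ratio_tendsto_atBot q hq (-1) N hqdeg' (by rw [hlcq]; exact div_neg_of_neg_of_pos (by norm_num) hpos)
    · -- N even, S odd : N - S odd, Lm = decide (0 < lc); b2 = -1, lcq = -lc, ratio = 1/lc
      have hpar : Odd (N - p.natDegree) := by
        obtain ⟨a, ha⟩ := hNpar; obtain ⟨b, hb⟩ := hSpar
        exact ⟨a - b - 1, by omega⟩
      have hb2 : (-(-1:ℝ)^N) = -1 := by rw [hNpar.neg_one_pow]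
      have hlcq : q.leadingCoeff = -p.leadingCoeff := by
        rw [hqlc, hSpar.neg_one_pow]; ring
      rw [hLmdef, if_pos hpar, hb2]
      by_cases h : 0 < p.leadingCoeff
      · rw [decide_eq_true h]
        exact ratio_tendsto_atTop q hq (-1) N hqdeg' (by rw [hlcq]; exact div_pos_of_neg_of_neg (by norm_num) (by linarith))
      · have hneg : p.leadingCoeff < 0 := lt_of_le_of_ne (not_lt.mp h) hlc
        rw [decide_eq_false h]
        exact ratio_tendsto_atBot q hq (-1) N hqdeg' (by rw [hlcq]; exact div_neg_of_neg_of_pos (by norm_num) (by linarith))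
    · -- N odd, S even : N - S odd, Lm = decide (0 < lc); b2 = 1, lcq = lc, ratio = 1/lc
      have hpar : Odd (N - p.natDegree) := by
        obtain ⟨a, ha⟩ := hNpar; obtain ⟨b, hb⟩ := hSpar
        exact ⟨a - b, by omega⟩
      have hb2 : (-(-1:ℝ)^N) = 1 := by rw [hNpar.neg_one_pow]; norm_num
      have hlcq : q.leadingCoeff = p.leadingCoeff := by
        rw [hqlc, hSpar.neg_one_pow, mul_one]
      rw [hLmdef, if_pos hpar, hb2]
      by_cases h : 0 < p.leadingCoeff
      · rw [decide_eq_true h]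
        exact ratio_tendsto_atTop q hq 1 N hqdeg' (by rw [hlcq]; exact div_pos (by norm_num) h)
      · have hneg : p.leadingCoeff < 0 := lt_of_le_of_ne (not_lt.mp h) hlc
        rw [decide_eq_false h]
        exact ratio_tendsto_atBot q hq 1 N hqdeg' (by rw [hlcq]; exact div_neg_of_pos_of_neg (by norm_num) hneg)
    · -- N odd, S odd : N - S even, Lm = decide (lc < 0); b2 = 1, lcq = -lc, ratio = -1/lc
      have hpar : ¬ Odd (N - p.natDegree) := by
        obtain ⟨a, ha⟩ := hNpar; obtain ⟨b, hb⟩ := hSpar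
        rintro ⟨c, hc⟩; omega
      have hb2 : (-(-1:ℝ)^N) = 1 := by rw [hNpar.neg_one_pow]; norm_num
      have hlcq : q.leadingCoeff = -p.leadingCoeff := by
        rw [hqlc, hSpar.neg_one_pow]; ring
      rw [hLmdef, if_neg hpar, hb2]
      by_cases h : p.leadingCoeff < 0
      · rw [decide_eq_true h]
        exact ratio_tendsto_atTop q hq 1 N hqdeg' (by rw [hlcq]; exact div_pos (by norm_num) (by linarith))
      · have hpos : 0 < p.leadingCoeff := lt_of_le_of_ne (not_lt.mp h) (Ne.symm hlc)
        rw [decide_eq_false h]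
        exact ratio_tendsto_atBot q hq 1 N hqdeg' (by rw [hlcq]; exact div_neg_of_pos_of_neg (by norm_num) (by linarith))
  -- apply the line count
  obtain ⟨hfin, hcount⟩ := line_count φ t W hdiff hcrit' hpole hWt Lp Lm hLp hLm
  rw [hsets]
  refine ⟨hfin, ?_⟩
  rw [hcount, hWset, Set.ncard_coe_finset]
  congr 1
  · congr 1
    rw [hLpdef]
    by_cases h : p.leadingCoeff < 0 <;> simp [h]
  · rw [hLmdef]
    by_cases h1 : Odd (N - p.natDegree)
    · rw [if_pos h1, if_pos h1]
      by_cases h2 : 0 < p.leadingCoeff <;> simp [h2]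
    · rw [if_neg h1, if_neg h1]
      by_cases h2 : p.leadingCoeff < 0 <;> simp [h2]

end Core

section Main
open Polynomial Filter Topology

/-- For a separable real polynomial `g(x) = Σ_{k=0}^{s} r_{s−k} x^{s−k}` of degree `s ≥ 1`
with exactly `γ` distinct real roots, and `n > s`: if `α` is the largest real root of the
discriminant `P(t)` of `f(t;x) = xⁿ + t·g(x)` (as a polynomial in `t`), then for every
`t > α` the number of distinct real roots of `f(t;x)` is `γ + 1` if `n − s` is odd,
`γ` if `n − s` is even and `r_s > 0`, and `γ + 2` if `n − s` is even and `r_s < 0`. -/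
theorem real_root_count_of_xn_add_t_mul_g
    (s n : ℕ) (hs : 1 ≤ s) (hns : s < n) (r : ℕ → ℝ)
    (g : Polynomial ℝ) (hg : g = ∑ j ∈ Finset.range (s + 1), C (r j) * X ^ j)
    (hrs : r s ≠ 0) (hsep : g.Separable)
    (γ : ℕ) (hγ : {x : ℝ | Polynomial.eval x g = 0}.ncard = γ) (hγs : γ ≤ s)
    (P : ℝ → ℂ) (hP : ∀ u : ℝ, P u = polyDisc (X ^ n + C u * g))
    (α : ℝ) (hα : IsGreatest {u : ℝ | P u = 0} α) :
    ∀ t : ℝ, α < t →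
      {x : ℝ | Polynomial.eval x (X ^ n + C t * g) = 0}.ncard =
        (if Odd (n - s) then γ + 1 else if 0 < r s then γ else γ + 2) := by
  intro t hαt
  -- basic facts about g
  have hcoeff : ∀ k : ℕ, g.coeff k = if k ∈ Finset.range (s+1) then r k else 0 := by
    intro k
    rw [hg, Polynomial.finset_sum_coeff]
    simp only [Polynomial.coeff_C_mul, Polynomial.coeff_X_pow]
    rw [Finset.sum_congr rfl (fun j _ => by rw [mul_ite, mul_one, mul_zero])]
    exact Finset.sum_ite_eq (Finset.range (s+1)) k (fun j => r j)
  have hgcoeffs : g.coeff s = r s := by rw [hcoeff]; simp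
  have hgdeg : g.natDegree = s := by
    apply le_antisymm
    · apply Polynomial.natDegree_le_iff_coeff_eq_zero.mpr
      intro k hk
      rw [hcoeff, if_neg]
      simp only [Finset.mem_range]
      omega
    · exact Polynomial.le_natDegree_of_ne_zero (by rw [hgcoeffs]; exact hrs)
  have hgne : g ≠ 0 := fun h => hrs (by rw [← hgcoeffs, h, Polynomial.coeff_zero])
  have hglc : g.leadingCoeff = r s := by rw [Polynomial.leadingCoeff, hgdeg, hgcoeffs]
  have hgsimple : ∀ a : ℝ, g.eval a = 0 → (Polynomial.derivative g).eval a ≠ 0 := by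
    intro a ha hda
    obtain ⟨u, v, huv⟩ := hsep
    have hone := congrArg (Polynomial.eval a) huv
    simp [ha, hda] at hone
  -- 0 < t
  have hP0 : P 0 = 0 := by
    rw [hP 0]
    have h0 : (X ^ n + C (0:ℝ) * g) = X ^ n := by simp
    rw [h0]
    apply polyDisc_eq_zero (x := 0) (pow_ne_zero _ Polynomial.X_ne_zero)
    · simp; omega
    · rw [Polynomial.derivative_X_pow]; simp; right; omega
  have hα0 : (0:ℝ) ≤ α := hα.2 hP0
  have ht : 0 < t := lt_of_le_of_lt hα0 hαt
  -- factor out a possible simple zero of g at 0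
  obtain ⟨m, hm01, h, hgXh, hh0⟩ :
      ∃ m : ℕ, (m = 0 ∨ m = 1) ∧ ∃ h : Polynomial ℝ, g = X ^ m * h ∧ h.eval 0 ≠ 0 := by
    by_cases h0 : g.eval 0 = 0
    · refine ⟨1, Or.inr rfl, g.divX, ?_, ?_⟩
      · rw [pow_one]
        have hXd := Polynomial.X_mul_divX_add g
        rw [← Polynomial.coeff_zero_eq_eval_zero] at h0
        rw [h0, map_zero, add_zero] at hXd
        exact hXd.symm
      · intro hd0
        have hsq := hsep.squarefree
        apply Polynomial.not_isUnit_X (R := ℝ)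
        apply hsq X
        rw [← Polynomial.coeff_zero_eq_eval_zero] at hd0 h0
        have h2 := Polynomial.X_mul_divX_add g.divX
        rw [hd0, map_zero, add_zero] at h2
        have h1 := Polynomial.X_mul_divX_add g
        rw [h0, map_zero, add_zero] at h1
        refine ⟨g.divX.divX, ?_⟩
        calc g = X * g.divX := h1.symm
          _ = X * (X * g.divX.divX) := by rw [h2]
          _ = X * X * g.divX.divX := by ring
    · exact ⟨0, Or.inl rfl, g, by rw [pow_zero, one_mul], h0⟩
  have hhne : h ≠ 0 := fun hh => hgne (by rw [hgXh, hh, mul_zero])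
  have hXmne : (X : Polynomial ℝ)^m ≠ 0 := pow_ne_zero _ Polynomial.X_ne_zero
  have hdegsum : s = m + h.natDegree := by
    rw [← hgdeg, hgXh, Polynomial.natDegree_mul hXmne hhne, Polynomial.natDegree_X_pow]
  have hhlc : h.leadingCoeff = r s := by
    rw [← hglc, hgXh, Polynomial.leadingCoeff_mul, Polynomial.leadingCoeff_X_pow, one_mul]
  have hhsimple : ∀ a : ℝ, h.eval a = 0 → (Polynomial.derivative h).eval a ≠ 0 := by
    intro a ha hda
    have hane : a ≠ 0 := fun h0 => hh0 (h0 ▸ ha)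
    apply hgsimple a
    · rw [hgXh]; simp [ha]
    · rw [hgXh, Polynomial.derivative_mul]
      simp [ha, hda]
  set N := n - m with hNdef
  have hmn : m + N = n := by omega
  have hNdeg : h.natDegree < N := by omega
  have hNne : N ≠ 0 := by omega
  obtain ⟨K, hK⟩ : ∃ K, N = K + 1 := ⟨N - 1, by omega⟩
  -- the crucial critical-value bound coming from the discriminant hypothesis
  have hcrit : ∀ x : ℝ, x ≠ 0 → h.eval x ≠ 0 →
      -((N:ℝ) * x^(N-1)) * h.eval x + x^N * (Polynomial.derivative h).eval x = 0 →
      -x^N / h.eval x < t := by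
    intro x hx0 hhx hnum
    set u := -x^N / h.eval x with hu
    have hux : u * h.eval x = -x^N := by rw [hu]; field_simp
    have hnum' : -(((K:ℝ)+1) * x^K) * h.eval x + x^K * x * (Polynomial.derivative h).eval x = 0 := by
      rw [show N - 1 = K by omega, hK, pow_succ] at hnum
      push_cast at hnum
      linarith [hnum]
    have hux' : u * h.eval x = -(x^K * x) := by rw [hux, hK, pow_succ]
    refine lt_of_le_of_lt (hα.2 (show P u = 0 from ?_)) hαt
    rw [hP u]
    apply polyDisc_eq_zero (x := x)
    · intro hf0
      have hc : (X^n + C u * g).coeff n = 0 := by rw [hf0]; simp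
      rw [Polynomial.coeff_add, Polynomial.coeff_X_pow, Polynomial.coeff_C_mul,
        Polynomial.coeff_eq_zero_of_natDegree_lt (by omega : g.natDegree < n)] at hc
      simp at hc
    · -- x is a root of X^n + C u g
      rw [Polynomial.eval_add, Polynomial.eval_pow, Polynomial.eval_X, Polynomial.eval_mul,
        Polynomial.eval_C, hgXh, Polynomial.eval_mul, Polynomial.eval_pow, Polynomial.eval_X]
      have hxn : x^n = x^m * x^N := by rw [← pow_add]; congr 1; omega
      rw [hxn]
      linear_combination x^m * hux
    · -- x is a root of the derivative
      rw [Polynomial.derivative_add, Polynomial.derivative_X_pow, Polynomial.derivative_C_mul,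
        Polynomial.eval_add, Polynomial.eval_mul, Polynomial.eval_C, Polynomial.eval_mul,
        Polynomial.eval_C, Polynomial.eval_pow, Polynomial.eval_X]
      rcases hm01 with hm | hm
      · -- m = 0 : g = h, n = K+1
        have hgh : g = h := by rw [hgXh, hm, pow_zero, one_mul]
        have hn : n = K + 1 := by omega
        rw [hgh, hn, show K + 1 - 1 = K by omega]
        push_cast
        have G' : ((((K:ℝ)+1) * x^K + u * (Polynomial.derivative h).eval x)) * h.eval x = 0 := by
          linear_combination (Polynomial.eval x (Polynomial.derivative h)) * hux' - hnum'
        have := mul_eq_zero.mp G'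
        rcases this with hG | hG
        · linarith [hG]
        · exact absurd hG hhx
      · -- m = 1 : g = X * h, n = K+2
        have hgh : g = X * h := by rw [hgXh, hm, pow_one]
        have hn : n = K + 2 := by omega
        rw [hgh, Polynomial.derivative_mul, Polynomial.derivative_X, one_mul, hn,
          show K + 2 - 1 = K + 1 by omega]
        push_cast
        rw [Polynomial.eval_add, Polynomial.eval_mul, Polynomial.eval_X, pow_succ]
        have G' : ((((K:ℝ)+2) * (x^K * x) + u * (h.eval x + x * (Polynomial.derivative h).eval x))) * h.eval x = 0 := by
          linear_combination (Polynomial.eval x h + x * Polynomial.eval x (Polynomial.derivative h)) * hux' - x * hnum'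
        have := mul_eq_zero.mp G'
        rcases this with hG | hG
        · linarith [hG]
        · exact absurd hG hhx
  -- apply the core counting theorem
  obtain ⟨hfin, hcount⟩ := core_count h N t ht hNdeg hh0 hhsimple hcrit
  -- identify the two root sets
  have hrootsg : {x : ℝ | g.eval x = 0} =
      (if m = 1 then insert (0:ℝ) {x : ℝ | h.eval x = 0} else {x : ℝ | h.eval x = 0}) := by
    rcases hm01 with hm | hm
    · rw [hm, if_neg (by omega)]
      ext z
      simp only [Set.mem_setOf_eq, hgXh, hm, pow_zero, one_mul, Polynomial.eval_mul]
    · rw [hm, if_pos rfl]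
      ext z
      simp only [Set.mem_setOf_eq, hgXh, hm, pow_one, Polynomial.eval_mul, Polynomial.eval_X,
        Set.mem_insert_iff]
      rw [mul_eq_zero]
  have htarget : {x : ℝ | Polynomial.eval x (X ^ n + C t * g) = 0} =
      (if m = 1 then insert (0:ℝ) {x : ℝ | x^N + t * h.eval x = 0}
        else {x : ℝ | x^N + t * h.eval x = 0}) := by
    rcases hm01 with hm | hm
    · rw [hm, if_neg (by omega)]
      ext z
      have hnN : n = N := by omega
      simp only [Set.mem_setOf_eq, Polynomial.eval_add, Polynomial.eval_pow, Polynomial.eval_X,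
        Polynomial.eval_mul, Polynomial.eval_C, hgXh, hm, pow_zero, one_mul, hnN]
    · rw [hm, if_pos rfl]
      ext z
      have hnN : n = N + 1 := by omega
      simp only [Set.mem_setOf_eq, Polynomial.eval_add, Polynomial.eval_pow, Polynomial.eval_X,
        Polynomial.eval_mul, Polynomial.eval_C, hgXh, hm, pow_one, Set.mem_insert_iff, hnN]
      constructor
      · intro hz
        rcases eq_or_ne z 0 with rfl | hzne
        · exact Or.inl rfl
        · right
          have : z * (z^N + t * h.eval z) = 0 := by
            rw [pow_succ] at hz
            linear_combination hz
          rcases mul_eq_zero.mp this with h' | h'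
          · exact absurd h' hzne
          · exact h'
      · rintro (rfl | hz)
        · simp [zero_pow (by omega : N + 1 ≠ 0)]
        · rw [pow_succ]
          linear_combination z * hz
  have h0notS : (0:ℝ) ∉ {x : ℝ | x^N + t * h.eval x = 0} := by
    simp only [Set.mem_setOf_eq, zero_pow hNne, zero_add]
    exact mul_ne_zero (ne_of_gt ht) hh0
  have h0notR : (0:ℝ) ∉ {x : ℝ | h.eval x = 0} := hh0
  have hrfin : {x : ℝ | h.eval x = 0}.Finite := by
    have := Polynomial.finite_setOf_isRoot hhne
    exact this
  -- counting
  have hγ' : {x : ℝ | h.eval x = 0}.ncard + m = γ := by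
    rw [← hγ, hrootsg]
    rcases hm01 with hm | hm
    · rw [hm, if_neg (by omega)]; simp
    · rw [hm, if_pos rfl, Set.ncard_insert_of_notMem h0notR hrfin]
  have hfinal : {x : ℝ | Polynomial.eval x (X ^ n + C t * g) = 0}.ncard =
      {x : ℝ | x^N + t * h.eval x = 0}.ncard + m := by
    rw [htarget]
    rcases hm01 with hm | hm
    · rw [hm, if_neg (by omega)]; simp
    · rw [hm, if_pos rfl, Set.ncard_insert_of_notMem h0notS hfin]
  rw [hfinal, hcount]
  have hNS : N - h.natDegree = n - s := by omega
  rw [hNS, hhlc]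
  -- final case analysis
  rcases lt_or_gt_of_ne hrs with hneg | hpos
  · have hns' : ¬ (0:ℝ) < r s := by linarith
    by_cases hodd : Odd (n - s)
    · simp only [if_pos hneg, if_neg hns', if_pos hodd]; rw [← hγ']; ring
    · simp only [if_pos hneg, if_neg hns', if_neg hodd]; rw [← hγ']; ring
  · have hns' : ¬ r s < 0 := by linarith
    by_cases hodd : Odd (n - s)
    · simp only [if_neg hns', if_pos hpos, if_pos hodd]; rw [← hγ']; ring
    · simp only [if_neg hns', if_pos hpos, if_neg hodd]; rw [← hγ']; ring

end Main
end

section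
/- Let N ≥ 0 be an integer and let k be an integer with 0 ≤ k ≤ ⌊N/2⌋. Then Σ_{j=k}^{⌊N/2⌋} C(N+1, 2j+1)·C(j, k) = 2^{N−2k}·C(N−k, k). -/
private def sA (n k : ℕ) : ℕ := ∑ j ∈ Finset.range n, n.choose (2*j+1) * j.choose k
private def eA (n k : ℕ) : ℕ := ∑ j ∈ Finset.range (n+1), n.choose (2*j) * j.choose k
private def tA (n k : ℕ) : ℕ := ∑ i ∈ Finset.range (n+1), n.choose (2*i+1) * (i+1).choose k

private lemma sA_ext (n k m : ℕ) (h : n ≤ m) :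
    ∑ j ∈ Finset.range m, n.choose (2*j+1) * j.choose k = sA n k := by
  rw [sA]
  symm
  apply Finset.sum_subset (Finset.range_subset_range.2 h)
  intro j _ hj
  simp only [Finset.mem_range, not_lt] at hj
  have : n < 2*j+1 := by omega
  simp [Nat.choose_eq_zero_of_lt this]

private lemma s_succ (n k : ℕ) : sA (n+1) k = eA n k + sA n k := by
  rw [sA, eA]
  have : ∀ j, (n+1).choose (2*j+1) = n.choose (2*j) + n.choose (2*j+1) :=
    fun j => Nat.choose_succ_succ n (2*j)
  simp only [this, add_mul, Finset.sum_add_distrib]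
  rw [sA_ext n k (n+1) (by omega)]

private lemma t_zero (n : ℕ) : tA n 0 = sA n 0 := by
  rw [tA, ← sA_ext n 0 (n+1) (by omega)]
  simp

private lemma t_succ (n k : ℕ) : tA n (k+1) = sA n (k+1) + sA n k := by
  rw [tA]
  have : ∀ i:ℕ, (i+1).choose (k+1) = i.choose k + i.choose (k+1) :=
    fun i => Nat.choose_succ_succ i k
  simp only [this, mul_add, Finset.sum_add_distrib]
  rw [sA_ext n k (n+1) (by omega), sA_ext n (k+1) (n+1) (by omega), add_comm]

private lemma e_succ (n k : ℕ) : eA (n+1) k = eA n k + tA n k := by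
  rw [eA, Finset.sum_range_succ' _ (n+1)]
  have h1 : ∀ i, (n+1).choose (2*(i+1)) = n.choose (2*i+1) + n.choose (2*i+2) := by
    intro i
    have : 2*(i+1) = (2*i+1)+1 := by ring
    rw [this]
    exact Nat.choose_succ_succ n (2*i+1)
  simp only [h1, add_mul, Finset.sum_add_distrib]
  have hz : ∑ j ∈ Finset.range (n+2), n.choose (2*j) * j.choose k = eA n k := by
    rw [Finset.sum_range_succ, eA]
    have : n.choose (2*(n+1)) = 0 := Nat.choose_eq_zero_of_lt (by omega)
    rw [this, zero_mul, add_zero]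
  have h2 : (∑ i ∈ Finset.range (n+1), n.choose (2*(i+1)) * (i+1).choose k)
      + n.choose (2*0) * Nat.choose 0 k = eA n k := by
    rw [← hz, Finset.sum_range_succ' (fun j => n.choose (2*j) * j.choose k) (n+1)]
  rw [tA]
  have h3 : ∀ i:ℕ, (2*i+2) = 2*(i+1) := by intro i; ring
  simp only [h3] at *
  simp only [Nat.mul_zero, Nat.choose_zero_right, one_mul] at *
  omega

private lemma AFk (m k : ℕ) :
    2^(m+2-2*(k+1)) * (m+2-(k+1)).choose (k+1)
      = 2*(2^(m+1-2*(k+1)) * (m+1-(k+1)).choose (k+1)) + 2^(m-2*k) * (m-k).choose k := by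
  rcases lt_trichotomy m (2*k+1) with h | h | h
  · -- m ≤ 2k : all three choose terms vanish... except m=2k case is h : m = 2k+1? no
    rcases Nat.eq_or_lt_of_le (Nat.lt_succ_iff.mp h) with h2 | h2
    · -- m = 2k
      subst h2
      have e1 : 2*k+2-2*(k+1) = 0 := by omega
      have e2 : 2*k+1-2*(k+1) = 0 := by omega
      have e3 : 2*k-2*k = 0 := by omega
      have e4 : 2*k+2-(k+1) = k+1 := by omega
      have e5 : 2*k+1-(k+1) = k := by omega
      have e6 : 2*k-k = k := by omega
      rw [e1,e2,e3,e4,e5,e6, Nat.choose_self, Nat.choose_self,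
        Nat.choose_eq_zero_of_lt (by omega)]
      ring
    · -- m < 2k
      have e1 : m+2-(k+1) < k+1 := by omega
      have e2 : m+1-(k+1) < k+1 := by omega
      have e3 : m-k < k := by omega
      rw [Nat.choose_eq_zero_of_lt e1, Nat.choose_eq_zero_of_lt e2,
        Nat.choose_eq_zero_of_lt e3]
      ring
  · -- m = 2k+1
    subst h
    have e1 : 2*k+1+2-2*(k+1) = 1 := by omega
    have e2 : 2*k+1+1-2*(k+1) = 0 := by omega
    have e3 : 2*k+1-2*k = 1 := by omega
    have e4 : 2*k+1+2-(k+1) = k+2 := by omega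
    have e5 : 2*k+1+1-(k+1) = k+1 := by omega
    have e6 : 2*k+1-k = k+1 := by omega
    rw [e1,e2,e3,e4,e5,e6, Nat.choose_succ_succ (k+1) k, Nat.choose_self]
    ring
  · -- m ≥ 2k+2
    obtain ⟨d, rfl⟩ : ∃ d, m = 2*k+2+d := ⟨m-(2*k+2), by omega⟩
    have e1 : 2*k+2+d+2-2*(k+1) = d+2 := by omega
    have e2 : 2*k+2+d+1-2*(k+1) = d+1 := by omega
    have e3 : 2*k+2+d-2*k = d+2 := by omega
    have e4 : 2*k+2+d+2-(k+1) = (k+d+2)+1 := by omega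
    have e5 : 2*k+2+d+1-(k+1) = k+d+2 := by omega
    have e6 : 2*k+2+d-k = k+d+2 := by omega
    rw [e1,e2,e3,e4,e5,e6, Nat.choose_succ_succ (k+d+2) k, pow_succ]
    ring

private lemma s_closed : ∀ n k : ℕ, sA (n+1) k = 2^(n-2*k) * (n-k).choose k := by
  intro n
  induction n using Nat.strong_induction_on with
  | _ n ih =>
    match n with
    | 0 =>
      intro k
      simp [sA, Nat.zero_sub]
    | 1 =>
      intro k
      have : sA 2 k = 2 * Nat.choose 0 k := by
        simp [sA, Finset.sum_range_succ]
      rw [this]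
      cases k with
      | zero => norm_num
      | succ k => simp [Nat.choose_eq_zero_of_lt (Nat.succ_pos k), show 1-(k+1)=0 by omega]
    | (m+2) =>
      intro k
      have h1 : sA (m+2) k = 2^(m+1-2*k) * (m+1-k).choose k := ih (m+1) (by omega) k
      have h0 : sA (m+1) k = 2^(m-2*k) * (m-k).choose k := ih m (by omega) k
      have hs3 : sA (m+2+1) k = eA (m+2) k + sA (m+2) k := s_succ (m+2) k
      have he2 : eA (m+2) k = eA (m+1) k + tA (m+1) k := e_succ (m+1) k
      have hes : sA (m+2) k = eA (m+1) k + sA (m+1) k := s_succ (m+1) k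
      cases k with
      | zero =>
        have ht : tA (m+1) 0 = sA (m+1) 0 := t_zero (m+1)
        simp only [Nat.mul_zero, Nat.sub_zero, Nat.choose_zero_right, mul_one] at *
        have hA : (2:ℕ)^(m+2) = 2 * 2^(m+1) := by ring
        omega
      | succ k =>
        have h0' : sA (m+1) k = 2^(m-2*k) * (m-k).choose k := ih m (by omega) k
        have ht : tA (m+1) (k+1) = sA (m+1) (k+1) + sA (m+1) k := t_succ (m+1) k
        have hA := AFk m k
        omega

theorem sum_choose_odd_mul_choose (N k : ℕ) (hk : k ≤ N / 2) :
    ∑ j ∈ Finset.Icc k (N / 2), (N + 1).choose (2 * j + 1) * j.choose k =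
      2 ^ (N - 2 * k) * (N - k).choose k := by
  rw [← s_closed N k, sA]
  apply Finset.sum_subset
  · intro j hj
    simp only [Finset.mem_Icc] at hj
    simp only [Finset.mem_range]
    omega
  · intro j hj hj2
    simp only [Finset.mem_range] at hj
    simp only [Finset.mem_Icc, not_and_or, not_le] at hj2
    rcases hj2 with h | h
    · rw [Nat.choose_eq_zero_of_lt h, mul_zero]
    · have : N + 1 < 2*j+1 := by omega
      rw [Nat.choose_eq_zero_of_lt this, zero_mul]
end

section
/- Let N ≥ 0 be an integer and let k be an integer with 0 ≤ k ≤ ⌈N/2⌉. Then Σ_{j=k}^{⌈N/2⌉} C(N+1, 2j)·C(j, k) = 2^{N−2k}·[ 2·C(N+1−k, k) − C(N−k, k) ] = 2^{N−2k}·[ C(N+1−k, k) + C(N−k, k−1) ]. -/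
noncomputable def Esum (n k : ℕ) : ℝ := ∑ j ∈ Finset.range (n+1), ((n.choose (2*j) : ℝ) * (j.choose k : ℝ))
noncomputable def Osum (n k : ℕ) : ℝ := ∑ j ∈ Finset.range (n+1), ((n.choose (2*j+1) : ℝ) * (j.choose k : ℝ))


lemma Osum_succ (n k : ℕ) : Osum (n+1) k = Osum n k + Esum n k := by
  unfold Osum Esum
  rw [Finset.sum_range_succ]
  have h1 : (n+1).choose (2*(n+1)+1) = 0 := Nat.choose_eq_zero_of_lt (by omega)
  rw [h1]
  have h2 : ∀ j ∈ Finset.range (n+1),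
      ((n+1).choose (2*j+1) : ℝ) * (j.choose k : ℝ)
        = (n.choose (2*j+1) : ℝ) * (j.choose k : ℝ) + (n.choose (2*j) : ℝ) * (j.choose k : ℝ) := by
    intro j _
    have : (n+1).choose (2*j+1) = n.choose (2*j) + n.choose (2*j+1) := Nat.choose_succ_succ n (2*j)
    rw [this]; push_cast; ring
  rw [Finset.sum_congr rfl h2, Finset.sum_add_distrib]
  ring

lemma Esum_succ (n k : ℕ) :
    Esum (n+1) k = Esum n k + Osum n k + (if k = 0 then 0 else Osum n (k-1)) := by
  unfold Esum Osum
  rw [Finset.sum_range_succ' (fun j => ((n+1).choose (2*j) : ℝ) * (j.choose k : ℝ)) (n+1)]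
  have h2 : ∀ j ∈ Finset.range (n+1),
      ((n+1).choose (2*(j+1)) : ℝ) * ((j+1).choose k : ℝ)
        = (n.choose (2*j+1) : ℝ) * ((j+1).choose k : ℝ)
          + (n.choose (2*(j+1)) : ℝ) * ((j+1).choose k : ℝ) := by
    intro j _
    have h : (n+1).choose (2*(j+1)) = n.choose (2*j+1) + n.choose (2*j+2) :=
      Nat.choose_succ_succ n (2*j+1)
    rw [show 2*(j+1) = 2*j+2 by ring] at h ⊢
    rw [h]; push_cast; ring
  rw [Finset.sum_congr rfl h2, Finset.sum_add_distrib]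
  -- second sum: ∑_{i<n+1} C(n,2(i+1)) C(i+1,k) = Esum n k - δ_{k0}
  have hsecond : (∑ j ∈ Finset.range (n+1), (n.choose (2*(j+1)) : ℝ) * ((j+1).choose k : ℝ))
      = (∑ j ∈ Finset.range (n+1), (n.choose (2*j) : ℝ) * (j.choose k : ℝ))
        - ((n.choose 0 : ℝ) * ((0:ℕ).choose k : ℝ)) := by
    have := Finset.sum_range_succ' (fun j => (n.choose (2*j) : ℝ) * (j.choose k : ℝ)) (n+1)
    rw [Finset.sum_range_succ (fun j => (n.choose (2*j) : ℝ) * (j.choose k : ℝ)) (n+1)] at this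
    have hz : n.choose (2*(n+1)) = 0 := Nat.choose_eq_zero_of_lt (by omega)
    rw [hz] at this
    push_cast at this
    linarith [this]
  rw [hsecond]
  -- first sum: split on k
  rcases k with _ | m
  · simp [Nat.choose_zero_right]
    ring
  · have hfirst : ∀ j ∈ Finset.range (n+1),
        (n.choose (2*j+1) : ℝ) * ((j+1).choose (m+1) : ℝ)
          = (n.choose (2*j+1) : ℝ) * (j.choose (m+1) : ℝ)
            + (n.choose (2*j+1) : ℝ) * (j.choose m : ℝ) := by
      intro j _
      rw [Nat.choose_succ_succ j m]; push_cast; ring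
    rw [Finset.sum_congr rfl hfirst, Finset.sum_add_distrib]
    have : (0:ℕ).choose (m+1) = 0 := by simp
    rw [this]
    simp only [Nat.succ_ne_zero, if_false, Nat.add_sub_cancel]
    push_cast
    ring

lemma main_lemma : ∀ n : ℕ, ∀ k : ℕ, 2*k ≤ n+1 →
    Esum (n+1) k = (2:ℝ)^((n:ℤ) - 2*k) * (2*(((n+1-k).choose k : ℕ) : ℝ) - (((n-k).choose k : ℕ) : ℝ))
    ∧ Osum (n+1) k = (2:ℝ)^((n:ℤ) - 2*k) * (((n-k).choose k : ℕ) : ℝ) := by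
  intro n
  induction n with
  | zero =>
    intro k hk
    have hk0 : k = 0 := by omega
    subst hk0
    constructor <;> simp [Esum, Osum, Finset.sum_range_succ, show Nat.choose 1 3 = 0 from rfl] <;> norm_num
  | succ n ih =>
    intro k hk
    rcases Nat.lt_or_ge (2*k) (n+2) with h | h
    · -- 2k ≤ n+1
      have h1 : 2*k ≤ n+1 := by omega
      obtain ⟨hE, hO⟩ := ih k h1
      have hpow : (2:ℝ)^(((n+1:ℕ):ℤ) - 2*k) = 2 * (2:ℝ)^((n:ℤ)-2*k) := by
        rw [show ((n+1:ℕ):ℤ) - 2*k = ((n:ℤ)-2*k)+1 by push_cast; ring,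
          zpow_add_one₀ (by norm_num : (2:ℝ) ≠ 0)]
        ring
      have e1 : n+1+1-k = (n+1-k)+1 := by omega
      constructor
      · rw [Esum_succ]
        rcases k with _ | m
        · rw [hE, hO]
          simp only [if_true, Nat.sub_zero, Nat.choose_zero_right, Nat.cast_one, Nat.mul_zero,
            Nat.cast_ofNat]
          rw [hpow]
          push_cast
          ring
        · obtain ⟨_, hOm⟩ := ih m (by omega)
          rw [hE, hO, if_neg (Nat.succ_ne_zero m), Nat.add_sub_cancel, hOm]
          have e2 : n+1-(m+1) = n-m := by omega
          have e3 : n-(m+1) = n-m-1 := by omega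
          have e4 : n+1+1-(m+1) = (n-m)+1 := by omega
          rw [e2, e3, e4]
          have hpas : ((n-m)+1).choose (m+1) = (n-m).choose m + (n-m).choose (m+1) :=
            Nat.choose_succ_succ (n-m) m
          have hpow2 : (2:ℝ)^((n:ℤ) - 2*m) = 4 * (2:ℝ)^((n:ℤ)-2*(m+1)) := by
            rw [show (n:ℤ) - 2*m = ((n:ℤ)-2*(m+1))+2 by ring,
              zpow_add₀ (by norm_num : (2:ℝ) ≠ 0)]
            norm_num
            ring
          rw [hpas, hpow, hpow2]
          push_cast
          ring
      · rw [Osum_succ, hE, hO, hpow]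
        ring
    · -- 2k = n+2
      have h2 : 2*k = n+2 := by omega
      obtain ⟨m, rfl⟩ : ∃ m, k = m+1 := ⟨k-1, by omega⟩
      have hn : n = 2*m := by omega
      subst hn
      have he : ((2*m+1:ℕ):ℤ) - 2*((m+1:ℕ):ℤ) = -1 := by push_cast; ring
      constructor
      · unfold Esum
        rw [Finset.sum_eq_single_of_mem (m+1) (Finset.mem_range.2 (by omega))]
        · rw [show 2*(m+1) = 2*m+1+1 by ring, Nat.choose_self, Nat.choose_self]
          rw [show 2*m+1+1-(m+1) = m+1 by omega, show 2*m+1-(m+1) = m by omega,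
            Nat.choose_self, Nat.choose_eq_zero_of_lt (by omega : m < m+1)]
          rw [he]
          norm_num
        · intro b _ hb
          rcases Nat.lt_or_ge b (m+1) with hlt | hge
          · rw [Nat.choose_eq_zero_of_lt hlt]
            simp
          · rw [Nat.choose_eq_zero_of_lt (show 2*m+1+1 < 2*b by omega)]
            simp
      · unfold Osum
        rw [Finset.sum_eq_zero, he]
        · rw [show 2*m+1-(m+1) = m by omega, Nat.choose_eq_zero_of_lt (by omega : m < m+1)]
          norm_num
        · intro b _
          rcases Nat.lt_or_ge b (m+1) with hlt | hge
          · rw [Nat.choose_eq_zero_of_lt hlt]; simp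
          · rw [Nat.choose_eq_zero_of_lt (show 2*m+1+1 < 2*b+1 by omega)]; simp


open Classical in
theorem sum_choose_even_mul_choose (N k : ℕ) (hk : k ≤ (N + 1) / 2) :
    (∑ j ∈ Finset.Icc k ((N + 1) / 2), ((N + 1).choose (2 * j) * j.choose k : ℝ)) =
        (2 : ℝ) ^ ((N : ℤ) - 2 * k) *
          (2 * ((N + 1 - k).choose k : ℝ) - ((N - k).choose k : ℝ)) ∧
      (∑ j ∈ Finset.Icc k ((N + 1) / 2), ((N + 1).choose (2 * j) * j.choose k : ℝ)) =
        (2 : ℝ) ^ ((N : ℤ) - 2 * k) *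
          (((N + 1 - k).choose k : ℝ) +
            (if k = 0 then 0 else ((N - k).choose (k - 1) : ℝ))) := by
  have h2k : 2 * k ≤ N + 1 := by omega
  obtain ⟨hE, -⟩ := main_lemma N k h2k
  have hsub : Finset.Icc k ((N+1)/2) ⊆ Finset.range (N+1+1) := by
    intro x hx
    rw [Finset.mem_range]
    have := (Finset.mem_Icc.1 hx).2
    omega
  have hzero : ∀ x ∈ Finset.range (N+1+1), x ∉ Finset.Icc k ((N+1)/2) →
      ((N+1).choose (2*x) : ℝ) * (x.choose k : ℝ) = 0 := by
    intro x _ hx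
    rw [Finset.mem_Icc] at hx
    push_neg at hx
    rcases Nat.lt_or_ge x k with hlt | hge
    · rw [Nat.choose_eq_zero_of_lt hlt]; simp
    · have hx2 : (N+1)/2 < x := hx hge
      rw [Nat.choose_eq_zero_of_lt (show N+1 < 2*x by omega)]; simp
  have hsum : (∑ j ∈ Finset.Icc k ((N + 1) / 2), ((N + 1).choose (2 * j) * j.choose k : ℝ))
      = Esum (N+1) k := by
    unfold Esum
    rw [← Finset.sum_subset hsub hzero]
  constructor
  · rw [hsum, hE]
  · rw [hsum, hE]
    congr 1
    rcases k with _ | m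
    · norm_num
    · rw [if_neg (Nat.succ_ne_zero m), Nat.add_sub_cancel]
      rw [show N+1-(m+1) = (N-(m+1))+1 by omega, Nat.choose_succ_succ (N-(m+1)) m]
      push_cast
      ring
end

section
/- Let n ≥ 5 be an integer, let a, b, t be real numbers with a ≠ 0, and define the sequence (u_m) by u₀ = 0, u₁ = (n−2)t, and u_{m+2} = −((n−1)a/(n−2))·u_{m+1} − (nb/(n−2))·u_m for m ≥ 0. Set m₀ = ⌊(n−3)/2⌋ and, for 0 ≤ k ≤ m₀, S_k = (n−1)³·C(n−k−3,k)·a⁴ − [n(n−1)(5n² − (6k+23)n + 10k + 24)/(n−k−3)]·C(n−k−3,k)·a²b + 4n²(n−2)·C(n−k−4,k)·b². Then [ 2nb²·u_{n−3}/(n−2) + ((n−1)a² − 2nb)·u_{n−1}/n + 2ab·u_{n−2} ]·t² = Σ_{k=0}^{m₀} (−1)^{n+k} n^k (n−1)^{n−2k−4} (n−2)^k a^{n−2k−4} b^k S_k · t³ / ( n (n−2)^{n−3} ). -/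
open Finset

private lemma neg_one_pow_eq (i j : ℕ) (h : i % 2 = j % 2) : (-1:ℝ)^i = (-1:ℝ)^j := by
  conv_lhs => rw [← Nat.div_add_mod i 2]
  conv_rhs => rw [← Nat.div_add_mod j 2]
  rw [pow_add, pow_add, pow_mul, pow_mul, neg_one_sq, one_pow, one_pow, h]

private lemma zpow_sub_two (x : ℝ) (hx : x ≠ 0) (k : ℕ) : x ^ ((k:ℤ) - 2) = x^k / x^2 := by
  rw [zpow_sub₀ hx, zpow_natCast, show (2:ℤ) = ((2:ℕ):ℤ) from rfl, zpow_natCast]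

private lemma zpow_sub_one' (x : ℝ) (hx : x ≠ 0) (k : ℕ) : x ^ ((k:ℤ) - 1) = x^k / x := by
  rw [zpow_sub₀ hx, zpow_natCast, zpow_one]

private lemma negdivpow (x z y : ℝ) (e : ℕ) : (-(x*z/y))^e = (-1)^e * x^e * z^e / y^e := by
  rw [neg_pow, div_pow, mul_pow]; ring

private noncomputable def gterm (A B : ℝ) (m j : ℕ) : ℝ :=
  ((m - 1 - j).choose j : ℝ) * A ^ (m - 1 - 2*j) * B ^ j

private noncomputable def Xf (n k : ℕ) (a b t : ℝ) : ℝ :=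
  (-1 : ℝ) ^ (n + k) * (n : ℝ) ^ k * ((n : ℝ) - 1) ^ ((n : ℤ) - 2 * k - 4) *
    ((n : ℝ) - 2) ^ k * a ^ ((n : ℤ) - 2 * k - 4) * b ^ k *
    (((n : ℝ) - 1) ^ 3 * ((n - k - 3).choose k : ℝ) * a ^ 4) *
    t ^ 3 / ((n : ℝ) * ((n : ℝ) - 2) ^ (n - 3))

private noncomputable def Yf (n k : ℕ) (a b t : ℝ) : ℝ :=
  (-1 : ℝ) ^ (n + k) * (n : ℝ) ^ k * ((n : ℝ) - 1) ^ ((n : ℤ) - 2 * k - 4) *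
    ((n : ℝ) - 2) ^ k * a ^ ((n : ℤ) - 2 * k - 4) * b ^ k *
    (-(((n : ℝ) * ((n : ℝ) - 1) *
          (5 * (n : ℝ) ^ 2 - (6 * (k : ℝ) + 23) * (n : ℝ) + 10 * (k : ℝ) + 24) /
        ((n : ℝ) - (k : ℝ) - 3)) * ((n - k - 3).choose k : ℝ) * a ^ 2 * b)) *
    t ^ 3 / ((n : ℝ) * ((n : ℝ) - 2) ^ (n - 3))

private noncomputable def Zf (n k : ℕ) (a b t : ℝ) : ℝ :=
  (-1 : ℝ) ^ (n + k) * (n : ℝ) ^ k * ((n : ℝ) - 1) ^ ((n : ℤ) - 2 * k - 4) *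
    ((n : ℝ) - 2) ^ k * a ^ ((n : ℤ) - 2 * k - 4) * b ^ k *
    (4 * (n : ℝ) ^ 2 * ((n : ℝ) - 2) * ((n - k - 4).choose k : ℝ) * b ^ 2) *
    t ^ 3 / ((n : ℝ) * ((n : ℝ) - 2) ^ (n - 3))

private lemma gterm_zero (A B : ℝ) (m j : ℕ) (h : m - 1 - j < j) : gterm A B m j = 0 := by
  unfold gterm; rw [Nat.choose_eq_zero_of_lt h]; push_cast; ring

private lemma gterm_rec (A B : ℝ) (m j : ℕ) :
    gterm A B (m+3) (j+1) = A * gterm A B (m+2) (j+1) + B * gterm A B (m+1) j := by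
  unfold gterm
  rcases Nat.lt_or_ge m (2*j) with h | h
  · rw [Nat.choose_eq_zero_of_lt (show m+3-1-(j+1) < j+1 by omega),
      Nat.choose_eq_zero_of_lt (show m+2-1-(j+1) < j+1 by omega),
      Nat.choose_eq_zero_of_lt (show m+1-1-j < j by omega)]
    push_cast; ring
  · obtain ⟨e, rfl⟩ : ∃ e, m = 2*j + e := ⟨m - 2*j, by omega⟩
    rcases e with _ | e
    · rw [show 2*j+0+3-1-(j+1) = j+1 by omega, show 2*j+0+3-1-2*(j+1) = 0 by omega,
        show 2*j+0+2-1-(j+1) = j by omega, show 2*j+0+1-1-j = j by omega,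
        show 2*j+0+1-1-2*j = 0 by omega, Nat.choose_self,
        Nat.choose_succ_self, Nat.choose_self]
      push_cast; ring
    · rw [show 2*j+(e+1)+3-1-(j+1) = (j+e+1)+1 by omega,
        show 2*j+(e+1)+3-1-2*(j+1) = e+1 by omega,
        show 2*j+(e+1)+2-1-(j+1) = j+e+1 by omega,
        show 2*j+(e+1)+2-1-2*(j+1) = e by omega,
        show 2*j+(e+1)+1-1-j = j+e+1 by omega,
        show 2*j+(e+1)+1-1-2*j = e+1 by omega,
        Nat.choose_succ_succ (j+e+1) j]
      push_cast; ring

private lemma gterm_head (A B : ℝ) (m : ℕ) : gterm A B (m+3) 0 = A * gterm A B (m+2) 0 := by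
  unfold gterm
  rw [show m+3-1-0 = m+2 by omega, show m+2-1-0 = m+1 by omega]
  simp [pow_succ]; ring

private lemma gsum_rec (A B : ℝ) (m N : ℕ) (hN : 1 ≤ N) (h0 : gterm A B (m+1) (N-1) = 0) :
    ∑ j ∈ range N, gterm A B (m+3) j
      = A * ∑ j ∈ range N, gterm A B (m+2) j + B * ∑ j ∈ range N, gterm A B (m+1) j := by
  obtain ⟨N, rfl⟩ : ∃ N', N = N' + 1 := ⟨N - 1, by omega⟩
  simp only [Nat.add_sub_cancel] at h0
  rw [Finset.sum_range_succ' (fun j => gterm A B (m+3) j) N]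
  calc (∑ j ∈ range N, gterm A B (m+3) (j+1)) + gterm A B (m+3) 0
      = (∑ j ∈ range N, (A * gterm A B (m+2) (j+1) + B * gterm A B (m+1) j))
          + A * gterm A B (m+2) 0 := by
        rw [gterm_head]
        congr 1
        exact Finset.sum_congr rfl fun j _ => gterm_rec A B m j
    _ = A * ((∑ j ∈ range N, gterm A B (m+2) (j+1)) + gterm A B (m+2) 0)
          + B * ∑ j ∈ range N, gterm A B (m+1) j := by
        rw [Finset.sum_add_distrib, ← Finset.mul_sum, ← Finset.mul_sum]; ring
    _ = A * ∑ j ∈ range (N+1), gterm A B (m+2) j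
          + B * ∑ j ∈ range (N+1), gterm A B (m+1) j := by
        rw [← Finset.sum_range_succ' (fun j => gterm A B (m+2) j) N,
          Finset.sum_range_succ (fun j => gterm A B (m+1) j) N, h0, add_zero]
set_option maxHeartbeats 3200000 in
private lemma perk_main (n k : ℕ) (hn : 5 ≤ n) (a b t : ℝ) (ha : a ≠ 0) :
    (((n:ℝ)-2)*(((n:ℝ)-1)*a^2)*t^3/(n:ℝ)) *
        gterm (-(((n:ℝ)-1)*a/((n:ℝ)-2))) (-((n:ℝ)*b/((n:ℝ)-2))) (n-1) (k+2)
      + (-(2*b*((n:ℝ)-2)*t^3)) *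
        gterm (-(((n:ℝ)-1)*a/((n:ℝ)-2))) (-((n:ℝ)*b/((n:ℝ)-2))) (n-1) (k+1)
      + (2*a*b*((n:ℝ)-2)*t^3) *
        gterm (-(((n:ℝ)-1)*a/((n:ℝ)-2))) (-((n:ℝ)*b/((n:ℝ)-2))) (n-2) (k+1)
      + (2*(n:ℝ)*b^2*t^3) *
        gterm (-(((n:ℝ)-1)*a/((n:ℝ)-2))) (-((n:ℝ)*b/((n:ℝ)-2))) (n-3) k
    = Xf n (k+2) a b t + Yf n (k+1) a b t + Zf n k a b t := by
  unfold gterm Xf Yf Zf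
  by_cases hc : 2*k+4 ≤ n
  · obtain ⟨r, rfl⟩ : ∃ r, n = 2*k+4+r := ⟨n - (2*k+4), by omega⟩
    rcases Nat.lt_or_ge r 2 with hr | hr
    · interval_cases r
      · rw [Nat.choose_eq_zero_of_lt (show 2*k+4+0-1-1-(k+2) < k+2 by omega),
          Nat.choose_eq_zero_of_lt (show 2*k+4+0-2-1-(k+1) < k+1 by omega),
          Nat.choose_eq_zero_of_lt (show 2*k+4+0-(k+2)-3 < k+2 by omega),
          Nat.choose_eq_zero_of_lt (show 2*k+4+0-(k+1)-3 < k+1 by omega),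
          show 2*k+4+0-1-1-(k+1) = k+1 by omega,
          show 2*k+4+0-1-1-2*(k+1) = 0 by omega,
          show 2*k+4+0-3-1-k = k by omega,
          show 2*k+4+0-3-1-2*k = 0 by omega,
          show 2*k+4+0-k-4 = k by omega,
          show 2*k+4+0-3 = k+k+1 by omega,
          Nat.choose_self, Nat.choose_self,
          show ((2*k+4+0:ℕ):ℤ) - 2*((k:ℕ):ℤ) - 4 = (0:ℤ) from by push_cast; ring,
          zpow_zero, zpow_zero,
          neg_one_pow_eq (2*k+4+0+(k+1)) (k+1) (by omega),
          neg_one_pow_eq (2*k+4+0+k) k (by omega)]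
        push_cast
        rw [show 2*(k:ℝ)+4+0 = 2*(k:ℝ)+4 by ring]
        rw [show 2*(k:ℝ)+4-1 = 2*(k:ℝ)+3 by ring, show 2*(k:ℝ)+4-2 = 2*(k:ℝ)+2 by ring]
        simp only [negdivpow, pow_add, pow_zero, pow_one, one_mul, mul_one, Nat.cast_one]
        have e2 : (0:ℝ) < 2*(k:ℝ)+2 := by positivity
        have e4 : (0:ℝ) < 2*(k:ℝ)+4 := by positivity
        have nX2 : (2*(k:ℝ)+2)^k ≠ 0 := pow_ne_zero _ (ne_of_gt e2)
        generalize (2*(k:ℝ)+2)^k = X2 at nX2 ⊢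
        generalize (2*(k:ℝ)+4)^k = X4
        generalize (-1:ℝ)^k = M1
        generalize b^k = Bk
        field_simp
        ring
      · rw [Nat.choose_eq_zero_of_lt (show 2*k+4+1-1-1-(k+2) < k+2 by omega),
          Nat.choose_eq_zero_of_lt (show 2*k+4+1-(k+2)-3 < k+2 by omega),
          show 2*k+4+1-1-1-(k+1) = (k+1)+1 by omega,
          show 2*k+4+1-1-1-2*(k+1) = 1 by omega,
          show 2*k+4+1-2-1-(k+1) = k+1 by omega,
          show 2*k+4+1-2-1-2*(k+1) = 0 by omega,
          show 2*k+4+1-3-1-k = k+1 by omega,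
          show 2*k+4+1-3-1-2*k = 1 by omega,
          show 2*k+4+1-(k+1)-3 = k+1 by omega,
          show 2*k+4+1-k-4 = k+1 by omega,
          show 2*k+4+1-3 = k+k+2 by omega,
          Nat.choose_succ_self_right, Nat.choose_self, Nat.choose_succ_self_right,
          show ((2*k+4+1:ℕ):ℤ) - 2*((k+1:ℕ):ℤ) - 4 = (-1:ℤ) from by push_cast; ring,
          show ((2*k+4+1:ℕ):ℤ) - 2*((k:ℕ):ℤ) - 4 = (1:ℤ) from by push_cast; ring,
          zpow_neg_one, zpow_neg_one, zpow_one, zpow_one,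
          neg_one_pow_eq (2*k+4+1+(k+1)) k (by omega),
          neg_one_pow_eq (2*k+4+1+k) (k+1) (by omega)]
        push_cast
        rw [show 2*(k:ℝ)+4+1 = 2*(k:ℝ)+5 by ring]
        rw [show 2*(k:ℝ)+5-1 = 2*(k:ℝ)+4 by ring, show 2*(k:ℝ)+5-2 = 2*(k:ℝ)+3 by ring,
          show 2*(k:ℝ)+5-((k:ℝ)+1)-3 = (k:ℝ)+1 by ring]
        simp only [negdivpow, pow_add, pow_zero, pow_one, one_mul, mul_one, Nat.cast_one]
        have e3 : (0:ℝ) < 2*(k:ℝ)+3 := by positivity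
        have e5 : (0:ℝ) < 2*(k:ℝ)+5 := by positivity
        have e4 : (0:ℝ) < 2*(k:ℝ)+4 := by positivity
        have e1 : (0:ℝ) < (k:ℝ)+1 := by positivity
        have nX3 : (2*(k:ℝ)+3)^k ≠ 0 := pow_ne_zero _ (ne_of_gt e3)
        generalize (2*(k:ℝ)+3)^k = X3 at nX3 ⊢
        generalize (2*(k:ℝ)+5)^k = X5
        generalize (2*(k:ℝ)+4)^k = X4
        generalize (-1:ℝ)^k = M1
        generalize b^k = Bk
        field_simp
        ring
    · obtain ⟨s, rfl⟩ : ∃ s, r = s + 2 := ⟨r - 2, by omega⟩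
      rw [show 2*k+4+(s+2)-1-1-(k+2) = k+s+2 by omega,
        show 2*k+4+(s+2)-1-1-2*(k+2) = s by omega,
        show 2*k+4+(s+2)-1-1-(k+1) = k+s+3 by omega,
        show 2*k+4+(s+2)-1-1-2*(k+1) = s+2 by omega,
        show 2*k+4+(s+2)-2-1-(k+1) = k+s+2 by omega,
        show 2*k+4+(s+2)-2-1-2*(k+1) = s+1 by omega,
        show 2*k+4+(s+2)-3-1-k = k+s+2 by omega,
        show 2*k+4+(s+2)-3-1-2*k = s+2 by omega,
        show 2*k+4+(s+2)-(k+2)-3 = k+s+1 by omega,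
        show 2*k+4+(s+2)-(k+1)-3 = k+s+2 by omega,
        show 2*k+4+(s+2)-k-4 = k+s+2 by omega,
        show 2*k+4+(s+2)-3 = 2*k+3+s by omega]
      have hP1 : (k+s+2).choose (k+2) = (k+s+1).choose (k+1) + (k+s+1).choose (k+2) :=
        Nat.choose_succ_succ (k+s+1) (k+1)
      have hP2 : (k+s+3).choose (k+1) = (k+s+2).choose k + (k+s+2).choose (k+1) :=
        Nat.choose_succ_succ (k+s+2) k
      rw [hP1, hP2]
      have hk0 : (0:ℝ) ≤ (k:ℝ) := Nat.cast_nonneg k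
      have hs0 : (0:ℝ) ≤ (s:ℝ) := Nat.cast_nonneg s
      have hP3 : ((k+s+1).choose (k+1) : ℝ) * ((k:ℝ)+(s:ℝ)+2)
          = ((k+s+2).choose (k+1) : ℝ) * ((s:ℝ)+1) := by
        have h := Nat.choose_mul_succ_eq (k+s+1) (k+1)
        rw [show k+s+1+1 = k+s+2 from rfl, show k+s+2-(k+1) = s+1 by omega] at h
        exact_mod_cast h
      have hq : ((k+s+1).choose (k+1) : ℝ)
          = ((k+s+2).choose (k+1) : ℝ) * ((s:ℝ)+1) / ((k:ℝ)+(s:ℝ)+2) := by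
        rw [eq_div_iff (by positivity)]; exact hP3
      have hz1 : ((2*k+4+(s+2):ℕ):ℤ) - 2*((k+2:ℕ):ℤ) - 4 = ((s:ℕ):ℤ) - 2 := by push_cast; ring
      have hz2 : ((2*k+4+(s+2):ℕ):ℤ) - 2*((k+1:ℕ):ℤ) - 4 = ((s:ℕ):ℤ) := by push_cast; ring
      have hz3 : ((2*k+4+(s+2):ℕ):ℤ) - 2*((k:ℕ):ℤ) - 4 = ((s+2:ℕ):ℤ) := by push_cast; ring
      have hne1 : ((2*k+4+(s+2):ℕ):ℝ) - 1 ≠ 0 := by push_cast; intro h; linarith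
      have hne2 : ((2*k+4+(s+2):ℕ):ℝ) - 2 ≠ 0 := by push_cast; intro h; linarith
      have hne0 : ((2*k+4+(s+2):ℕ):ℝ) ≠ 0 := by push_cast; intro h; linarith
      rw [hz1, hz2, hz3, zpow_sub_two _ hne1 s, zpow_sub_two a ha s]
      simp only [zpow_natCast]
      push_cast
      rw [show 2*(k:ℝ)+4+((s:ℝ)+2) = 2*(k:ℝ)+(s:ℝ)+6 by ring]
      rw [show 2*(k:ℝ)+(s:ℝ)+6-1 = 2*(k:ℝ)+(s:ℝ)+5 by ring,
        show 2*(k:ℝ)+(s:ℝ)+6-2 = 2*(k:ℝ)+(s:ℝ)+4 by ring,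
        show 2*(k:ℝ)+(s:ℝ)+6-((k:ℝ)+1)-3 = (k:ℝ)+(s:ℝ)+2 by ring]
      rw [neg_one_pow_eq (2*k+4+(s+2)+(k+2)) (k+s) (by omega),
        neg_one_pow_eq (2*k+4+(s+2)+(k+1)) (k+s+1) (by omega),
        neg_one_pow_eq (2*k+4+(s+2)+k) (k+s) (by omega)]
      simp only [negdivpow]
      rw [hq, show 2*k+3+s = k+k+s+3 by omega]
      simp only [pow_add]
      have e6 : (0:ℝ) < 2*(k:ℝ)+(s:ℝ)+6 := by positivity
      have e5 : (0:ℝ) < 2*(k:ℝ)+(s:ℝ)+5 := by positivity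
      have e4 : (0:ℝ) < 2*(k:ℝ)+(s:ℝ)+4 := by positivity
      have e2 : (0:ℝ) < (k:ℝ)+(s:ℝ)+2 := by positivity
      have nN2k0 : (2*(k:ℝ)+(s:ℝ)+4)^k ≠ 0 := pow_ne_zero _ (ne_of_gt e4)
      have nN2s0 : (2*(k:ℝ)+(s:ℝ)+4)^s ≠ 0 := pow_ne_zero _ (ne_of_gt e4)
      generalize hN2k : (2*(k:ℝ)+(s:ℝ)+4)^k = N2k at nN2k0 ⊢
      generalize hN2s : (2*(k:ℝ)+(s:ℝ)+4)^s = N2s at nN2s0 ⊢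
      generalize hN1s : (2*(k:ℝ)+(s:ℝ)+5)^s = N1s
      generalize hNk : (2*(k:ℝ)+(s:ℝ)+6)^k = Nk
      generalize hAs : a^s = As
      generalize hBk : b^k = Bk
      have h6 : (2*(k:ℝ)+(s:ℝ)+6) ≠ 0 := ne_of_gt e6
      have h5 : (2*(k:ℝ)+(s:ℝ)+5) ≠ 0 := ne_of_gt e5
      have h4 : (2*(k:ℝ)+(s:ℝ)+4) ≠ 0 := ne_of_gt e4
      have h2 : ((k:ℝ)+(s:ℝ)+2) ≠ 0 := ne_of_gt e2
      have hT1 : (2*(k:ℝ)+(s:ℝ)+4)*((2*(k:ℝ)+(s:ℝ)+5)*a^2)*t^3/(2*(k:ℝ)+(s:ℝ)+6) * ((((k+s+2).choose (k+1) : ℝ)*((s:ℝ)+1)/((k:ℝ)+(s:ℝ)+2) + ((k+s+1).choose (k+2) : ℝ)) * ((-1:ℝ)^s*N1s*As/N2s) * ((-1:ℝ)^k*(-1:ℝ)^2*(Nk*(2*(k:ℝ)+(s:ℝ)+6)^2)*(Bk*b^2)/(N2k*(2*(k:ℝ)+(s:ℝ)+4)^2))) = (((-1:ℝ)^k*(-1:ℝ)^s)*(Nk*N1s*As*Bk*N2k)*t^3*a^4*b^2*(2*(k:ℝ)+(s:ℝ)+6)^2*(2*(k:ℝ)+(s:ℝ)+4)^2*(2*(k:ℝ)+(s:ℝ)+5)^3*(((k+s+2).choose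 (k+1) : ℝ)*((s:ℝ)+1)+((k+s+1).choose (k+2) : ℝ)*((k:ℝ)+(s:ℝ)+2))) / ((2*(k:ℝ)+(s:ℝ)+6)*(2*(k:ℝ)+(s:ℝ)+4)^3*((k:ℝ)+(s:ℝ)+2)*(2*(k:ℝ)+(s:ℝ)+5)^2*a^2*N2k^2*N2s) := by
        field_simp
      have hT2 : -(2*b*(2*(k:ℝ)+(s:ℝ)+4)*t^3) * ((((k+s+2).choose k : ℝ) + ((k+s+2).choose (k+1) : ℝ)) * ((-1:ℝ)^s*(-1:ℝ)^2*(N1s*(2*(k:ℝ)+(s:ℝ)+5)^2)*(As*a^2)/(N2s*(2*(k:ℝ)+(s:ℝ)+4)^2)) * ((-1:ℝ)^k*(-1:ℝ)^1*(Nk*(2*(k:ℝ)+(s:ℝ)+6)^1)*(Bk*b^1)/(N2k*(2*(k:ℝ)+(s:ℝ)+4)^1))) = (2*((-1:ℝ)^k*(-1:ℝ)^s)*(Nk*N1s*As*Bk*N2k)*t^3*a^4*b^2*(2*(k:ℝ)+(s:ℝ)+6)^2*(2*(k:ℝ)+(s:ℝ)+4)*(2*(k:ℝ)+(s:ℝ)+5)^4*((k:ℝ)+(s:ℝ)+2)*(((k+s+2).choose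 k : ℝ)+((k+s+2).choose (k+1) : ℝ))) / ((2*(k:ℝ)+(s:ℝ)+6)*(2*(k:ℝ)+(s:ℝ)+4)^3*((k:ℝ)+(s:ℝ)+2)*(2*(k:ℝ)+(s:ℝ)+5)^2*a^2*N2k^2*N2s) := by
        field_simp
      have hT3 : 2*a*b*(2*(k:ℝ)+(s:ℝ)+4)*t^3 * (((k+s+2).choose (k+1) : ℝ) * ((-1:ℝ)^s*(-1:ℝ)^1*(N1s*(2*(k:ℝ)+(s:ℝ)+5)^1)*(As*a^1)/(N2s*(2*(k:ℝ)+(s:ℝ)+4)^1)) * ((-1:ℝ)^k*(-1:ℝ)^1*(Nk*(2*(k:ℝ)+(s:ℝ)+6)^1)*(Bk*b^1)/(N2k*(2*(k:ℝ)+(s:ℝ)+4)^1))) = (2*((-1:ℝ)^k*(-1:ℝ)^s)*(Nk*N1s*As*Bk*N2k)*t^3*a^4*b^2*(2*(k:ℝ)+(s:ℝ)+6)^2*(2*(k:ℝ)+(s:ℝ)+4)^2*(2*(k:ℝ)+(s:ℝ)+5)^3*((k:ℝ)+(s:ℝ)+2)*((k+s+2).choose (k+1) : ℝ)) / ((2*(k:ℝ)+(s:ℝ)+6)*(2*(k:ℝ)+(s:ℝ)+4)^3*((k:ℝ)+(s:ℝ)+2)*(2*(k:ℝ)+(s:ℝ)+5)^2*a^2*N2k^2*N2s)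 := by
        field_simp
      have hT4 : 2*(2*(k:ℝ)+(s:ℝ)+6)*b^2*t^3 * (((k+s+2).choose k : ℝ) * ((-1:ℝ)^s*(-1:ℝ)^2*(N1s*(2*(k:ℝ)+(s:ℝ)+5)^2)*(As*a^2)/(N2s*(2*(k:ℝ)+(s:ℝ)+4)^2)) * ((-1:ℝ)^k*Nk*Bk/N2k)) = (2*((-1:ℝ)^k*(-1:ℝ)^s)*(Nk*N1s*As*Bk*N2k)*t^3*a^4*b^2*(2*(k:ℝ)+(s:ℝ)+6)^2*(2*(k:ℝ)+(s:ℝ)+4)*(2*(k:ℝ)+(s:ℝ)+5)^4*((k:ℝ)+(s:ℝ)+2)*((k+s+2).choose k : ℝ)) / ((2*(k:ℝ)+(s:ℝ)+6)*(2*(k:ℝ)+(s:ℝ)+4)^3*((k:ℝ)+(s:ℝ)+2)*(2*(k:ℝ)+(s:ℝ)+5)^2*a^2*N2k^2*N2s) := by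
        field_simp
      have hR1 : (-1:ℝ)^k*(-1:ℝ)^s*(Nk*(2*(k:ℝ)+(s:ℝ)+6)^2)*(N1s/(2*(k:ℝ)+(s:ℝ)+5)^2)*(N2k*(2*(k:ℝ)+(s:ℝ)+4)^2)*(As/a^2)*(Bk*b^2)*((2*(k:ℝ)+(s:ℝ)+5)^3*((k+s+1).choose (k+2) : ℝ)*a^4)*t^3/((2*(k:ℝ)+(s:ℝ)+6)*(N2k*N2k*N2s*(2*(k:ℝ)+(s:ℝ)+4)^3)) = (((-1:ℝ)^k*(-1:ℝ)^s)*(Nk*N1s*As*Bk*N2k)*t^3*a^4*b^2*(2*(k:ℝ)+(s:ℝ)+6)^2*(2*(k:ℝ)+(s:ℝ)+4)^2*(2*(k:ℝ)+(s:ℝ)+5)^3*((k:ℝ)+(s:ℝ)+2)*((k+s+1).choose (k+2) : ℝ)) / ((2*(k:ℝ)+(s:ℝ)+6)*(2*(k:ℝ)+(s:ℝ)+4)^3*((k:ℝ)+(s:ℝ)+2)*(2*(k:ℝ)+(s:ℝ)+5)^2*a^2*N2k^2*N2s) := by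
        field_simp
      have hR2 : (-1:ℝ)^k*(-1:ℝ)^s*(-1:ℝ)^1*(Nk*(2*(k:ℝ)+(s:ℝ)+6)^1)*N1s*(N2k*(2*(k:ℝ)+(s:ℝ)+4)^1)*As*(Bk*b^1)*(-((2*(k:ℝ)+(s:ℝ)+6)*(2*(k:ℝ)+(s:ℝ)+5)*(5*(2*(k:ℝ)+(s:ℝ)+6)^2-(6*((k:ℝ)+1)+23)*(2*(k:ℝ)+(s:ℝ)+6)+10*((k:ℝ)+1)+24)/((k:ℝ)+(s:ℝ)+2)*((k+s+2).choose (k+1) : ℝ)*a^2*b))*t^3/((2*(k:ℝ)+(s:ℝ)+6)*(N2k*N2k*N2s*(2*(k:ℝ)+(s:ℝ)+4)^3)) = (((-1:ℝ)^k*(-1:ℝ)^s)*(Nk*N1s*As*Bk*N2k)*t^3*a^4*b^2*(2*(k:ℝ)+(s:ℝ)+6)^2*(2*(k:ℝ)+(s:ℝ)+4)*(2*(k:ℝ)+(s:ℝ)+5)^3*(5*(2*(k:ℝ)+(s:ℝ)+6)^2-(6*((k:ℝ)+1)+23)*(2*(k:ℝ)+(s:ℝ)+6)+10*((k:ℝ)+1)+24)*((k+s+2).choose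 (k+1) : ℝ)) / ((2*(k:ℝ)+(s:ℝ)+6)*(2*(k:ℝ)+(s:ℝ)+4)^3*((k:ℝ)+(s:ℝ)+2)*(2*(k:ℝ)+(s:ℝ)+5)^2*a^2*N2k^2*N2s) := by
        field_simp
      have hR3 : (-1:ℝ)^k*(-1:ℝ)^s*Nk*(N1s*(2*(k:ℝ)+(s:ℝ)+5)^2)*N2k*(As*a^2)*Bk*(4*(2*(k:ℝ)+(s:ℝ)+6)^2*(2*(k:ℝ)+(s:ℝ)+4)*((k+s+2).choose k : ℝ)*b^2)*t^3/((2*(k:ℝ)+(s:ℝ)+6)*(N2k*N2k*N2s*(2*(k:ℝ)+(s:ℝ)+4)^3)) = (4*((-1:ℝ)^k*(-1:ℝ)^s)*(Nk*N1s*As*Bk*N2k)*t^3*a^4*b^2*(2*(k:ℝ)+(s:ℝ)+6)^2*(2*(k:ℝ)+(s:ℝ)+4)*(2*(k:ℝ)+(s:ℝ)+5)^4*((k:ℝ)+(s:ℝ)+2)*((k+s+2).choose k : ℝ)) / ((2*(k:ℝ)+(s:ℝ)+6)*(2*(k:ℝ)+(s:ℝ)+4)^3*((k:ℝ)+(s:ℝ)+2)*(2*(k:ℝ)+(s:ℝ)+5)^2*a^2*N2k^2*N2s)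 := by
        field_simp
      trans ((2*(k:ℝ)+(s:ℝ)+4)*((2*(k:ℝ)+(s:ℝ)+5)*a^2)*t^3/(2*(k:ℝ)+(s:ℝ)+6) * ((((k+s+2).choose (k+1) : ℝ)*((s:ℝ)+1)/((k:ℝ)+(s:ℝ)+2) + ((k+s+1).choose (k+2) : ℝ)) * ((-1:ℝ)^s*N1s*As/N2s) * ((-1:ℝ)^k*(-1:ℝ)^2*(Nk*(2*(k:ℝ)+(s:ℝ)+6)^2)*(Bk*b^2)/(N2k*(2*(k:ℝ)+(s:ℝ)+4)^2))) + -(2*b*(2*(k:ℝ)+(s:ℝ)+4)*t^3) * ((((k+s+2).choose k : ℝ) + ((k+s+2).choose (k+1) : ℝ)) * ((-1:ℝ)^s*(-1:ℝ)^2*(N1s*(2*(k:ℝ)+(s:ℝ)+5)^2)*(As*a^2)/(N2s*(2*(k:ℝ)+(s:ℝ)+4)^2)) * ((-1:ℝ)^k*(-1:ℝ)^1*(Nk*(2*(k:ℝ)+(s:ℝ)+6)^1)*(Bk*b^1)/(N2k*(2*(k:ℝ)+(s:ℝ)+4)^1))) + 2*a*b*(2*(k:ℝ)+(s:ℝ)+4)*t^3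 * (((k+s+2).choose (k+1) : ℝ) * ((-1:ℝ)^s*(-1:ℝ)^1*(N1s*(2*(k:ℝ)+(s:ℝ)+5)^1)*(As*a^1)/(N2s*(2*(k:ℝ)+(s:ℝ)+4)^1)) * ((-1:ℝ)^k*(-1:ℝ)^1*(Nk*(2*(k:ℝ)+(s:ℝ)+6)^1)*(Bk*b^1)/(N2k*(2*(k:ℝ)+(s:ℝ)+4)^1))) + 2*(2*(k:ℝ)+(s:ℝ)+6)*b^2*t^3 * (((k+s+2).choose k : ℝ) * ((-1:ℝ)^s*(-1:ℝ)^2*(N1s*(2*(k:ℝ)+(s:ℝ)+5)^2)*(As*a^2)/(N2s*(2*(k:ℝ)+(s:ℝ)+4)^2)) * ((-1:ℝ)^k*Nk*Bk/N2k)))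
      · ring
      trans (((((-1:ℝ)^k*(-1:ℝ)^s)*(Nk*N1s*As*Bk*N2k)*t^3*a^4*b^2*(2*(k:ℝ)+(s:ℝ)+6)^2*(2*(k:ℝ)+(s:ℝ)+4)^2*(2*(k:ℝ)+(s:ℝ)+5)^3*((k:ℝ)+(s:ℝ)+2)*((k+s+1).choose (k+2) : ℝ)) + (((-1:ℝ)^k*(-1:ℝ)^s)*(Nk*N1s*As*Bk*N2k)*t^3*a^4*b^2*(2*(k:ℝ)+(s:ℝ)+6)^2*(2*(k:ℝ)+(s:ℝ)+4)*(2*(k:ℝ)+(s:ℝ)+5)^3*(5*(2*(k:ℝ)+(s:ℝ)+6)^2-(6*((k:ℝ)+1)+23)*(2*(k:ℝ)+(s:ℝ)+6)+10*((k:ℝ)+1)+24)*((k+s+2).choose (k+1) : ℝ)) + (4*((-1:ℝ)^k*(-1:ℝ)^s)*(Nk*N1s*As*Bk*N2k)*t^3*a^4*b^2*(2*(k:ℝ)+(s:ℝ)+6)^2*(2*(k:ℝ)+(s:ℝ)+4)*(2*(k:ℝ)+(s:ℝ)+5)^4*((k:ℝ)+(s:ℝ)+2)*((k+s+2).choose k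 : ℝ))) / ((2*(k:ℝ)+(s:ℝ)+6)*(2*(k:ℝ)+(s:ℝ)+4)^3*((k:ℝ)+(s:ℝ)+2)*(2*(k:ℝ)+(s:ℝ)+5)^2*a^2*N2k^2*N2s))
      · rw [hT1, hT2, hT3, hT4, ← add_div, ← add_div, ← add_div,
          show (((-1:ℝ)^k*(-1:ℝ)^s)*(Nk*N1s*As*Bk*N2k)*t^3*a^4*b^2*(2*(k:ℝ)+(s:ℝ)+6)^2*(2*(k:ℝ)+(s:ℝ)+4)^2*(2*(k:ℝ)+(s:ℝ)+5)^3*(((k+s+2).choose (k+1) : ℝ)*((s:ℝ)+1)+((k+s+1).choose (k+2) : ℝ)*((k:ℝ)+(s:ℝ)+2))) + (2*((-1:ℝ)^k*(-1:ℝ)^s)*(Nk*N1s*As*Bk*N2k)*t^3*a^4*b^2*(2*(k:ℝ)+(s:ℝ)+6)^2*(2*(k:ℝ)+(s:ℝ)+4)*(2*(k:ℝ)+(s:ℝ)+5)^4*((k:ℝ)+(s:ℝ)+2)*(((k+s+2).choose k : ℝ)+((k+s+2).choose (k+1) : ℝ))) + (2*((-1:ℝ)^k*(-1:ℝ)^s)*(Nk*N1s*As*Bk*N2k)*t^3*a^4*b^2*(2*(k:ℝ)+(s:ℝ)+6)^2*(2*(k:ℝ)+(s:ℝ)+4)^2*(2*(k:ℝ)+(s:ℝ)+5)^3*((k:ℝ)+(s:ℝ)+2)*((k+s+2).choose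 (k+1) : ℝ)) + (2*((-1:ℝ)^k*(-1:ℝ)^s)*(Nk*N1s*As*Bk*N2k)*t^3*a^4*b^2*(2*(k:ℝ)+(s:ℝ)+6)^2*(2*(k:ℝ)+(s:ℝ)+4)*(2*(k:ℝ)+(s:ℝ)+5)^4*((k:ℝ)+(s:ℝ)+2)*((k+s+2).choose k : ℝ)) = (((-1:ℝ)^k*(-1:ℝ)^s)*(Nk*N1s*As*Bk*N2k)*t^3*a^4*b^2*(2*(k:ℝ)+(s:ℝ)+6)^2*(2*(k:ℝ)+(s:ℝ)+4)^2*(2*(k:ℝ)+(s:ℝ)+5)^3*((k:ℝ)+(s:ℝ)+2)*((k+s+1).choose (k+2) : ℝ)) + (((-1:ℝ)^k*(-1:ℝ)^s)*(Nk*N1s*As*Bk*N2k)*t^3*a^4*b^2*(2*(k:ℝ)+(s:ℝ)+6)^2*(2*(k:ℝ)+(s:ℝ)+4)*(2*(k:ℝ)+(s:ℝ)+5)^3*(5*(2*(k:ℝ)+(s:ℝ)+6)^2-(6*((k:ℝ)+1)+23)*(2*(k:ℝ)+(s:ℝ)+6)+10*((k:ℝ)+1)+24)*((k+s+2).choose (k+1)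 : ℝ)) + (4*((-1:ℝ)^k*(-1:ℝ)^s)*(Nk*N1s*As*Bk*N2k)*t^3*a^4*b^2*(2*(k:ℝ)+(s:ℝ)+6)^2*(2*(k:ℝ)+(s:ℝ)+4)*(2*(k:ℝ)+(s:ℝ)+5)^4*((k:ℝ)+(s:ℝ)+2)*((k+s+2).choose k : ℝ)) from by ring]
      trans ((-1:ℝ)^k*(-1:ℝ)^s*(Nk*(2*(k:ℝ)+(s:ℝ)+6)^2)*(N1s/(2*(k:ℝ)+(s:ℝ)+5)^2)*(N2k*(2*(k:ℝ)+(s:ℝ)+4)^2)*(As/a^2)*(Bk*b^2)*((2*(k:ℝ)+(s:ℝ)+5)^3*((k+s+1).choose (k+2) : ℝ)*a^4)*t^3/((2*(k:ℝ)+(s:ℝ)+6)*(N2k*N2k*N2s*(2*(k:ℝ)+(s:ℝ)+4)^3)) + (-1:ℝ)^k*(-1:ℝ)^s*(-1:ℝ)^1*(Nk*(2*(k:ℝ)+(s:ℝ)+6)^1)*N1s*(N2k*(2*(k:ℝ)+(s:ℝ)+4)^1)*As*(Bk*b^1)*(-((2*(k:ℝ)+(s:ℝ)+6)*(2*(k:ℝ)+(s:ℝ)+5)*(5*(2*(k:ℝ)+(s:ℝ)+6)^2-(6*((k:ℝ)+1)+23)*(2*(k:ℝ)+(s:ℝ)+6)+10*((k:ℝ)+1)+24)/((k:ℝ)+(s:ℝ)+2)*((k+s+2).choose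 (k+1) : ℝ)*a^2*b))*t^3/((2*(k:ℝ)+(s:ℝ)+6)*(N2k*N2k*N2s*(2*(k:ℝ)+(s:ℝ)+4)^3)) + (-1:ℝ)^k*(-1:ℝ)^s*Nk*(N1s*(2*(k:ℝ)+(s:ℝ)+5)^2)*N2k*(As*a^2)*Bk*(4*(2*(k:ℝ)+(s:ℝ)+6)^2*(2*(k:ℝ)+(s:ℝ)+4)*((k+s+2).choose k : ℝ)*b^2)*t^3/((2*(k:ℝ)+(s:ℝ)+6)*(N2k*N2k*N2s*(2*(k:ℝ)+(s:ℝ)+4)^3)))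
      · rw [hR1, hR2, hR3, ← add_div, ← add_div]
      · ring
  · rw [Nat.choose_eq_zero_of_lt (show n-1-1-(k+2) < k+2 by omega),
      Nat.choose_eq_zero_of_lt (show n-1-1-(k+1) < k+1 by omega),
      Nat.choose_eq_zero_of_lt (show n-2-1-(k+1) < k+1 by omega),
      Nat.choose_eq_zero_of_lt (show n-3-1-k < k by omega),
      Nat.choose_eq_zero_of_lt (show n-(k+2)-3 < k+2 by omega),
      Nat.choose_eq_zero_of_lt (show n-(k+1)-3 < k+1 by omega),
      Nat.choose_eq_zero_of_lt (show n-k-4 < k by omega)]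
    push_cast
    ring
set_option maxHeartbeats 1600000 in
private lemma perk0 (n : ℕ) (hn : 5 ≤ n) (a b t : ℝ) (ha : a ≠ 0) :
    (((n:ℝ)-2)*(((n:ℝ)-1)*a^2)*t^3/(n:ℝ)) *
        gterm (-(((n:ℝ)-1)*a/((n:ℝ)-2))) (-((n:ℝ)*b/((n:ℝ)-2))) (n-1) 0
      = Xf n 0 a b t := by
  obtain ⟨m, rfl⟩ : ∃ m, n = m+5 := ⟨n-5, by omega⟩
  unfold gterm Xf
  rw [show m+5-1-1-0 = m+3 by omega,    show m+5-0-3 = m+2 by omega, show m+5-3 = m+2 by omega,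
    show ((m+5:ℕ):ℤ) - 2*((0:ℕ):ℤ) - 4 = ((m+1:ℕ):ℤ) from by push_cast; ring]
  simp only [zpow_natCast, Nat.choose_zero_right, Nat.cast_one, pow_zero, Nat.add_zero,
    one_mul, mul_one, negdivpow]
  push_cast
  rw [show (m:ℝ)+5-1 = (m:ℝ)+4 by ring, show (m:ℝ)+5-2 = (m:ℝ)+3 by ring]
  have d0 : ((m:ℝ)+5) ≠ 0 := by positivity
  have d3 : ((m:ℝ)+3) ≠ 0 := by positivity
  have d1 : ((m:ℝ)+3)^(m+3) ≠ 0 := pow_ne_zero _ d3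
  have d2 : ((m:ℝ)+3)^(m+2) ≠ 0 := pow_ne_zero _ d3
  field_simp
  ring

set_option maxHeartbeats 1600000 in
private lemma perk1 (n : ℕ) (hn : 5 ≤ n) (a b t : ℝ) (ha : a ≠ 0) :
    (((n:ℝ)-2)*(((n:ℝ)-1)*a^2)*t^3/(n:ℝ)) *
        gterm (-(((n:ℝ)-1)*a/((n:ℝ)-2))) (-((n:ℝ)*b/((n:ℝ)-2))) (n-1) 1
      + (-(2*b*((n:ℝ)-2)*t^3)) *
        gterm (-(((n:ℝ)-1)*a/((n:ℝ)-2))) (-((n:ℝ)*b/((n:ℝ)-2))) (n-1) 0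
      + (2*a*b*((n:ℝ)-2)*t^3) *
        gterm (-(((n:ℝ)-1)*a/((n:ℝ)-2))) (-((n:ℝ)*b/((n:ℝ)-2))) (n-2) 0
      = Xf n 1 a b t + Yf n 0 a b t := by
  obtain ⟨m, rfl⟩ : ∃ m, n = m+5 := ⟨n-5, by omega⟩
  unfold gterm Xf Yf
  rw [show m+5-1-1-1 = m+2 by omega, show m+5-1-1-2*1 = m+1 by omega,
    show m+5-1-1-0 = m+3 by omega,    show m+5-2-1-0 = m+2 by omega,    show m+5-1-3 = m+1 by omega, show m+5-0-3 = m+2 by omega,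
    show m+5-3 = m+2 by omega,
    show ((m+5:ℕ):ℤ) - 2*((1:ℕ):ℤ) - 4 = ((m:ℕ):ℤ) - 1 from by push_cast; ring,
    show ((m+5:ℕ):ℤ) - 2*((0:ℕ):ℤ) - 4 = ((m+1:ℕ):ℤ) from by push_cast; ring,
    zpow_sub_one' _ (show ((m+5:ℕ):ℝ)-1 ≠ 0 from by push_cast; intro h; linarith [Nat.cast_nonneg (α := ℝ) m]),
    zpow_sub_one' a ha]
  simp only [zpow_natCast, Nat.choose_zero_right, Nat.choose_one_right, Nat.cast_one,
    pow_zero, pow_one, Nat.add_zero, one_mul, mul_one, negdivpow]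
  push_cast
  rw [show (m:ℝ)+5-1 = (m:ℝ)+4 by ring, show (m:ℝ)+5-2 = (m:ℝ)+3 by ring,
    show (m:ℝ)+5-0-3 = (m:ℝ)+2 by ring]
  have d0 : ((m:ℝ)+5) ≠ 0 := by positivity
  have d3 : ((m:ℝ)+3) ≠ 0 := by positivity
  have d4 : ((m:ℝ)+4) ≠ 0 := by positivity
  have dk2 : ((m:ℝ)+2) ≠ 0 := by positivity
  have d1 : ((m:ℝ)+3)^(m+3) ≠ 0 := pow_ne_zero _ d3
  have d2 : ((m:ℝ)+3)^(m+2) ≠ 0 := pow_ne_zero _ d3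
  have d5 : ((m:ℝ)+4)^m ≠ 0 := pow_ne_zero _ d4
  have d6 : a^m ≠ 0 := pow_ne_zero _ ha
  field_simp
  ring
private def sh (f : ℕ → ℝ) : ℕ → ℝ := fun k => match k with | 0 => 0 | (j+1) => f j

private lemma sh_zero (f : ℕ → ℝ) : sh f 0 = 0 := rfl
private lemma sh_succ (f : ℕ → ℝ) (j : ℕ) : sh f (j+1) = f j := rfl

private lemma sum_sh (f : ℕ → ℝ) (N : ℕ) :
    ∑ k ∈ Finset.range (N+1), sh f k = ∑ j ∈ Finset.range N, f j := by
  rw [Finset.sum_range_succ']; simp [sh]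

set_option maxHeartbeats 1600000 in
theorem lucas_seq_alpha_identity (n : ℕ) (hn : 5 ≤ n) (a b t : ℝ) (ha : a ≠ 0)
    (u : ℕ → ℝ) (hu0 : u 0 = 0) (hu1 : u 1 = ((n : ℝ) - 2) * t)
    (hur : ∀ m : ℕ, u (m + 2) =
      -(((n : ℝ) - 1) * a / ((n : ℝ) - 2)) * u (m + 1) - ((n : ℝ) * b / ((n : ℝ) - 2)) * u m) :
    (2 * (n : ℝ) * b ^ 2 * u (n - 3) / ((n : ℝ) - 2) +
        (((n : ℝ) - 1) * a ^ 2 - 2 * (n : ℝ) * b) * u (n - 1) / (n : ℝ) +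
        2 * a * b * u (n - 2)) * t ^ 2 =
      ∑ k ∈ Finset.range ((n - 3) / 2 + 1),
        (-1 : ℝ) ^ (n + k) * (n : ℝ) ^ k * ((n : ℝ) - 1) ^ ((n : ℤ) - 2 * k - 4) *
          ((n : ℝ) - 2) ^ k * a ^ ((n : ℤ) - 2 * k - 4) * b ^ k *
          (((n : ℝ) - 1) ^ 3 * ((n - k - 3).choose k : ℝ) * a ^ 4 -
            ((n : ℝ) * ((n : ℝ) - 1) *
                (5 * (n : ℝ) ^ 2 - (6 * (k : ℝ) + 23) * (n : ℝ) + 10 * (k : ℝ) + 24) /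
              ((n : ℝ) - (k : ℝ) - 3)) * ((n - k - 3).choose k : ℝ) * a ^ 2 * b +
            4 * (n : ℝ) ^ 2 * ((n : ℝ) - 2) * ((n - k - 4).choose k : ℝ) * b ^ 2) *
          t ^ 3 / ((n : ℝ) * ((n : ℝ) - 2) ^ (n - 3)) := by
  have hn5 : (5:ℝ) ≤ (n:ℝ) := by exact_mod_cast hn
  have h0 : (n:ℝ) ≠ 0 := by intro h; linarith
  have h2 : ((n:ℝ)-2) ≠ 0 := by intro h; linarith
  -- closed form for u
  have hcf : ∀ m : ℕ, m ≤ n - 2 → u (m+1) = ((n:ℝ)-2)*t *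
      ∑ j ∈ Finset.range n, gterm (-(((n:ℝ)-1)*a/((n:ℝ)-2))) (-((n:ℝ)*b/((n:ℝ)-2))) (m+1) j := by
    intro m
    induction m using Nat.strong_induction_on with
    | _ m ih =>
      rcases m with _ | m
      · intro _
        have hs : ∑ j ∈ Finset.range n,
            gterm (-(((n:ℝ)-1)*a/((n:ℝ)-2))) (-((n:ℝ)*b/((n:ℝ)-2))) 1 j = 1 := by
          rw [Finset.sum_eq_single_of_mem 0 (Finset.mem_range.mpr (by omega))]
          · unfold gterm; norm_num
          · intro j _ hj
            exact gterm_zero _ _ _ _ (by omega)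
        rw [hu1, hs]; ring
      rcases m with _ | m
      · intro _
        have h2' := hur 0
        rw [hu0, hu1] at h2'
        have hs : ∑ j ∈ Finset.range n,
            gterm (-(((n:ℝ)-1)*a/((n:ℝ)-2))) (-((n:ℝ)*b/((n:ℝ)-2))) 2 j
            = -(((n:ℝ)-1)*a/((n:ℝ)-2)) := by
          rw [Finset.sum_eq_single_of_mem 0 (Finset.mem_range.mpr (by omega))]
          · unfold gterm; norm_num
          · intro j _ hj
            exact gterm_zero _ _ _ _ (by omega)
        rw [show (0:ℕ)+1+1 = 2 from rfl, h2', hs]; ring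
      · intro hm
        have hr := hur (m+1)
        rw [show m+1+2 = m+2+1 from rfl] at hr
        rw [show m+1+1 = m+2 from rfl] at hr ⊢
        rw [hr, ih (m+1) (by omega) (by omega), ih m (by omega) (by omega)]
        rw [show m+2+1 = m+3 from rfl, show m+1+1 = m+2 from rfl,
          gsum_rec _ _ m n (by omega) (gterm_zero _ _ _ _ (by omega))]
        ring
  have hun1 : u (n-1) = ((n:ℝ)-2)*t * ∑ j ∈ Finset.range n,
      gterm (-(((n:ℝ)-1)*a/((n:ℝ)-2))) (-((n:ℝ)*b/((n:ℝ)-2))) (n-1) j := by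
    have h := hcf (n-2) (le_refl _); rwa [show n-2+1 = n-1 by omega] at h
  have hun2 : u (n-2) = ((n:ℝ)-2)*t * ∑ j ∈ Finset.range n,
      gterm (-(((n:ℝ)-1)*a/((n:ℝ)-2))) (-((n:ℝ)*b/((n:ℝ)-2))) (n-2) j := by
    have h := hcf (n-3) (by omega); rwa [show n-3+1 = n-2 by omega] at h
  have hun3 : u (n-3) = ((n:ℝ)-2)*t * ∑ j ∈ Finset.range n,
      gterm (-(((n:ℝ)-1)*a/((n:ℝ)-2))) (-((n:ℝ)*b/((n:ℝ)-2))) (n-3) j := by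
    have h := hcf (n-4) (by omega); rwa [show n-4+1 = n-3 by omega] at h
  rw [hun1, hun2, hun3]
  have hgz : ∀ (mm jj : ℕ), mm - 1 - jj < jj →
      gterm (-(((n:ℝ)-1)*a/((n:ℝ)-2))) (-((n:ℝ)*b/((n:ℝ)-2))) mm jj = 0 :=
    fun mm jj h => gterm_zero _ _ _ _ h
  have hXz : ∀ k : ℕ, n-k-3 < k → Xf n k a b t = 0 := by
    intro k hk; unfold Xf; rw [Nat.choose_eq_zero_of_lt hk]; push_cast; ring
  have hYz : ∀ k : ℕ, n-k-3 < k → Yf n k a b t = 0 := by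
    intro k hk; unfold Yf; rw [Nat.choose_eq_zero_of_lt hk]; push_cast; ring
  have hZz : ∀ k : ℕ, n-k-4 < k → Zf n k a b t = 0 := by
    intro k hk; unfold Zf; rw [Nat.choose_eq_zero_of_lt hk]; push_cast; ring
  trans (∑ k ∈ Finset.range (n+2),
      ((((n:ℝ)-2)*(((n:ℝ)-1)*a^2)*t^3/(n:ℝ)) *
          gterm (-(((n:ℝ)-1)*a/((n:ℝ)-2))) (-((n:ℝ)*b/((n:ℝ)-2))) (n-1) k
        + sh (fun j => (-(2*b*((n:ℝ)-2)*t^3)) *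
            gterm (-(((n:ℝ)-1)*a/((n:ℝ)-2))) (-((n:ℝ)*b/((n:ℝ)-2))) (n-1) j) k
        + sh (fun j => (2*a*b*((n:ℝ)-2)*t^3) *
            gterm (-(((n:ℝ)-1)*a/((n:ℝ)-2))) (-((n:ℝ)*b/((n:ℝ)-2))) (n-2) j) k
        + sh (sh (fun j => (2*(n:ℝ)*b^2*t^3) *
            gterm (-(((n:ℝ)-1)*a/((n:ℝ)-2))) (-((n:ℝ)*b/((n:ℝ)-2))) (n-3) j)) k))
  · have e : ∑ k ∈ Finset.range (n+2),
        ((((n:ℝ)-2)*(((n:ℝ)-1)*a^2)*t^3/(n:ℝ)) *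
            gterm (-(((n:ℝ)-1)*a/((n:ℝ)-2))) (-((n:ℝ)*b/((n:ℝ)-2))) (n-1) k
          + sh (fun j => (-(2*b*((n:ℝ)-2)*t^3)) *
              gterm (-(((n:ℝ)-1)*a/((n:ℝ)-2))) (-((n:ℝ)*b/((n:ℝ)-2))) (n-1) j) k
          + sh (fun j => (2*a*b*((n:ℝ)-2)*t^3) *
              gterm (-(((n:ℝ)-1)*a/((n:ℝ)-2))) (-((n:ℝ)*b/((n:ℝ)-2))) (n-2) j) k
          + sh (sh (fun j => (2*(n:ℝ)*b^2*t^3) *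
              gterm (-(((n:ℝ)-1)*a/((n:ℝ)-2))) (-((n:ℝ)*b/((n:ℝ)-2))) (n-3) j)) k)
        = (((n:ℝ)-2)*(((n:ℝ)-1)*a^2)*t^3/(n:ℝ)) * (∑ j ∈ Finset.range n,
            gterm (-(((n:ℝ)-1)*a/((n:ℝ)-2))) (-((n:ℝ)*b/((n:ℝ)-2))) (n-1) j)
          + (-(2*b*((n:ℝ)-2)*t^3)) * (∑ j ∈ Finset.range n,
            gterm (-(((n:ℝ)-1)*a/((n:ℝ)-2))) (-((n:ℝ)*b/((n:ℝ)-2))) (n-1) j)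
          + (2*a*b*((n:ℝ)-2)*t^3) * (∑ j ∈ Finset.range n,
            gterm (-(((n:ℝ)-1)*a/((n:ℝ)-2))) (-((n:ℝ)*b/((n:ℝ)-2))) (n-2) j)
          + (2*(n:ℝ)*b^2*t^3) * (∑ j ∈ Finset.range n,
            gterm (-(((n:ℝ)-1)*a/((n:ℝ)-2))) (-((n:ℝ)*b/((n:ℝ)-2))) (n-3) j) := by
      rw [Finset.sum_add_distrib, Finset.sum_add_distrib, Finset.sum_add_distrib]
      congr 1
      · congr 1
        · congr 1
          · rw [show n+2 = (n+1)+1 from rfl, Finset.sum_range_succ, Finset.sum_range_succ,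
              hgz (n-1) (n+1) (by omega), hgz (n-1) n (by omega)]
            rw [Finset.mul_sum]
            simp
          · rw [show n+2 = (n+1)+1 from rfl, Finset.sum_range_succ, sum_sh,
              sh_succ, hgz (n-1) n (by omega)]
            rw [Finset.mul_sum]
            simp
        · rw [show n+2 = (n+1)+1 from rfl, Finset.sum_range_succ, sum_sh,
            sh_succ, hgz (n-2) n (by omega)]
          rw [Finset.mul_sum]
          simp
      · rw [show n+2 = (n+1)+1 from rfl, sum_sh, sum_sh, Finset.mul_sum]
    rw [e]
    field_simp
    ring
  trans (∑ k ∈ Finset.range (n+2),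
      (Xf n k a b t + sh (fun j => Yf n j a b t) k + sh (sh (fun j => Zf n j a b t)) k))
  · refine Finset.sum_congr rfl fun k _ => ?_
    rcases k with _ | k
    · simp only [sh_zero, add_zero]
      exact perk0 n hn a b t ha
    rcases k with _ | k
    · simp only [sh_succ, sh_zero, add_zero]
      exact perk1 n hn a b t ha
    · simp only [sh_succ]
      exact perk_main n k hn a b t ha
  · have e : ∑ k ∈ Finset.range (n+2),
        (Xf n k a b t + sh (fun j => Yf n j a b t) k + sh (sh (fun j => Zf n j a b t)) k)
        = ∑ k ∈ Finset.range ((n-3)/2+1), (Xf n k a b t + Yf n k a b t + Zf n k a b t) := by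
      rw [Finset.sum_add_distrib, Finset.sum_add_distrib]
      rw [show n+2 = (n+1)+1 from rfl, sum_sh, sum_sh, sum_sh]
      rw [Finset.sum_range_succ (fun k => Yf n k a b t) n, hYz n (by omega), add_zero]
      rw [Finset.sum_range_succ (fun k => Xf n k a b t) (n+1), hXz (n+1) (by omega), add_zero]
      rw [Finset.sum_range_succ (fun k => Xf n k a b t) n, hXz n (by omega), add_zero]
      rw [← Finset.sum_add_distrib, ← Finset.sum_add_distrib]
      symm
      apply Finset.sum_subset
      · exact Finset.range_subset_range.mpr (by omega)
      · intro k hk1 hk2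
        rw [Finset.mem_range] at hk1 hk2
        rw [hXz k (by omega), hYz k (by omega), hZz k (by omega)]
        ring
    rw [e]
    refine Finset.sum_congr rfl fun k _ => ?_
    unfold Xf Yf Zf
    ring
end

section
/- Let n ≥ 5 be an integer and a, b real numbers, and set H = (n−1)²a² − 4n(n−2)b and m₀ = ⌊(n−3)/2⌋. Then Σ_{ℓ=0}^{m₀} C(n−3, 2ℓ)·(−(n−1)a)^{n−2ℓ−3}·H^ℓ = Σ_{k=0}^{m₀} (−1)^{n+k+1}·2^{n−4}·n^k·(n−1)^{n−2k−3}·(n−2)^k·[(n−3)/(n−k−3)]·C(n−k−3, k)·a^{n−2k−3}·b^k. -/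
def lc (m k : ℕ) : ℕ :=
  if 2*k ≤ m then (m-k).choose k + (if k = 0 then 0 else (m-k-1).choose (k-1)) else 0

lemma lc_rec (m k : ℕ) (hm : 1 ≤ m) (hk : 1 ≤ k) :
    lc (m+2) k = lc (m+1) k + lc m (k-1) := by
  simp only [lc]
  rcases Nat.lt_or_ge (m+2) (2*k) with h | h
  · rw [if_neg (show ¬ 2*k ≤ m+2 by omega), if_neg (show ¬ 2*k ≤ m+1 by omega),
      if_neg (show ¬ 2*(k-1) ≤ m by omega)]
  rcases Nat.eq_or_lt_of_le h with h2 | h2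
  · have hk2 : 2 ≤ k := by omega
    rw [if_pos (show 2*k ≤ m+2 by omega), if_neg (show ¬ 2*k ≤ m+1 by omega),
      if_pos (show 2*(k-1) ≤ m by omega), if_neg (show ¬ k = 0 by omega),
      if_neg (show ¬ k-1 = 0 by omega),
      show m+2-k = k by omega, show m-(k-1) = k-1 by omega]
    simp [Nat.choose_self]
  rcases Nat.eq_or_lt_of_le (show 2*k ≤ m+1 by omega) with h3 | h3
  · obtain ⟨j, hj⟩ : ∃ j, k = j + 1 := ⟨k-1, by omega⟩
    subst hj
    rw [if_pos (show 2*(j+1) ≤ m+2 by omega), if_pos (show 2*(j+1) ≤ m+1 by omega),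
      if_pos (show 2*(j+1-1) ≤ m by omega), if_neg (show ¬ j+1 = 0 by omega),
      if_neg (show ¬ j+1 = 0 by omega),
      show m+2-(j+1) = j+2 by omega, show m+1-(j+1) = j+1 by omega,
      show m-(j+1-1) = j+1 by omega, show j+2-1 = j+1 by omega,
      show j+1-1 = j by omega]
    rw [show j+2 = (j+1)+1 from rfl, Nat.choose_succ_self_right,
      show (j+1).choose j = j+1 from Nat.choose_succ_self_right j,
      Nat.choose_self, Nat.choose_self]
    rcases j with _ | i
    · simp
    · rw [if_neg (by omega), show i+1-1 = i by omega,
        show (i+1).choose i = i+1 from Nat.choose_succ_self_right i]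
      omega
  · have h4 : 2*k ≤ m := by omega
    obtain ⟨j, hj⟩ : ∃ j, k = j + 1 := ⟨k-1, by omega⟩
    subst hj
    obtain ⟨t, ht⟩ : ∃ t, m = (j+1) + t := ⟨m - (j+1), by omega⟩
    subst ht
    rw [if_pos (show 2*(j+1) ≤ (j+1)+t+2 by omega),
      if_pos (show 2*(j+1) ≤ (j+1)+t+1 by omega),
      if_pos (show 2*(j+1-1) ≤ (j+1)+t by omega),
      if_neg (show ¬ j+1 = 0 by omega), if_neg (show ¬ j+1 = 0 by omega),
      show (j+1)+t+2-(j+1) = t+2 by omega, show t+2-1 = t+1 by omega,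
      show (j+1)+t+1-(j+1) = t+1 by omega, show t+1-1 = t by omega,
      show (j+1)+t-(j+1-1) = t+1 by omega, show j+1-1 = j by omega]
    rw [show t+1-1 = t by omega, show t+2 = (t+1)+1 from rfl,
      Nat.choose_succ_succ (t+1) j, Nat.choose_succ_succ t j]
    rcases j with _ | i
    · simp; omega
    · rw [if_neg (by omega), show i+1-1 = i by omega, Nat.choose_succ_succ t i]
      simp only [Nat.succ_eq_add_one]
      omega

lemma lc_vanish {m k : ℕ} (h : m/2 + 1 ≤ k) : lc m k = 0 := if_neg (by omega)

lemma sum_ext (m N : ℕ) (h : m/2+1 ≤ N) (u v : ℂ) :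
    ∑ k ∈ Finset.range (m/2+1), (-1:ℂ)^k * (lc m k : ℂ) * (u+v)^(m-2*k) * (u*v)^k
  = ∑ k ∈ Finset.range N, (-1:ℂ)^k * (lc m k : ℂ) * (u+v)^(m-2*k) * (u*v)^k :=
  Finset.sum_subset (Finset.range_subset_range.2 h) (fun x _ hx => by
    rw [lc_vanish (by simp at hx; omega)]; simp)


lemma lucas : ∀ (m : ℕ), 1 ≤ m → ∀ u v : ℂ,
    u^m + v^m = ∑ k ∈ Finset.range (m/2+1),
      (-1:ℂ)^k * (lc m k : ℂ) * (u+v)^(m-2*k) * (u*v)^k := by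
  intro m
  induction m using Nat.twoStepInduction with
  | zero => omega
  | one => intro _ u v; simp [lc]
  | more n ih1 ih2 =>
    intro _ u v
    rcases Nat.eq_zero_or_pos n with hn | hn
    · subst hn
      simp only [show (2:ℕ)/2 + 1 = 2 from rfl, Finset.sum_range_succ,
        Finset.sum_range_zero]
      norm_num [lc]
      ring
    · have key : u^(n+2) + v^(n+2) = (u+v)*(u^(n+1)+v^(n+1)) - u*v*(u^n+v^n) := by
        ring
      rw [key, ih2 (by omega) u v, ih1 hn u v,
        sum_ext (n+1) (n/2+2) (by omega) u v, sum_ext n (n/2+1) (by omega) u v,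
        show (n+2)/2 + 1 = n/2+2 by omega, Finset.mul_sum, Finset.mul_sum]
      have hB : ∀ k ∈ Finset.range (n/2+2),
          (u+v) * ((-1:ℂ)^k * (lc (n+1) k : ℂ) * (u+v)^(n+1-2*k) * (u*v)^k)
          = (-1:ℂ)^k * (lc (n+1) k : ℂ) * (u+v)^(n+2-2*k) * (u*v)^k := by
        intro k _
        rcases le_or_gt (2*k) (n+1) with h | h
        · rw [show n+2-2*k = (n+1-2*k)+1 by omega, pow_succ]
          ring
        · rw [lc_vanish (by omega)]; simp
      rw [Finset.sum_congr rfl hB]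
      rw [sub_eq_iff_eq_add, ← sub_eq_iff_eq_add']
      rw [← Finset.sum_sub_distrib, Finset.sum_range_succ']
      have h0 : (-1:ℂ)^0 * (lc (n+1) 0 : ℂ) * (u+v)^(n+2-2*0) * (u*v)^0
          - (-1:ℂ)^0 * (lc (n+2) 0 : ℂ) * (u+v)^(n+2-2*0) * (u*v)^0 = 0 := by
        simp [lc]
      rw [h0, add_zero]
      apply Finset.sum_congr rfl
      intro k _
      have hrec : lc (n+2) (k+1) = lc (n+1) (k+1) + lc n k := lc_rec n (k+1) hn (by omega)
      have he : n+2-2*(k+1) = n-2*k := by omega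
      rw [hrec, he]
      push_cast
      ring


lemma even_part (m : ℕ) (x s : ℂ) :
    (x+s)^m + (x-s)^m
      = 2 * ∑ l ∈ Finset.range (m/2+1), (m.choose (2*l) : ℂ) * x^(m-2*l) * (s^2)^l := by
  have h1 : (x+s)^m + (x-s)^m
      = ∑ j ∈ Finset.range (m+1), ((s^j + (-s)^j) * x^(m-j) * (m.choose j : ℂ)) := by
    rw [show x + s = s + x by ring, show x - s = -s + x by ring, add_pow, add_pow,
      ← Finset.sum_add_distrib]
    exact Finset.sum_congr rfl (fun j _ => by ring)
  have h2 : ∀ j ∈ Finset.range (m+1), ((s^j + (-s)^j) * x^(m-j) * (m.choose j : ℂ))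
      = if Even j then 2 * (s^j * x^(m-j) * (m.choose j : ℂ)) else 0 := by
    intro j _
    rcases Nat.even_or_odd j with h | h
    · rw [if_pos h, h.neg_pow]; ring
    · rw [if_neg (by simpa using h), h.neg_pow]; ring
  have h3 : (Finset.range (m+1)).filter (fun j => Even j)
      = (Finset.range (m/2+1)).image (fun l => 2*l) := by
    ext j
    simp only [Finset.mem_filter, Finset.mem_image, Finset.mem_range, Nat.even_iff]
    constructor
    · rintro ⟨hj, he⟩; exact ⟨j/2, by omega, by omega⟩
    · rintro ⟨l, hl, rfl⟩; omega
  rw [h1, Finset.sum_congr rfl h2, ← Finset.sum_filter, h3,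
    Finset.sum_image (fun a _ b _ h => by omega), Finset.mul_sum]
  exact Finset.sum_congr rfl (fun l _ => by rw [pow_mul]; ring)



lemma lc_mul (m k : ℕ) (h2 : 2*k ≤ m) (hm : 1 ≤ m) :
    (m - k) * lc m k = m * (m-k).choose k := by
  rcases Nat.eq_zero_or_pos k with hk | hk
  · subst hk; simp [lc]
  · rw [lc, if_pos h2, if_neg (by omega), Nat.mul_add]
    have h1 : (m - k) * (m-k-1).choose (k-1) = k * (m-k).choose k := by
      have := Nat.add_one_mul_choose_eq (m-k-1) (k-1)
      rw [show m-k-1+1 = m - k by omega, show k-1+1 = k by omega] at this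
      rw [this]; ring
    rw [h1]
    have : m * (m-k).choose k = (m - k) * (m-k).choose k + k * (m-k).choose k := by
      rw [← Nat.add_mul]; congr 1; omega
    omega



theorem rational_part_expansion (n : ℕ) (hn : 5 ≤ n) (a b : ℝ) :
    ∑ l ∈ Finset.range ((n - 3) / 2 + 1),
        ((n - 3).choose (2 * l) : ℝ) * (-((n : ℝ) - 1) * a) ^ (n - 2 * l - 3) *
          (((n : ℝ) - 1) ^ 2 * a ^ 2 - 4 * (n : ℝ) * ((n : ℝ) - 2) * b) ^ l =
      ∑ k ∈ Finset.range ((n - 3) / 2 + 1),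
        (-1 : ℝ) ^ (n + k + 1) * 2 ^ (n - 4) * (n : ℝ) ^ k * ((n : ℝ) - 1) ^ (n - 2 * k - 3) *
          ((n : ℝ) - 2) ^ k * (((n : ℝ) - 3) / ((n : ℝ) - (k : ℝ) - 3)) *
          ((n - k - 3).choose k : ℝ) * a ^ (n - 2 * k - 3) * b ^ k := by
  obtain ⟨m, rfl⟩ : ∃ m, n = m + 3 := ⟨n - 3, by omega⟩
  have hm : 2 ≤ m := by omega
  apply Complex.ofReal_injective
  push_cast
  set A : ℂ := (a : ℂ) with hA
  set B : ℂ := (b : ℂ) with hB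
  set M : ℂ := (m : ℂ) with hMdef
  set x : ℂ := -(M + 3 - 1) * A with hx
  obtain ⟨s, hs⟩ : ∃ s : ℂ, s^2 = (M+3-1)^2 * A^2 - 4*(M+3)*(M+3-2)*B :=
    IsAlgClosed.exists_pow_nat_eq _ two_pos
  apply mul_left_cancel₀ (two_ne_zero (α := ℂ))
  trans ((x+s)^m + (x-s)^m)
  · rw [even_part m x s]
    congr 1
    refine Finset.sum_congr rfl (fun l _ => ?_)
    rw [hs, show m+3-2*l-3 = m-2*l by omega]
  · rw [lucas m (by omega) (x+s) (x-s), Finset.mul_sum]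
    refine Finset.sum_congr rfl (fun k hk => ?_)
    simp only [Finset.mem_range] at hk
    have h2k : 2*k ≤ m := by omega
    obtain ⟨j, hj⟩ : ∃ j, m = 2*k + j := ⟨m - 2*k, by omega⟩
    have hMkj : M = 2*(k:ℂ) + (j:ℂ) := by rw [hMdef, hj]; push_cast; ring
    have hden : M + 3 - (k:ℂ) - 3 = ((k+j : ℕ) : ℂ) := by rw [hMkj]; push_cast; ring
    have hne' : ((k+j : ℕ) : ℂ) ≠ 0 := Nat.cast_ne_zero.mpr (by omega)
    have hlc : ((k+j : ℕ) : ℂ) * (lc m k : ℂ) = M * ((k+j).choose k : ℂ) := by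
      have h := lc_mul m k h2k (by omega)
      rw [show m - k = k + j by omega] at h
      have h2 := congrArg (Nat.cast : ℕ → ℂ) h
      push_cast at h2
      rw [hMdef]; push_cast
      linear_combination h2
    have hlcdiv : (lc m k : ℂ) = M * ((k+j).choose k : ℂ) / ((k+j : ℕ) : ℂ) :=
      (eq_div_iff hne').mpr (by linear_combination hlc)
    have hq : (x+s)*(x-s) = 4*(M+3)*(M+3-2)*B := by
      rw [hx]; linear_combination -hs
    have hsign : (-1:ℂ)^(m+3+k+1) = (-1:ℂ)^k * (-1:ℂ)^j := by
      rw [show m+3+k+1 = (k+j)+2*(k+2) by omega, pow_add, pow_mul, neg_one_sq,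
        one_pow, mul_one, pow_add]
    have hxp : (2*x)^j = (-1:ℂ)^j * (2:ℂ)^j * (M+3-1)^j * A^j := by
      rw [hx, show 2*(-(M+3-1)*A) = (-1)*(2*((M+3-1)*A)) by ring,
        mul_pow, mul_pow, mul_pow]; ring
    have hqp : (4*(M+3)*(M+3-2)*B)^k
        = (2:ℂ)^(2*k) * ((M+3)^k * ((M+3-2)^k * B^k)) := by
      rw [show 4*(M+3)*(M+3-2)*B = 2^2*((M+3)*((M+3-2)*B)) by ring,
        mul_pow, mul_pow, mul_pow, ← pow_mul]
    have hp2 : (2:ℂ)^j * (2:ℂ)^(2*k) = 2 * 2^(m-1) := by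
      rw [← pow_add, show j+2*k = (m-1)+1 by omega, pow_succ]; ring
    rw [show x+s+(x-s) = 2*x by ring, hq,
      show m+3-2*k-3 = j by omega, show m-2*k = j by omega,
      show m+3-k-3 = k+j by omega,
      hden, hsign, hxp, hqp, hlcdiv]
    linear_combination ((-1:ℂ)^k * (-1:ℂ)^j * (M+3-1)^j * A^j * (M+3)^k * (M+3-2)^k
      * B^k * M * (((k+j).choose k : ℕ) : ℂ) * (((k+j : ℕ) : ℂ))⁻¹) * hp2
end

section
/- Let n ≥ 5 be an integer and a, b real numbers, and set H = (n−1)²a² − 4n(n−2)b and m₀ = ⌊(n−3)/2⌋. Then Σ_{ℓ=0}^{m₀} C(n−3, 2ℓ+1)·(−(n−1)a)^{n−2ℓ−4}·H^ℓ = Σ_{k=0}^{m₀} (−1)^{n+k}·2^{n−4}·n^k·(n−1)^{n−2k−4}·(n−2)^k·C(n−k−4, k)·a^{n−2k−4}·b^k. -/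
open Finset

noncomputable def Jf (p q : ℝ) (m : ℕ) : ℝ :=
  ∑ l ∈ range (m + 1), if 2 * l + 1 ≤ m then (m.choose (2 * l + 1) : ℝ) * p ^ (m - 1 - 2 * l) * q ^ l else 0

noncomputable def If' (p q : ℝ) (m : ℕ) : ℝ :=
  ∑ l ∈ range (m + 1), if 2 * l ≤ m then (m.choose (2 * l) : ℝ) * p ^ (m - 2 * l) * q ^ l else 0

noncomputable def Bf (p c : ℝ) (m : ℕ) : ℝ :=
  ∑ k ∈ range (m + 1), if 2 * k + 1 ≤ m then (-1 : ℝ) ^ k * ((m - 1 - k).choose k : ℝ) * p ^ (m - 1 - 2 * k) * c ^ k else 0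

lemma J_succ (p q : ℝ) (m : ℕ) : Jf p q (m+1) = If' p q m + p * Jf p q m := by
  unfold Jf If'
  rw [Finset.sum_range_succ, if_neg (by omega), add_zero, Finset.mul_sum,
    ← Finset.sum_add_distrib]
  apply Finset.sum_congr rfl
  intro l hl
  simp only [mem_range] at hl
  by_cases h1 : 2*l+1 ≤ m
  · rw [if_pos (by omega), if_pos (by omega), if_pos h1, Nat.choose_succ_succ,
      show m + 1 - 1 - 2*l = (m - 1 - 2*l) + 1 by omega,
      show m - 2*l = (m - 1 - 2*l) + 1 by omega, pow_succ]
    push_cast [Nat.succ_eq_add_one]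
    ring
  · by_cases h2 : 2*l ≤ m
    · rw [if_pos (by omega), if_pos h2, if_neg h1]
      have hm : m = 2*l := by omega
      subst hm
      simp [Nat.choose_self]
    · rw [if_neg (by omega), if_neg h2, if_neg h1]
      ring

lemma I_succ (p q : ℝ) (m : ℕ) : If' p q (m+1) = p * If' p q m + q * Jf p q m := by
  unfold Jf If'
  rw [Finset.sum_range_succ' _ (m+1), Finset.sum_range_succ _ m,
    if_neg (show ¬ (2*(m+1) ≤ m+1) by omega),
    if_pos (show 2*0 ≤ m+1 by omega), add_zero]
  rw [Finset.mul_sum, Finset.mul_sum, Finset.sum_range_succ' _ m, Finset.sum_range_succ _ m,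
    if_neg (show ¬ (2*m+1 ≤ m) by omega), if_pos (show 2*0 ≤ m by omega)]
  simp only [mul_zero, add_zero]
  rw [add_right_comm, ← Finset.sum_add_distrib]
  congr 1
  · apply Finset.sum_congr rfl
    intro l hl
    simp only [mem_range] at hl
    by_cases h1 : 2*(l+1) ≤ m
    · rw [if_pos (by omega), if_pos h1, if_pos (by omega),
        show 2*(l+1) = 2*l+1+1 from by ring, Nat.choose_succ_succ,
        show m + 1 - (2*l+1+1) = m - (2*l+1+1) + 1 by omega,
        show m - 1 - 2*l = m - (2*l+1+1) + 1 by omega, pow_succ]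
      push_cast [Nat.succ_eq_add_one]
      ring
    · by_cases h2 : 2*l+1 ≤ m
      · rw [if_pos (by omega), if_neg h1, if_pos h2]
        have hm : m = 2*l+1 := by omega
        subst hm
        rw [show 2*(l+1) = 2*l+1+1 from by ring, Nat.choose_self, Nat.sub_self, Nat.choose_self,
          show 2*l+1-1-2*l = 0 from by omega]
        push_cast [pow_succ]
        ring
      · rw [if_neg (by omega), if_neg h1, if_neg h2]
        ring
  · simp [pow_succ]
    ring

lemma B_succ (p c : ℝ) (m : ℕ) : Bf p c (m+2) = p * Bf p c (m+1) - c * Bf p c m := by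
  unfold Bf
  rw [Finset.sum_range_succ' _ (m+2), Finset.sum_range_succ _ (m+1),
    if_neg (show ¬ (2*(m+1+1)+1 ≤ m+2) by omega),
    if_pos (show 2*0+1 ≤ m+2 by omega), add_zero]
  rw [Finset.mul_sum, Finset.mul_sum, Finset.sum_range_succ' _ (m+1),
    if_pos (show 2*0+1 ≤ m+1 by omega)]
  simp only [mul_zero, add_zero, pow_zero, mul_one, Nat.sub_zero, Nat.choose_zero_right,
    Nat.cast_one, one_mul, neg_zero]
  rw [sub_eq_add_neg, add_right_comm, ← Finset.sum_neg_distrib, ← Finset.sum_add_distrib]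
  congr 1
  · apply Finset.sum_congr rfl
    intro k hk
    simp only [mem_range] at hk
    by_cases h1 : 2*k+2 ≤ m
    · rw [if_pos (by omega), if_pos (by omega), if_pos (by omega),
        show m+2-1-(k+1) = (m-1-k)+1 from by omega, Nat.choose_succ_succ,
        show m+2-1-2*(k+1) = m-1-2*k from by omega,
        show m+1-1-(k+1) = m-1-k from by omega,
        show m+1-1-2*(k+1) = m-1-2*k-1 from by omega,
        show m-1-2*k = (m-1-2*k-1)+1 from by omega, pow_succ, pow_succ]
      push_cast
      ring
    · by_cases h2 : 2*k+1 ≤ m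
      · have hm : m = 2*k+1 := by omega
        subst hm
        rw [if_pos (by omega), if_neg (by omega), if_pos (by omega),
          show 2*k+1+2-1-(k+1) = k+1 from by omega, Nat.choose_self,
          show 2*k+1+2-1-2*(k+1) = 0 from by omega,
          show 2*k+1-1-k = k from by omega, Nat.choose_self,
          show 2*k+1-1-2*k = 0 from by omega]
        push_cast [pow_succ]
        ring
      · rw [if_neg (by omega), if_neg (by omega), if_neg (by omega)]
        ring
  · rw [show m+2-1 = m+1 from by omega, show m+1-1 = m from by omega, pow_succ]
    ring

lemma J_rec (p q : ℝ) (m : ℕ) :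
    Jf p q (m+2) = 2*p*Jf p q (m+1) - (p^2 - q) * Jf p q m := by
  have h1 := J_succ p q (m+1)
  have h2 := I_succ p q m
  have h3 := J_succ p q m
  linear_combination h1 + h2 - p * h3

lemma J_one (p q : ℝ) : Jf p q 1 = 1 := by
  simp [Jf, Finset.sum_range_succ]

lemma J_two (p q : ℝ) : Jf p q 2 = 2 * p := by
  norm_num [Jf, Finset.sum_range_succ]

lemma B_one (p c : ℝ) : Bf p c 1 = 1 := by
  simp [Bf, Finset.sum_range_succ]

lemma B_two (p c : ℝ) : Bf p c 2 = p := by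
  norm_num [Bf, Finset.sum_range_succ]

lemma key (p c : ℝ) (m : ℕ) : Jf p (p^2-4*c) (m+1) = 2^m * Bf p c (m+1) := by
  induction m using Nat.twoStepInduction with
  | zero => simp [J_one, B_one]
  | one => rw [J_two, B_two]; ring
  | more k ih1 ih2 =>
    rw [J_rec, B_succ, ih1, ih2]
    ring

theorem sqrt_part_expansion (n : ℕ) (hn : 5 ≤ n) (a b : ℝ) :
    ∑ l ∈ Finset.range ((n - 3) / 2 + 1),
        ((n - 3).choose (2 * l + 1) : ℝ) * (-((n : ℝ) - 1) * a) ^ ((n : ℤ) - 2 * l - 4) *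
          (((n : ℝ) - 1) ^ 2 * a ^ 2 - 4 * (n : ℝ) * ((n : ℝ) - 2) * b) ^ l =
      ∑ k ∈ Finset.range ((n - 3) / 2 + 1),
        (-1 : ℝ) ^ (n + k) * 2 ^ (n - 4) * (n : ℝ) ^ k *
          ((n : ℝ) - 1) ^ ((n : ℤ) - 2 * k - 4) * ((n : ℝ) - 2) ^ k *
          ((n - k - 4).choose k : ℝ) * a ^ ((n : ℤ) - 2 * k - 4) * b ^ k := by
  set p : ℝ := -((n : ℝ) - 1) * a with hp
  set c : ℝ := (n : ℝ) * ((n : ℝ) - 2) * b with hc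
  set m : ℕ := n - 3 with hmdef
  have hm2 : 2 ≤ m := by omega
  have hsub : Finset.range (m / 2 + 1) ⊆ Finset.range (m + 1) :=
    Finset.range_subset_range.mpr (by omega)
  have hL : (∑ l ∈ Finset.range ((n - 3) / 2 + 1),
        ((n - 3).choose (2 * l + 1) : ℝ) * (-((n : ℝ) - 1) * a) ^ ((n : ℤ) - 2 * l - 4) *
          (((n : ℝ) - 1) ^ 2 * a ^ 2 - 4 * (n : ℝ) * ((n : ℝ) - 2) * b) ^ l)
      = Jf p (p^2 - 4*c) m := by
    unfold Jf
    rw [← Finset.sum_subset hsub (by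
      intro l _ hl
      simp only [Finset.mem_range] at hl
      rw [if_neg (by omega)])]
    apply Finset.sum_congr rfl
    intro l hl
    simp only [Finset.mem_range] at hl
    by_cases h1 : 2*l+1 ≤ m
    · rw [if_pos h1]
      have he : (n : ℤ) - 2 * l - 4 = ((m - 1 - 2*l : ℕ) : ℤ) := by omega
      rw [he, zpow_natCast]
      rw [show (((n : ℝ) - 1) ^ 2 * a ^ 2 - 4 * (n : ℝ) * ((n : ℝ) - 2) * b) = p^2 - 4*c from by
        rw [hp, hc]; ring]
    · rw [if_neg h1, Nat.choose_eq_zero_of_lt (show n - 3 < 2*l+1 by omega)]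
      simp
  have hR : (∑ k ∈ Finset.range ((n - 3) / 2 + 1),
        (-1 : ℝ) ^ (n + k) * 2 ^ (n - 4) * (n : ℝ) ^ k *
          ((n : ℝ) - 1) ^ ((n : ℤ) - 2 * k - 4) * ((n : ℝ) - 2) ^ k *
          ((n - k - 4).choose k : ℝ) * a ^ ((n : ℤ) - 2 * k - 4) * b ^ k)
      = 2^(m-1) * Bf p c m := by
    unfold Bf
    rw [Finset.mul_sum, ← Finset.sum_subset hsub (by
      intro k _ hk
      simp only [Finset.mem_range] at hk
      rw [if_neg (by omega), mul_zero])]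
    apply Finset.sum_congr rfl
    intro k hk
    simp only [Finset.mem_range] at hk
    by_cases h1 : 2*k+1 ≤ m
    · rw [if_pos h1]
      have he : (n : ℤ) - 2 * k - 4 = ((m - 1 - 2*k : ℕ) : ℤ) := by omega
      rw [he, zpow_natCast, zpow_natCast,
        show n - k - 4 = m - 1 - k from by omega,
        show (-1 : ℝ) ^ (n + k) = (-1) ^ k * (-1) ^ (m - 1 - 2*k) from by
          rw [← pow_add, show n + k = (k + (m - 1 - 2*k)) + 2*(k+2) from by omega, pow_add,
            pow_mul]
          norm_num,
        show (2 : ℝ) ^ (n - 4) = 2 ^ (m - 1) from by rw [show n - 4 = m - 1 from by omega],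
        hp, hc]
      rw [show (-((n : ℝ) - 1) * a) = (-1) * (((n : ℝ) - 1) * a) from by ring]
      simp only [mul_pow]
      ring
    · rw [if_neg h1, Nat.choose_eq_zero_of_lt (show n - k - 4 < k by omega)]
      simp
  rw [hL, hR, show m = (m-1)+1 from by omega, key, show (m-1)+1-1 = m - 1 from by omega]
end

section
/- Let n ≥ 5 be an integer and a, b real numbers. Set m₀ = ⌊(n−3)/2⌋, H = (n−1)²a² − 4n(n−2)b, F = (n−1)²a³ − 2n(2n−3)ab, G = (n−1)a² − 2nb, I = Σ_{ℓ=0}^{m₀} C(n−3, 2ℓ)·(−(n−1)a)^{n−2ℓ−3}·H^ℓ, J = Σ_{ℓ=0}^{m₀} C(n−3, 2ℓ+1)·(−(n−1)a)^{n−2ℓ−4}·H^ℓ, and for 0 ≤ k ≤ m₀ let S_k = (n−1)³·C(n−k−3,k)·a⁴ − [n(n−1)(5n² − (6k+23)n + 10k + 24)/(n−k−3)]·C(n−k−3,k)·a²b + 4n²(n−2)·C(n−k−4,k)·b². Then −F·I + G·H·J = Σ_{k=0}^{m₀} (−1)^{n+k}·2^{n−3}·n^k·(n−1)^{n−2k−4}·(n−2)^k·a^{n−2k−4}·b^k·S_k.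 -/
namespace FIGHJaux
open Finset



noncomputable def hcs (m : ℕ) (u v : ℂ) : ℂ := ∑ i ∈ Finset.range (m+1), u^i * v^(m-i)

lemma hcs_zero (u v : ℂ) : hcs 0 u v = 1 := by simp [hcs]

lemma hcs_succ_left (m : ℕ) (u v : ℂ) : hcs (m+1) u v = u * hcs m u v + v^(m+1) := by
  rw [hcs, hcs, Finset.sum_range_succ', Finset.mul_sum]
  simp only [pow_zero, one_mul, Nat.sub_zero, Nat.succ_sub_succ]
  congr 1
  refine Finset.sum_congr rfl fun i hi => ?_
  ring

lemma hcs_succ_right (m : ℕ) (u v : ℂ) : hcs (m+1) u v = v * hcs m u v + u^(m+1) := by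
  rw [hcs, hcs, Finset.sum_range_succ, Finset.mul_sum]
  simp only [Nat.sub_self, pow_zero, mul_one]
  congr 1
  refine Finset.sum_congr rfl fun i hi => ?_
  rw [Finset.mem_range] at hi
  have : m + 1 - i = (m - i) + 1 := by omega
  rw [this]
  ring

lemma hcs_rec (m : ℕ) (u v : ℂ) :
    hcs (m+2) u v = (u+v) * hcs (m+1) u v - u*v*hcs m u v := by
  have h1 := hcs_succ_left (m+1) u v
  have h2 := hcs_succ_left m u v
  have h3 := hcs_succ_right m u v
  -- v * hcs (m+1) = v*(u*hcs m + v^(m+1)) = uv hcs m + v^(m+2)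
  rw [h1, h2]
  ring

lemma pow_add_pow_hcs (m : ℕ) (u v : ℂ) :
    u^(m+2) + v^(m+2) = hcs (m+2) u v - u*v*hcs m u v := by
  rw [hcs_succ_left (m+1), hcs_succ_right m]
  ring

lemma hcs_smul (m : ℕ) (c u v : ℂ) : hcs m (c*u) (c*v) = c^m * hcs m u v := by
  rw [hcs, hcs, Finset.mul_sum]
  refine Finset.sum_congr rfl fun i hi => ?_
  rw [Finset.mem_range] at hi
  rw [mul_pow, mul_pow]
  have : c^i * c^(m-i) = c^m := by rw [← pow_add]; congr 1; omega
  calc c^i*u^i*(c^(m-i)*v^(m-i)) = (c^i*c^(m-i))*(u^i*v^(m-i)) := by ring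
  _ = c^m * (u^i*v^(m-i)) := by rw [this]

lemma hcs_mul_sub (m : ℕ) (u v : ℂ) : (u - v) * hcs m u v = u^(m+1) - v^(m+1) := by
  have h2 := hcs_succ_left m u v
  have h3 := hcs_succ_right m u v
  have : u * hcs m u v + v^(m+1) = v * hcs m u v + u^(m+1) := by rw [← h2, ← h3]
  linear_combination this

lemma sum_range_even_odd (f : ℕ → ℂ) (N : ℕ) :
    ∑ j ∈ Finset.range N, f j
      = ∑ l ∈ Finset.range ((N+1)/2), f (2*l) + ∑ l ∈ Finset.range (N/2), f (2*l+1) := by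
  induction N with
  | zero => simp
  | succ N ih =>
    rw [Finset.sum_range_succ, ih]
    rcases Nat.even_or_odd N with ⟨t, ht⟩ | ⟨t, ht⟩
    · have e1 : (N+1+1)/2 = t+1 := by omega
      have e2 : (N+1)/2 = t := by omega
      have e3 : N/2 = t := by omega
      rw [e1, e2, e3, Finset.sum_range_succ (fun l => f (2*l)) t]
      have : 2*t = N := by omega
      rw [this]; ring
    · have e1 : (N+1+1)/2 = t+1 := by omega
      have e2 : (N+1)/2 = t+1 := by omega
      have e3 : N/2 = t := by omega
      rw [e1, e2, e3, Finset.sum_range_succ (fun l => f (2*l+1)) t]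
      have : 2*t+1 = N := by omega
      rw [this]; ring

lemma even_sum (m : ℕ) (s w : ℂ) :
    (s+w)^m + (s-w)^m = 2 * ∑ l ∈ Finset.range (m/2+1),
      ((m.choose (2*l) : ℂ)) * s^(m-2*l) * (w^2)^l := by
  have h1 : (s+w)^m = ∑ j ∈ Finset.range (m+1), w^j * s^(m-j) * (m.choose j : ℂ) := by
    rw [add_comm s w, add_pow]
  have h2 : (s-w)^m = ∑ j ∈ Finset.range (m+1), (-w)^j * s^(m-j) * (m.choose j : ℂ) := by
    rw [sub_eq_add_neg, add_comm s (-w), add_pow]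
  rw [h1, h2, ← Finset.sum_add_distrib,
    sum_range_even_odd (fun j => w^j * s^(m-j) * (m.choose j : ℂ) + (-w)^j * s^(m-j) * (m.choose j : ℂ)) (m+1)]
  have e1 : (m+1+1)/2 = m/2+1 := by omega
  rw [e1, Finset.mul_sum]
  have hodd : ∑ l ∈ Finset.range ((m+1)/2),
      (w^(2*l+1) * s^(m-(2*l+1)) * (m.choose (2*l+1) : ℂ)
        + (-w)^(2*l+1) * s^(m-(2*l+1)) * (m.choose (2*l+1) : ℂ)) = 0 := by
    refine Finset.sum_eq_zero fun l _ => ?_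
    rw [Odd.neg_pow ⟨l, by ring⟩]
    ring
  rw [hodd, add_zero]
  refine Finset.sum_congr rfl fun l _ => ?_
  rw [Even.neg_pow (even_two_mul l), pow_mul]
  ring

lemma odd_sum (m : ℕ) (s w : ℂ) :
    (s+w)^(m+1) - (s-w)^(m+1) = 2 * w * ∑ l ∈ Finset.range ((m+1)/2+1),
      (((m+1).choose (2*l+1) : ℂ)) * s^(m-2*l) * (w^2)^l := by
  have h1 : (s+w)^(m+1) = ∑ j ∈ Finset.range (m+2), w^j * s^(m+1-j) * ((m+1).choose j : ℂ) := by
    rw [add_comm s w, add_pow]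
  have h2 : (s-w)^(m+1) = ∑ j ∈ Finset.range (m+2), (-w)^j * s^(m+1-j) * ((m+1).choose j : ℂ) := by
    rw [sub_eq_add_neg, add_comm s (-w), add_pow]
  rw [h1, h2, ← Finset.sum_sub_distrib,
    sum_range_even_odd (fun j => w^j * s^(m+1-j) * ((m+1).choose j : ℂ)
      - (-w)^j * s^(m+1-j) * ((m+1).choose j : ℂ)) (m+2)]
  have heven : ∑ l ∈ Finset.range ((m+2+1)/2),
      (w^(2*l) * s^(m+1-(2*l)) * ((m+1).choose (2*l) : ℂ)
        - (-w)^(2*l) * s^(m+1-(2*l)) * ((m+1).choose (2*l) : ℂ)) = 0 := by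
    refine Finset.sum_eq_zero fun l _ => ?_
    rw [Even.neg_pow (even_two_mul l)]
    ring
  rw [heven, zero_add]
  have e1 : (m+2)/2 = (m+1)/2 + 1 ∨ (m+2)/2 + 1 = (m+1)/2 + 1 := by omega
  have key : ∀ R : ℕ, ((m+2)/2 ≤ R) →
      ∑ l ∈ Finset.range ((m+2)/2),
        (w^(2*l+1) * s^(m+1-(2*l+1)) * ((m+1).choose (2*l+1) : ℂ)
          - (-w)^(2*l+1) * s^(m+1-(2*l+1)) * ((m+1).choose (2*l+1) : ℂ))
      = 2 * w * ∑ l ∈ Finset.range R, (((m+1).choose (2*l+1) : ℂ)) * s^(m-2*l) * (w^2)^l := by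
    intro R hR
    rw [Finset.mul_sum]
    rw [← Finset.sum_subset (Finset.range_subset_range.mpr hR)]
    · refine Finset.sum_congr rfl fun l hl => ?_
      rw [Finset.mem_range] at hl
      rw [Odd.neg_pow ⟨l, by ring⟩]
      have : m+1-(2*l+1) = m - 2*l := by omega
      rw [this, pow_succ, pow_mul]
      ring
    · intro l hl hnl
      rw [Finset.mem_range] at hl hnl
      have : (m+1).choose (2*l+1) = 0 := by
        apply Nat.choose_eq_zero_of_lt; omega
      rw [this]
      push_cast
      ring
  exact key ((m+1)/2+1) (by omega)

lemma fib : ∀ (m : ℕ) (u v : ℂ),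
    ∑ k ∈ Finset.range (m/2+1),
      (-1:ℂ)^k * ((m-k).choose k : ℂ) * (u*v)^k * (u+v)^(m-2*k) = hcs m u v := by
  intro m
  induction m using Nat.strong_induction_on with
  | _ m ih =>
    match m with
    | 0 => intro u v; simp [hcs]
    | 1 => intro u v; simp [hcs, Finset.sum_range_succ]; ring
    | (M+2) =>
      intro u v
      have ih1 := ih (M+1) (by omega) u v
      have ih0 := ih M (by omega) u v
      rw [hcs_rec, ← ih1, ← ih0]
      rw [Finset.sum_range_succ']
      -- f 0 term
      have hf0 : (-1:ℂ)^0 * ((M+2-0).choose 0 : ℂ) * (u*v)^0 * (u+v)^(M+2-2*0)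
          = (u+v)^(M+2) := by norm_num
      -- split the shifted sum via Pascal
      have hsplit : ∀ k ∈ Finset.range ((M+2)/2),
          (-1:ℂ)^(k+1) * ((M+2-(k+1)).choose (k+1) : ℂ) * (u*v)^(k+1) * (u+v)^(M+2-2*(k+1))
          = ((-1:ℂ)^(k+1) * ((M-k).choose (k+1) : ℂ) * (u*v)^(k+1) * (u+v)^(M-2*k))
            + (-(u*v)) * ((-1:ℂ)^k * ((M-k).choose k : ℂ) * (u*v)^k * (u+v)^(M-2*k)) := by
        intro k hk
        rw [Finset.mem_range] at hk
        have h1 : M+2-(k+1) = (M-k)+1 := by omega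
        have h2 : M+2-2*(k+1) = M-2*k := by omega
        rw [h1, h2, Nat.choose_succ_succ]
        push_cast
        ring
      rw [Finset.sum_congr rfl hsplit, Finset.sum_add_distrib]
      have hrange : (M+2)/2 = M/2+1 := by omega
      -- second piece is -(uv) * fib M sum
      have hsecond : ∑ k ∈ Finset.range ((M+2)/2),
          (-(u*v)) * ((-1:ℂ)^k * ((M-k).choose k : ℂ) * (u*v)^k * (u+v)^(M-2*k))
          = -(u*v) * ∑ k ∈ Finset.range (M/2+1),
              (-1:ℂ)^k * ((M-k).choose k : ℂ) * (u*v)^k * (u+v)^(M-2*k) := by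
        rw [hrange, Finset.mul_sum]
      -- first piece + f0 = (u+v) * fib (M+1) sum
      have hfirst : (∑ k ∈ Finset.range ((M+2)/2),
          (-1:ℂ)^(k+1) * ((M-k).choose (k+1) : ℂ) * (u*v)^(k+1) * (u+v)^(M-2*k))
          + (u+v)^(M+2)
          = (u+v) * ∑ k ∈ Finset.range ((M+1)/2+1),
              (-1:ℂ)^k * ((M+1-k).choose k : ℂ) * (u*v)^k * (u+v)^(M+1-2*k) := by
        rw [Finset.mul_sum]
        have hterm : ∀ k ∈ Finset.range ((M+1)/2+1),
            (u+v) * ((-1:ℂ)^k * ((M+1-k).choose k : ℂ) * (u*v)^k * (u+v)^(M+1-2*k))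
            = (-1:ℂ)^k * ((M+1-k).choose k : ℂ) * (u*v)^k * (u+v)^(M+2-2*k) := by
          intro k hk
          rw [Finset.mem_range] at hk
          have : M+2-2*k = (M+1-2*k)+1 := by omega
          rw [this, pow_succ]
          ring
        rw [Finset.sum_congr rfl hterm, Finset.sum_range_succ']
        have h00 : (-1:ℂ)^0 * ((M+1-0).choose 0 : ℂ) * (u*v)^0 * (u+v)^(M+2-2*0)
            = (u+v)^(M+2) := by norm_num
        rw [h00]
        congr 1
        have hsub : ∑ k ∈ Finset.range ((M+2)/2),
            (-1:ℂ)^(k+1) * ((M-k).choose (k+1) : ℂ) * (u*v)^(k+1) * (u+v)^(M-2*k)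
            = ∑ k ∈ Finset.range ((M+1)/2),
              (-1:ℂ)^(k+1) * ((M-k).choose (k+1) : ℂ) * (u*v)^(k+1) * (u+v)^(M-2*k) := by
          rw [← Finset.sum_subset (Finset.range_subset_range.mpr (by omega : (M+1)/2 ≤ (M+2)/2))]
          intro k hk hnk
          rw [Finset.mem_range] at hk hnk
          have : (M-k).choose (k+1) = 0 := by
            apply Nat.choose_eq_zero_of_lt; omega
          rw [this]
          push_cast
          ring
        rw [hsub]
        refine Finset.sum_congr rfl fun k hk => ?_
        rw [Finset.mem_range] at hk
        have h1 : M+1-(k+1) = M-k := by omega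
        have h2 : M+2-2*(k+1) = M-2*k := by omega
        rw [h1, h2]
      rw [hf0, hsecond]
      linear_combination hfirst

lemma hcs_sw (m : ℕ) (s w : ℂ) :
    ∑ l ∈ Finset.range ((m+1)/2+1), (((m+1).choose (2*l+1) : ℂ)) * s^(m-2*l) * (w^2)^l
      = hcs m (s+w) (s-w) := by
  have hfun : (fun w : ℂ => ∑ l ∈ Finset.range ((m+1)/2+1),
      (((m+1).choose (2*l+1) : ℂ)) * s^(m-2*l) * (w^2)^l)
      = (fun w : ℂ => hcs m (s+w) (s-w)) := by
    apply Continuous.ext_on (dense_compl_singleton (0:ℂ))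
    · apply continuous_finset_sum
      intro l _
      exact continuous_const.mul ((continuous_pow 2).pow l)
    · unfold hcs
      apply continuous_finset_sum
      intro i _
      exact ((continuous_const.add continuous_id).pow i).mul
        ((continuous_const.sub continuous_id).pow (m-i))
    · intro w hw
      simp only [Set.mem_compl_iff, Set.mem_singleton_iff] at hw
      have h2w : (2:ℂ) * w ≠ 0 := by
        simp [hw]
      apply mul_left_cancel₀ h2w
      rw [← odd_sum]
      have huv : (s+w) - (s-w) = 2*w := by ring
      rw [← huv, hcs_mul_sub]
  exact congrFun hfun w

lemma fib_ext (m : ℕ) (u v : ℂ) (R : ℕ) (hR : m/2+1 ≤ R) :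
    ∑ k ∈ Finset.range R,
      (-1:ℂ)^k * ((m-k).choose k : ℂ) * (u*v)^k * (u+v)^(m-2*k) = hcs m u v := by
  rw [← fib m u v]
  symm
  apply Finset.sum_subset (Finset.range_subset_range.mpr hR)
  intro k hk hnk
  rw [Finset.mem_range] at hk hnk
  have : (m-k).choose k = 0 := by
    apply Nat.choose_eq_zero_of_lt; omega
  rw [this]
  push_cast
  ring

noncomputable def rho (n k : ℕ) : ℂ := if k = 0 then 0 else ((n-4-k).choose (k-1) : ℂ)

lemma rho_rel (n k : ℕ) (hn : 5 ≤ n) (hk : k ≤ (n-3)/2) :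
    ((n:ℂ) - k - 3) * rho n k = k * ((n-k-3).choose k : ℂ) := by
  cases k with
  | zero => simp [rho]
  | succ j =>
    rw [rho]
    simp only [Nat.succ_ne_zero, if_false, Nat.add_sub_cancel]
    have hj : 2*j + 2 ≤ n - 3 := by
      have := Nat.div_mul_le_self (n-3) 2
      omega
    have hnat : (n - 4 - j) * ((n-5-j).choose j) = ((n-4-j).choose (j+1)) * (j+1) := by
      have h1 : n - 4 - j = (n - 5 - j) + 1 := by omega
      rw [h1]
      exact Nat.add_one_mul_choose_eq (n-5-j) j
    have e1 : n - 4 - (j+1) = n - 5 - j := by omega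
    have e2 : n - (j+1) - 3 = n - 4 - j := by omega
    rw [e1, e2]
    have hcast : ((n:ℂ) - (j+1:ℕ) - 3) = ((n - 4 - j : ℕ) : ℂ) := by
      have h4 : (n - 4 - j : ℕ) = n - (4+j) := by omega
      rw [h4, Nat.cast_sub (by omega : 4+j ≤ n)]
      push_cast
      ring
    rw [hcast]
    have := congrArg (fun t : ℕ => (t : ℂ)) hnat
    push_cast at this
    push_cast
    linear_combination this

lemma term_eq (n k : ℕ) (hn : 5 ≤ n) (hk : k ≤ (n-3)/2) (a b : ℂ) (ha : a ≠ 0) :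
    (-((n:ℂ)-1)*a) * ((-1:ℂ)^(n+k) * 2^(n-3) * (n:ℂ)^k *
        ((n:ℂ)-1)^((n:ℤ)-2*k-4) * ((n:ℂ)-2)^k * a^((n:ℤ)-2*k-4) * b^k *
        (((n:ℂ)-1)^3 * ((n-k-3).choose k : ℂ) * a^4 -
          ((n:ℂ)*((n:ℂ)-1)*(5*(n:ℂ)^2 - (6*(k:ℂ)+23)*(n:ℂ) + 10*(k:ℂ)+24) /
            ((n:ℂ) - (k:ℂ) - 3)) * ((n-k-3).choose k : ℂ) * a^2*b +
          4*(n:ℂ)^2*((n:ℂ)-2) * ((n-k-4).choose k : ℂ) * b^2))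
    = 2^(n-3) *
      ( (((n:ℂ)-1)^3*a^4 - (n:ℂ)*((n:ℂ)-1)*(5*(n:ℂ)-8)*a^2*b) *
          ((-1:ℂ)^k * ((n-k-3).choose k : ℂ) * ((n:ℂ)*((n:ℂ)-2)*b)^k * (-((n:ℂ)-1)*a)^(n-3-2*k))
      + ((n:ℂ)*((n:ℂ)-1)*((n:ℂ)-2)*a^2*b) *
          ((-1:ℂ)^k * rho n k * ((n:ℂ)*((n:ℂ)-2)*b)^k * (-((n:ℂ)-1)*a)^(n-3-2*k))
      + (4*(n:ℂ)^2*((n:ℂ)-2)*b^2) *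
          ((-1:ℂ)^k * ((n-k-4).choose k : ℂ) * ((n:ℂ)*((n:ℂ)-2)*b)^k * (-((n:ℂ)-1)*a)^(n-3-2*k)) ) := by
  have hk2 : 2*k + 3 ≤ n := by omega
  have hne1 : ((n:ℂ)-1) ≠ 0 := sub_ne_zero.mpr (by exact_mod_cast (by omega : n ≠ 1))
  have hsne : (-((n:ℂ)-1)*a) ≠ 0 := mul_ne_zero (neg_ne_zero.mpr hne1) ha
  have hm1 : (-1:ℂ) ≠ 0 := neg_ne_zero.mpr one_ne_zero
  -- (-1)^e = (-1)^n
  have h_e : (-1:ℂ)^((n:ℤ)-2*k-4) = (-1:ℂ)^n := by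
    rw [show ((n:ℤ)-2*k-4) = (n:ℤ) - 2*((k:ℤ)+2) from by ring, zpow_sub₀ hm1, zpow_natCast,
      show (2*((k:ℤ)+2)) = ((2*(k+2):ℕ):ℤ) from by push_cast; ring, zpow_natCast,
      show ((-1:ℂ))^(2*(k+2)) = 1 from Even.neg_one_pow ⟨k+2, by ring⟩, div_one]
  -- product of the zpows
  have hprod : (-((n:ℂ)-1)*a) * (((n:ℂ)-1)^((n:ℤ)-2*k-4) * a^((n:ℤ)-2*k-4))
      = (-1:ℂ)^n * (-((n:ℂ)-1)*a)^(n-3-2*k) := by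
    rw [← mul_zpow,
      show ((n:ℂ)-1)*a = (-1) * (-((n:ℂ)-1)*a) from by ring,
      mul_zpow, h_e,
      show (-((n:ℂ)-1)*a) * ((-1:ℂ)^n * (-((n:ℂ)-1)*a)^((n:ℤ)-2*k-4))
        = (-1:ℂ)^n * ((-((n:ℂ)-1)*a)^(1:ℤ) * (-((n:ℂ)-1)*a)^((n:ℤ)-2*k-4)) from by
          rw [zpow_one]; ring,
      ← zpow_add₀ hsne,
      show (1:ℤ) + ((n:ℤ)-2*k-4) = ((n-3-2*k : ℕ):ℤ) from by
        rw [show (n-3-2*k:ℕ) = n - (3+2*k) from by omega,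
          Nat.cast_sub (by omega : 3+2*k ≤ n)]
        push_cast; ring ,
      zpow_natCast]
  -- middle coefficient
  have hd : ((n:ℂ) - (k:ℂ) - 3) ≠ 0 := by
    rw [show ((n:ℂ) - (k:ℂ) - 3) = ((n-k-3:ℕ):ℂ) from by
      rw [show (n-k-3:ℕ) = n - (k+3) from by omega, Nat.cast_sub (by omega : k+3 ≤ n)]
      push_cast; ring]
    exact Nat.cast_ne_zero.mpr (by omega)
  have h3 : ((n:ℂ)*((n:ℂ)-1)*(5*(n:ℂ)^2 - (6*(k:ℂ)+23)*(n:ℂ) + 10*(k:ℂ)+24) /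
        ((n:ℂ) - (k:ℂ) - 3)) * ((n-k-3).choose k : ℂ)
      = (n:ℂ)*((n:ℂ)-1)*(5*(n:ℂ)-8)*((n-k-3).choose k : ℂ)
        - (n:ℂ)*((n:ℂ)-1)*((n:ℂ)-2)*rho n k := by
    rw [div_mul_eq_mul_div, div_eq_iff hd]
    linear_combination ((n:ℂ)*((n:ℂ)-1)*((n:ℂ)-2)) * rho_rel n k hn hk
  have h4 : (-1:ℂ)^(n+k) * (-1:ℂ)^n = (-1:ℂ)^k := by
    rw [← pow_add, show n+k+n = 2*n+k from by ring, pow_add, pow_mul]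
    norm_num
  have h5 : (n:ℂ)^k*((n:ℂ)-2)^k*b^k = ((n:ℂ)*((n:ℂ)-2)*b)^k := by
    rw [mul_pow, mul_pow]
  have key : ∀ T : ℂ,
      (-((n:ℂ)-1)*a) * ((-1:ℂ)^(n+k) * 2^(n-3) * (n:ℂ)^k *
        ((n:ℂ)-1)^((n:ℤ)-2*k-4) * ((n:ℂ)-2)^k * a^((n:ℤ)-2*k-4) * b^k * T)
      = 2^(n-3) * ((-1:ℂ)^k * ((n:ℂ)*((n:ℂ)-2)*b)^k * (-((n:ℂ)-1)*a)^(n-3-2*k) * T) := by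
    intro T
    linear_combination
      ((2:ℂ)^(n-3) * T * (-1:ℂ)^(n+k) * (n:ℂ)^k * ((n:ℂ)-2)^k * b^k) * hprod
      + ((2:ℂ)^(n-3) * T * (-((n:ℂ)-1)*a)^(n-3-2*k) * (n:ℂ)^k * ((n:ℂ)-2)^k * b^k) * h4
      + ((2:ℂ)^(n-3) * T * (-((n:ℂ)-1)*a)^(n-3-2*k) * (-1:ℂ)^k) * h5
  rw [key, h3]
  ring

lemma main_complex (n : ℕ) (hn : 5 ≤ n) (a b : ℂ) (ha : a ≠ 0) :
    -(((n:ℂ)-1)^2*a^3 - 2*(n:ℂ)*(2*(n:ℂ)-3)*a*b) *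
      (∑ l ∈ Finset.range ((n-3)/2+1), ((n-3).choose (2*l) : ℂ) *
        (-((n:ℂ)-1)*a)^(n-2*l-3) * (((n:ℂ)-1)^2*a^2 - 4*(n:ℂ)*((n:ℂ)-2)*b)^l)
    + (((n:ℂ)-1)*a^2 - 2*(n:ℂ)*b) * (((n:ℂ)-1)^2*a^2 - 4*(n:ℂ)*((n:ℂ)-2)*b) *
      (∑ l ∈ Finset.range ((n-3)/2+1), ((n-3).choose (2*l+1) : ℂ) *
        (-((n:ℂ)-1)*a)^((n:ℤ)-2*l-4) * (((n:ℂ)-1)^2*a^2 - 4*(n:ℂ)*((n:ℂ)-2)*b)^l)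
    = ∑ k ∈ Finset.range ((n-3)/2+1),
        (-1:ℂ)^(n+k) * 2^(n-3) * (n:ℂ)^k *
          ((n:ℂ)-1)^((n:ℤ)-2*k-4) * ((n:ℂ)-2)^k *
          a^((n:ℤ)-2*k-4) * b^k *
          (((n:ℂ)-1)^3 * ((n-k-3).choose k : ℂ) * a^4 -
            ((n:ℂ)*((n:ℂ)-1)*(5*(n:ℂ)^2 - (6*(k:ℂ)+23)*(n:ℂ) + 10*(k:ℂ)+24) /
              ((n:ℂ) - (k:ℂ) - 3)) * ((n-k-3).choose k : ℂ) * a^2*b +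
            4*(n:ℂ)^2*((n:ℂ)-2) * ((n-k-4).choose k : ℂ) * b^2) := by
  have hne1 : ((n:ℂ)-1) ≠ 0 := sub_ne_zero.mpr (by exact_mod_cast (by omega : n ≠ 1))
  have hs : (-((n:ℂ)-1)*a) ≠ 0 := mul_ne_zero (neg_ne_zero.mpr hne1) ha
  obtain ⟨w, hw⟩ := IsAlgClosed.exists_pow_nat_eq
    (((n:ℂ)-1)^2*a^2 - 4*(n:ℂ)*((n:ℂ)-2)*b) (two_pos)
  set U : ℂ := (-((n:ℂ)-1)*a + w)/2 with hU
  set V : ℂ := (-((n:ℂ)-1)*a - w)/2 with hV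
  have hUVs : U + V = -((n:ℂ)-1)*a := by rw [hU, hV]; ring
  have hUV : U * V = (n:ℂ)*((n:ℂ)-2)*b := by
    rw [hU, hV]
    field_simp
    linear_combination -hw
  have h2U : -((n:ℂ)-1)*a + w = 2*U := by rw [hU]; ring
  have h2V : -((n:ℂ)-1)*a - w = 2*V := by rw [hV]; ring
  -- I sum
  have hI2 : 2 * (∑ l ∈ Finset.range ((n-3)/2+1), ((n-3).choose (2*l) : ℂ) *
        (-((n:ℂ)-1)*a)^(n-2*l-3) * (((n:ℂ)-1)^2*a^2 - 4*(n:ℂ)*((n:ℂ)-2)*b)^l)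
      = 2^(n-3) * (U^(n-3) + V^(n-3)) := by
    have hconv : ∑ l ∈ Finset.range ((n-3)/2+1), ((n-3).choose (2*l) : ℂ) *
          (-((n:ℂ)-1)*a)^(n-2*l-3) * (((n:ℂ)-1)^2*a^2 - 4*(n:ℂ)*((n:ℂ)-2)*b)^l
        = ∑ l ∈ Finset.range ((n-3)/2+1), ((n-3).choose (2*l) : ℂ) *
          (-((n:ℂ)-1)*a)^(n-3-2*l) * (w^2)^l := by
      refine Finset.sum_congr rfl fun l _ => ?_
      rw [show n-2*l-3 = n-3-2*l from by omega, hw]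
    rw [hconv, ← even_sum (n-3) (-((n:ℂ)-1)*a) w, h2U, h2V, mul_pow, mul_pow]
    ring
  -- J sum
  have hJ : (∑ l ∈ Finset.range ((n-3)/2+1), ((n-3).choose (2*l+1) : ℂ) *
        (-((n:ℂ)-1)*a)^((n:ℤ)-2*l-4) * (((n:ℂ)-1)^2*a^2 - 4*(n:ℂ)*((n:ℂ)-2)*b)^l)
      = 2^(n-4) * hcs (n-4) U V := by
    have hconv : ∑ l ∈ Finset.range ((n-3)/2+1), ((n-3).choose (2*l+1) : ℂ) *
          (-((n:ℂ)-1)*a)^((n:ℤ)-2*l-4) * (((n:ℂ)-1)^2*a^2 - 4*(n:ℂ)*((n:ℂ)-2)*b)^l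
        = ∑ l ∈ Finset.range ((n-3)/2+1), ((n-3).choose (2*l+1) : ℂ) *
          (-((n:ℂ)-1)*a)^(n-4-2*l) * (w^2)^l := by
      refine Finset.sum_congr rfl fun l hl => ?_
      rw [Finset.mem_range] at hl
      by_cases h2l : 2*l+1 ≤ n-3
      · rw [show ((n:ℤ)-2*l-4) = ((n-4-2*l : ℕ):ℤ) from by
          rw [show (n-4-2*l:ℕ) = n - (4+2*l) from by omega,
            Nat.cast_sub (by omega : 4+2*l ≤ n)]
          push_cast; ring, zpow_natCast, hw]
      · rw [show (n-3).choose (2*l+1) = 0 from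
          Nat.choose_eq_zero_of_lt (by omega)]
        norm_num
    rw [hconv]
    have hsw := hcs_sw (n-4) (-((n:ℂ)-1)*a) w
    rw [show n-4+1 = n-3 from by omega] at hsw
    rw [hsw, h2U, h2V, hcs_smul]
  -- RHS
  have hR : (-((n:ℂ)-1)*a) * (∑ k ∈ Finset.range ((n-3)/2+1),
        (-1:ℂ)^(n+k) * 2^(n-3) * (n:ℂ)^k *
          ((n:ℂ)-1)^((n:ℤ)-2*k-4) * ((n:ℂ)-2)^k *
          a^((n:ℤ)-2*k-4) * b^k *
          (((n:ℂ)-1)^3 * ((n-k-3).choose k : ℂ) * a^4 -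
            ((n:ℂ)*((n:ℂ)-1)*(5*(n:ℂ)^2 - (6*(k:ℂ)+23)*(n:ℂ) + 10*(k:ℂ)+24) /
              ((n:ℂ) - (k:ℂ) - 3)) * ((n-k-3).choose k : ℂ) * a^2*b +
            4*(n:ℂ)^2*((n:ℂ)-2) * ((n-k-4).choose k : ℂ) * b^2))
      = 2^(n-3) *
        ( (((n:ℂ)-1)^3*a^4 - (n:ℂ)*((n:ℂ)-1)*(5*(n:ℂ)-8)*a^2*b) * hcs (n-3) U V
        + ((n:ℂ)*((n:ℂ)-1)*((n:ℂ)-2)*a^2*b) * (-(U*V) * hcs (n-5) U V)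
        + (4*(n:ℂ)^2*((n:ℂ)-2)*b^2) * ((U+V) * hcs (n-4) U V) ) := by
    rw [Finset.mul_sum]
    have hterm : ∀ k ∈ Finset.range ((n-3)/2+1),
        (-((n:ℂ)-1)*a) * ((-1:ℂ)^(n+k) * 2^(n-3) * (n:ℂ)^k *
          ((n:ℂ)-1)^((n:ℤ)-2*k-4) * ((n:ℂ)-2)^k *
          a^((n:ℤ)-2*k-4) * b^k *
          (((n:ℂ)-1)^3 * ((n-k-3).choose k : ℂ) * a^4 -
            ((n:ℂ)*((n:ℂ)-1)*(5*(n:ℂ)^2 - (6*(k:ℂ)+23)*(n:ℂ) + 10*(k:ℂ)+24) /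
              ((n:ℂ) - (k:ℂ) - 3)) * ((n-k-3).choose k : ℂ) * a^2*b +
            4*(n:ℂ)^2*((n:ℂ)-2) * ((n-k-4).choose k : ℂ) * b^2))
        = 2^(n-3) *
          ( (((n:ℂ)-1)^3*a^4 - (n:ℂ)*((n:ℂ)-1)*(5*(n:ℂ)-8)*a^2*b) *
              ((-1:ℂ)^k * ((n-k-3).choose k : ℂ) * ((n:ℂ)*((n:ℂ)-2)*b)^k * (-((n:ℂ)-1)*a)^(n-3-2*k))
          + ((n:ℂ)*((n:ℂ)-1)*((n:ℂ)-2)*a^2*b) *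
              ((-1:ℂ)^k * rho n k * ((n:ℂ)*((n:ℂ)-2)*b)^k * (-((n:ℂ)-1)*a)^(n-3-2*k))
          + (4*(n:ℂ)^2*((n:ℂ)-2)*b^2) *
              ((-1:ℂ)^k * ((n-k-4).choose k : ℂ) * ((n:ℂ)*((n:ℂ)-2)*b)^k * (-((n:ℂ)-1)*a)^(n-3-2*k)) ) := by
      intro k hk
      rw [Finset.mem_range] at hk
      exact term_eq n k hn (by omega) a b ha
    rw [Finset.sum_congr rfl hterm]
    -- split sums
    rw [← Finset.mul_sum, Finset.sum_add_distrib, Finset.sum_add_distrib,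
      ← Finset.mul_sum, ← Finset.mul_sum, ← Finset.mul_sum]
    -- T1
    have hT1 : ∑ k ∈ Finset.range ((n-3)/2+1),
        (-1:ℂ)^k * ((n-k-3).choose k : ℂ) * ((n:ℂ)*((n:ℂ)-2)*b)^k * (-((n:ℂ)-1)*a)^(n-3-2*k)
        = hcs (n-3) U V := by
      rw [← fib (n-3) U V]
      refine Finset.sum_congr rfl fun k hk => ?_
      rw [Finset.mem_range] at hk
      rw [show n-k-3 = n-3-k from by omega, ← hUV, ← hUVs]
    -- T2
    have hT2 : ∑ k ∈ Finset.range ((n-3)/2+1),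
        (-1:ℂ)^k * rho n k * ((n:ℂ)*((n:ℂ)-2)*b)^k * (-((n:ℂ)-1)*a)^(n-3-2*k)
        = -(U*V) * hcs (n-5) U V := by
      rw [Finset.sum_range_succ']
      have h0 : (-1:ℂ)^0 * rho n 0 * ((n:ℂ)*((n:ℂ)-2)*b)^0 * (-((n:ℂ)-1)*a)^(n-3-2*0) = 0 := by
        simp [rho]
      rw [h0, add_zero]
      have hterm2 : ∀ k ∈ Finset.range ((n-3)/2),
          (-1:ℂ)^(k+1) * rho n (k+1) * ((n:ℂ)*((n:ℂ)-2)*b)^(k+1) * (-((n:ℂ)-1)*a)^(n-3-2*(k+1))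
          = -(U*V) * ((-1:ℂ)^k * ((n-5-k).choose k : ℂ) * (U*V)^k * (U+V)^(n-5-2*k)) := by
        intro k hk
        rw [Finset.mem_range] at hk
        have hrho : rho n (k+1) = ((n-5-k).choose k : ℂ) := by
          rw [rho]
          simp only [Nat.succ_ne_zero, if_false, Nat.add_sub_cancel]
          rw [show n-4-(k+1) = n-5-k from by omega]
        rw [hrho, show n-3-2*(k+1) = n-5-2*k from by omega, hUV, hUVs, pow_succ]
        ring
      rw [Finset.sum_congr rfl hterm2, ← Finset.mul_sum,
        fib_ext (n-5) U V ((n-3)/2) (by omega)]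
    -- T3
    have hT3 : ∑ k ∈ Finset.range ((n-3)/2+1),
        (-1:ℂ)^k * ((n-k-4).choose k : ℂ) * ((n:ℂ)*((n:ℂ)-2)*b)^k * (-((n:ℂ)-1)*a)^(n-3-2*k)
        = (U+V) * hcs (n-4) U V := by
      have hterm3 : ∀ k ∈ Finset.range ((n-3)/2+1),
          (-1:ℂ)^k * ((n-k-4).choose k : ℂ) * ((n:ℂ)*((n:ℂ)-2)*b)^k * (-((n:ℂ)-1)*a)^(n-3-2*k)
          = (U+V) * ((-1:ℂ)^k * ((n-4-k).choose k : ℂ) * (U*V)^k * (U+V)^(n-4-2*k)) := by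
        intro k hk
        rw [Finset.mem_range] at hk
        by_cases h2k : 2*k ≤ n-4
        · rw [show n-k-4 = n-4-k from by omega, hUV,
            show n-3-2*k = (n-4-2*k)+1 from by omega, ← hUVs, pow_succ]
          ring
        · rw [show (n-k-4).choose k = 0 from Nat.choose_eq_zero_of_lt (by omega),
            show (n-4-k).choose k = 0 from Nat.choose_eq_zero_of_lt (by omega)]
          norm_num
      rw [Finset.sum_congr rfl hterm3, ← Finset.mul_sum,
        fib_ext (n-4) U V ((n-3)/2+1) (by omega)]
    rw [hT1, hT2, hT3]
  -- final assembly
  have hrec : hcs (n-3) U V = (U+V) * hcs (n-4) U V - U*V*hcs (n-5) U V := by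
    have := hcs_rec (n-5) U V
    rw [show n-5+2 = n-3 from by omega, show n-5+1 = n-4 from by omega] at this
    exact this
  have hpow : U^(n-3) + V^(n-3) = hcs (n-3) U V - U*V*hcs (n-5) U V := by
    have := pow_add_pow_hcs (n-5) U V
    rw [show n-5+2 = n-3 from by omega] at this
    exact this
  have hI' : (∑ l ∈ Finset.range ((n-3)/2+1), ((n-3).choose (2*l) : ℂ) *
        (-((n:ℂ)-1)*a)^(n-2*l-3) * (((n:ℂ)-1)^2*a^2 - 4*(n:ℂ)*((n:ℂ)-2)*b)^l)
      = 2^(n-4) * (hcs (n-3) U V - U*V*hcs (n-5) U V) := by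
    apply mul_left_cancel₀ (two_ne_zero (α := ℂ))
    rw [hI2, hpow, show n-3 = (n-4)+1 from by omega, pow_succ]
    ring
  apply mul_left_cancel₀ hs
  rw [hI', hJ, hR, hrec, hUV, hUVs,
    show (2:ℂ)^(n-3) = 2*2^(n-4) from by
      rw [show n-3 = (n-4)+1 from by omega, pow_succ]; ring]
  ring

end FIGHJaux

open FIGHJaux in
theorem FI_GHJ_identity (n : ℕ) (hn : 5 ≤ n) (a b : ℝ)
    (H F G I J : ℝ)
    (hH : H = ((n : ℝ) - 1) ^ 2 * a ^ 2 - 4 * (n : ℝ) * ((n : ℝ) - 2) * b)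
    (hF : F = ((n : ℝ) - 1) ^ 2 * a ^ 3 - 2 * (n : ℝ) * (2 * (n : ℝ) - 3) * a * b)
    (hG : G = ((n : ℝ) - 1) * a ^ 2 - 2 * (n : ℝ) * b)
    (hI : I = ∑ l ∈ Finset.range ((n - 3) / 2 + 1),
        ((n - 3).choose (2 * l) : ℝ) * (-((n : ℝ) - 1) * a) ^ (n - 2 * l - 3) * H ^ l)
    (hJ : J = ∑ l ∈ Finset.range ((n - 3) / 2 + 1),
        ((n - 3).choose (2 * l + 1) : ℝ) * (-((n : ℝ) - 1) * a) ^ ((n : ℤ) - 2 * l - 4) * H ^ l) :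
    -F * I + G * H * J =
      ∑ k ∈ Finset.range ((n - 3) / 2 + 1),
        (-1 : ℝ) ^ (n + k) * 2 ^ (n - 3) * (n : ℝ) ^ k *
          ((n : ℝ) - 1) ^ ((n : ℤ) - 2 * k - 4) * ((n : ℝ) - 2) ^ k *
          a ^ ((n : ℤ) - 2 * k - 4) * b ^ k *
          (((n : ℝ) - 1) ^ 3 * ((n - k - 3).choose k : ℝ) * a ^ 4 -
            ((n : ℝ) * ((n : ℝ) - 1) *
                (5 * (n : ℝ) ^ 2 - (6 * (k : ℝ) + 23) * (n : ℝ) + 10 * (k : ℝ) + 24) /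
              ((n : ℝ) - (k : ℝ) - 3)) * ((n - k - 3).choose k : ℝ) * a ^ 2 * b +
            4 * (n : ℝ) ^ 2 * ((n : ℝ) - 2) * ((n - k - 4).choose k : ℝ) * b ^ 2) := by
  subst hH hF hG hI hJ
  by_cases ha : a = 0
  · subst ha
    have hbase : -((n : ℝ) - 1) * 0 = 0 := by ring
    rcases Nat.even_or_odd n with ⟨t, ht⟩ | ⟨t, ht⟩
    · -- n even, n = t + t
      set k₀ := (n-4)/2 with hk₀
      have hrange : (n-3)/2 = k₀ := by omega
      -- J collapses
      have hJ : (∑ l ∈ Finset.range ((n - 3) / 2 + 1),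
          ((n - 3).choose (2 * l + 1) : ℝ) * (-((n : ℝ) - 1) * 0) ^ ((n : ℤ) - 2 * l - 4) *
            (((n : ℝ) - 1) ^ 2 * (0:ℝ) ^ 2 - 4 * (n : ℝ) * ((n : ℝ) - 2) * b) ^ l)
          = (((n : ℝ) - 1) ^ 2 * (0:ℝ) ^ 2 - 4 * (n : ℝ) * ((n : ℝ) - 2) * b) ^ k₀ := by
        rw [Finset.sum_eq_single_of_mem k₀ (by rw [Finset.mem_range]; omega)]
        · rw [hbase, show ((n:ℤ) - 2*k₀ - 4) = 0 from by omega, zpow_zero,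
            show (n-3).choose (2*k₀+1) = 1 from by
              rw [show 2*k₀+1 = n-3 from by omega]; exact Nat.choose_self _]
          norm_num
        · intro l hl hne
          rw [Finset.mem_range] at hl
          rw [hbase, zero_zpow _ (by omega : ((n:ℤ) - 2*l - 4) ≠ 0)]
          ring
      have hRHS : (∑ k ∈ Finset.range ((n - 3) / 2 + 1),
          (-1 : ℝ) ^ (n + k) * 2 ^ (n - 3) * (n : ℝ) ^ k *
            ((n : ℝ) - 1) ^ ((n : ℤ) - 2 * k - 4) * ((n : ℝ) - 2) ^ k *
            (0:ℝ) ^ ((n : ℤ) - 2 * k - 4) * b ^ k *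
            (((n : ℝ) - 1) ^ 3 * ((n - k - 3).choose k : ℝ) * (0:ℝ) ^ 4 -
              ((n : ℝ) * ((n : ℝ) - 1) *
                  (5 * (n : ℝ) ^ 2 - (6 * (k : ℝ) + 23) * (n : ℝ) + 10 * (k : ℝ) + 24) /
                ((n : ℝ) - (k : ℝ) - 3)) * ((n - k - 3).choose k : ℝ) * (0:ℝ) ^ 2 * b +
              4 * (n : ℝ) ^ 2 * ((n : ℝ) - 2) * ((n - k - 4).choose k : ℝ) * b ^ 2))
          = (-1 : ℝ) ^ (n + k₀) * 2 ^ (n - 3) * (n : ℝ) ^ k₀ * ((n : ℝ) - 2) ^ k₀ * b ^ k₀ *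
              (4 * (n : ℝ) ^ 2 * ((n : ℝ) - 2) * b ^ 2) := by
        rw [Finset.sum_eq_single_of_mem k₀ (by rw [Finset.mem_range]; omega)]
        · rw [show ((n:ℤ) - 2*k₀ - 4) = 0 from by omega, zpow_zero,
            show (n - k₀ - 4).choose k₀ = 1 from by
              rw [show n - k₀ - 4 = k₀ from by omega]; exact Nat.choose_self _]
          ring
        · intro l hl hne
          rw [Finset.mem_range] at hl
          rw [zero_zpow _ (by omega : ((n:ℤ) - 2*l - 4) ≠ 0)]
          ring
      rw [hJ, hRHS]
      have hsign : (-1:ℝ)^(n+k₀) = (-1:ℝ)^k₀ := by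
        rw [pow_add, Even.neg_one_pow ⟨t, ht⟩, one_mul]
      have hpow2 : (2:ℝ)^(n-3) = 2 * 4^k₀ := by
        rw [show n-3 = 2*k₀+1 from by omega, pow_succ, pow_mul]
        norm_num
        ring
      rw [hsign, hpow2]
      have hX : (((n : ℝ) - 1) ^ 2 * (0:ℝ) ^ 2 - 4 * (n : ℝ) * ((n : ℝ) - 2) * b) ^ k₀
          = (-1:ℝ)^k₀ * 4^k₀ * (n:ℝ)^k₀ * ((n:ℝ)-2)^k₀ * b^k₀ := by
        rw [show (((n : ℝ) - 1) ^ 2 * (0:ℝ) ^ 2 - 4 * (n : ℝ) * ((n : ℝ) - 2) * b)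
            = (-1) * (4 * ((n:ℝ) * (((n:ℝ)-2) * b))) from by ring,
          mul_pow, mul_pow, mul_pow, mul_pow]
        ring
      rw [hX]
      ring
    · -- n odd
      have hJ : (∑ l ∈ Finset.range ((n - 3) / 2 + 1),
          ((n - 3).choose (2 * l + 1) : ℝ) * (-((n : ℝ) - 1) * 0) ^ ((n : ℤ) - 2 * l - 4) *
            (((n : ℝ) - 1) ^ 2 * (0:ℝ) ^ 2 - 4 * (n : ℝ) * ((n : ℝ) - 2) * b) ^ l) = 0 := by
        refine Finset.sum_eq_zero fun l hl => ?_
        rw [hbase, zero_zpow _ (by omega : ((n:ℤ) - 2*l - 4) ≠ 0)]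
        ring
      have hRHS : (∑ k ∈ Finset.range ((n - 3) / 2 + 1),
          (-1 : ℝ) ^ (n + k) * 2 ^ (n - 3) * (n : ℝ) ^ k *
            ((n : ℝ) - 1) ^ ((n : ℤ) - 2 * k - 4) * ((n : ℝ) - 2) ^ k *
            (0:ℝ) ^ ((n : ℤ) - 2 * k - 4) * b ^ k *
            (((n : ℝ) - 1) ^ 3 * ((n - k - 3).choose k : ℝ) * (0:ℝ) ^ 4 -
              ((n : ℝ) * ((n : ℝ) - 1) *
                  (5 * (n : ℝ) ^ 2 - (6 * (k : ℝ) + 23) * (n : ℝ) + 10 * (k : ℝ) + 24) /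
                ((n : ℝ) - (k : ℝ) - 3)) * ((n - k - 3).choose k : ℝ) * (0:ℝ) ^ 2 * b +
              4 * (n : ℝ) ^ 2 * ((n : ℝ) - 2) * ((n - k - 4).choose k : ℝ) * b ^ 2)) = 0 := by
        refine Finset.sum_eq_zero fun k hk => ?_
        rw [zero_zpow _ (by omega : ((n:ℤ) - 2*k - 4) ≠ 0)]
        ring
      rw [hJ, hRHS]
      ring
  · have haC : (a:ℂ) ≠ 0 := by exact_mod_cast ha
    have key := main_complex n hn a b haC
    rw [← Complex.ofReal_inj]
    push_cast
    convert key using 2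
end
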